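/- arXiv:2211.10886 — 8 statements merged into one kernel-verified Lean document; each statement's English description precedes it below -/
import Mathlib

section
/- Let Q be a real trigonometric polynomial of degree n that has a zero of order k at t = 0, and suppose |Q| attains its maximum over [0, 2π] at a point t₀ ∈ [0, 2π]. Then t₀ ≥ (k!/n^k)^(1/k). -/
open Real Finset

namespace TrigBern





noncomputable def X (n l : ℕ) : ℝ := (2*(l:ℝ) - 1) * π / (2*(n:ℝ))

variable {n : ℕ}

lemma X_pos (hn : 0 < n) {l : ℕ} (hl : l ∈ Finset.Icc 1 (2*n)) : 0 < X n l := by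
  simp only [Finset.mem_Icc] at hl
  have h1 : (1:ℝ) ≤ (l:ℝ) := by exact_mod_cast hl.1
  have hn' : (0:ℝ) < (n:ℝ) := by exact_mod_cast hn
  apply div_pos (by nlinarith [pi_pos]) (by positivity)

lemma X_lt (hn : 0 < n) {l : ℕ} (hl : l ∈ Finset.Icc 1 (2*n)) : X n l < 2*π := by
  simp only [Finset.mem_Icc] at hl
  have h2 : (l:ℝ) ≤ 2*(n:ℝ) := by exact_mod_cast hl.2
  have hn' : (0:ℝ) < (n:ℝ) := by exact_mod_cast hn
  rw [X, div_lt_iff₀ (by positivity)]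
  nlinarith [pi_pos]

lemma sin_half_pos (hn : 0 < n) {l : ℕ} (hl : l ∈ Finset.Icc 1 (2*n)) :
    0 < Real.sin (X n l / 2) := by
  apply Real.sin_pos_of_pos_of_lt_pi
  · linarith [X_pos hn hl]
  · linarith [X_lt hn hl]

lemma X_reflect (hn : 0 < n) {l : ℕ} (hl : l ∈ Finset.Icc 1 (2*n)) :
    X n (2*n+1-l) = 2*π - X n l := by
  simp only [Finset.mem_Icc] at hl
  have h : ((2*n+1-l : ℕ) : ℝ) = 2*(n:ℝ) + 1 - (l:ℝ) := by
    have : l ≤ 2*n+1 := by omega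
    push_cast [Nat.cast_sub this]
    ring
  have hn' : (0:ℝ) < (n:ℝ) := by exact_mod_cast hn
  rw [X, X, h]
  field_simp
  ring



lemma pair_sum_zero {n : ℕ} (F : ℕ → ℝ)
    (hF : ∀ l ∈ Finset.Icc 1 (2*n), F l + F (2*n+1-l) = 0) :
    ∑ l ∈ Finset.Icc 1 (2*n), F l = 0 := by
  apply Finset.sum_involution (fun a _ => 2*n+1-a)
  · intro a ha; exact hF a ha
  · intro a ha _; simp only [Finset.mem_Icc] at ha; omega
  · intro a ha; simp only [Finset.mem_Icc] at ha ⊢; omega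
  · intro a ha; simp only [Finset.mem_Icc] at ha; omega


lemma sign_reflect {n l : ℕ} (hl : l ≤ 2*n) :
    (-1:ℝ)^(2*n+1-l+1) = -(-1:ℝ)^(l+1) := by
  rcases Nat.even_or_odd l with he | ho
  · have h1 : Odd (l+1) := he.add_one
    have h2 : Even (2*n+1-l+1) := by
      obtain ⟨r, rfl⟩ := he; exact ⟨n-r+1, by omega⟩
    rw [h1.neg_one_pow, h2.neg_one_pow]; norm_num
  · have h1 : Even (l+1) := ho.add_one
    have h2 : Odd (2*n+1-l+1) := by
      obtain ⟨r, rfl⟩ := ho; exact ⟨n-r, by omega⟩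
    rw [h1.neg_one_pow, h2.neg_one_pow]

lemma Z_zero {n : ℕ} (hn : 0 < n) (j : ℕ) :
    ∑ l ∈ Finset.Icc 1 (2*n),
      (-1:ℝ)^(l+1) / Real.sin (X n l / 2)^2 * Real.cos (j * X n l) = 0 := by
  apply pair_sum_zero; intro l hl
  have hlm := hl
  simp only [Finset.mem_Icc] at hlm
  rw [X_reflect hn hl, sign_reflect hlm.2]
  have h1 : (2*π - X n l)/2 = π - X n l/2 := by ring
  have h2 : (j:ℝ) * (2*π - X n l) = j*(2*π) - j * X n l := by ring
  rw [h1, Real.sin_pi_sub, h2, Real.cos_nat_mul_two_pi_sub]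
  ring

lemma cot_sum_zero {n : ℕ} (hn : 0 < n) :
    ∑ l ∈ Finset.Icc 1 (2*n),
      Real.cos (X n l / 2) / Real.sin (X n l / 2) = 0 := by
  apply pair_sum_zero; intro l hl
  rw [X_reflect hn hl]
  have h1 : (2*π - X n l)/2 = π - X n l/2 := by ring
  rw [h1, Real.sin_pi_sub, Real.cos_pi_sub]
  ring





noncomputable def z (n l : ℕ) : ℂ := Complex.exp (X n l * Complex.I)

lemma z_pow (n l a : ℕ) : (z n l)^a = Complex.exp ((a * X n l : ℝ) * Complex.I) := by
  rw [z, ← Complex.exp_nat_mul]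
  push_cast
  ring_nf

lemma exp_ne_one {x : ℝ} (h0 : 0 < x) (h2 : x < 2*π) :
    Complex.exp (x * Complex.I) ≠ 1 := by
  intro h
  rw [Complex.exp_eq_one_iff] at h
  obtain ⟨m, hm⟩ := h
  have hx : x = m * (2*π) := by
    have := congrArg Complex.im hm
    simpa using this
  have hpi := Real.pi_pos
  rcases le_or_gt m 0 with hm0 | hm0
  · have : (m:ℝ) ≤ 0 := by exact_mod_cast hm0
    nlinarith
  · have : (1:ℝ) ≤ (m:ℝ) := by exact_mod_cast hm0
    nlinarith




lemma sum_z_pow {n a : ℕ} (hn : 0 < n) (ha1 : 1 ≤ a) (ha2 : a ≤ 2*n - 1) :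
    ∑ l ∈ Finset.Icc 1 (2*n), (z n l)^a = 0 := by
  have hn' : (0:ℝ) < (n:ℝ) := by exact_mod_cast hn
  have ha1' : (1:ℝ) ≤ (a:ℝ) := by exact_mod_cast ha1
  have ha2' : (a:ℝ) ≤ 2*(n:ℝ) - 1 := by
    have : (a:ℝ) ≤ ((2*n-1 : ℕ):ℝ) := by exact_mod_cast ha2
    have h1 : ((2*n-1 : ℕ):ℝ) = 2*(n:ℝ)-1 := by
      have : 1 ≤ 2*n := by omega
      push_cast [Nat.cast_sub this]; ring
    linarith [h1 ▸ this]
  have hpi := Real.pi_pos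
  set w : ℂ := Complex.exp ((a*π/n : ℝ) * Complex.I) with hw
  have hw1 : w ≠ 1 := by
    apply exp_ne_one
    · positivity
    · rw [div_lt_iff₀ hn']; nlinarith
  have hwn : w^(2*n) = 1 := by
    rw [hw, ← Complex.exp_nat_mul]
    have h2 : ((2*n : ℕ):ℂ) * (((a*π/n : ℝ):ℂ) * Complex.I) = a * (2*π*Complex.I) := by
      have hnC : ((n:ℕ):ℂ) ≠ 0 := by exact_mod_cast hn.ne'
      push_cast
      field_simp
    rw [h2, Complex.exp_nat_mul, Complex.exp_two_pi_mul_I, one_pow]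
  have hterm : ∀ i : ℕ, (z n (1+i))^a
      = Complex.exp ((a*π/(2*n) : ℝ) * Complex.I) * w^i := by
    intro i
    rw [z_pow, hw, ← Complex.exp_nat_mul, ← Complex.exp_add]
    congr 1
    have : (X n (1+i)) = (2*(i:ℝ)+1) * π / (2*n) := by
      rw [X]; push_cast; ring
    rw [this]
    push_cast
    field_simp
    ring
  have : Finset.Icc 1 (2*n) = Finset.Ico 1 (2*n+1) := by
    rw [Finset.Ico_add_one_right_eq_Icc]
  rw [this, Finset.sum_Ico_eq_sum_range]
  simp only [Nat.add_sub_cancel]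
  calc ∑ i ∈ Finset.range (2*n), (z n (1+i))^a
      = ∑ i ∈ Finset.range (2*n), Complex.exp ((a*π/(2*n) : ℝ) * Complex.I) * w^i := by
        exact Finset.sum_congr rfl (fun i _ => hterm i)
    _ = Complex.exp ((a*π/(2*n) : ℝ) * Complex.I) * ((w^(2*n) - 1)/(w - 1)) := by
        rw [← Finset.mul_sum, geom_sum_eq hw1]
    _ = 0 := by rw [hwn]; simp



lemma z_eq (n l : ℕ) : z n l =
    Complex.cos ((X n l / 2 : ℝ) : ℂ) ^ 2 - Complex.sin ((X n l / 2 : ℝ) : ℂ) ^ 2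
    + 2 * Complex.sin ((X n l / 2 : ℝ) : ℂ) * Complex.cos ((X n l / 2 : ℝ) : ℂ) * Complex.I := by
  rw [z, Complex.exp_mul_I]
  have h : ((X n l : ℝ) : ℂ) = 2 * ((X n l / 2 : ℝ) : ℂ) := by push_cast; ring
  rw [h, Complex.cos_two_mul', Complex.sin_two_mul]

lemma z_sub_one (n l : ℕ) : z n l - 1 =
    2 * Complex.sin ((X n l / 2 : ℝ) : ℂ) *
      (Complex.cos ((X n l / 2 : ℝ) : ℂ) + Complex.sin ((X n l / 2 : ℝ) : ℂ) * Complex.I)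
      * Complex.I := by
  rw [z_eq]
  linear_combination (-2*(Complex.sin ((X n l / 2 : ℝ) : ℂ))^2) * Complex.I_sq
    + Complex.sin_sq_add_cos_sq ((X n l / 2 : ℝ) : ℂ)

lemma z_add_one (n l : ℕ) : z n l + 1 =
    2 * Complex.cos ((X n l / 2 : ℝ) : ℂ) *
      (Complex.cos ((X n l / 2 : ℝ) : ℂ) + Complex.sin ((X n l / 2 : ℝ) : ℂ) * Complex.I) := by
  rw [z_eq]
  linear_combination - Complex.sin_sq_add_cos_sq ((X n l / 2 : ℝ) : ℂ)

lemma sin_ne {n l : ℕ} (hn : 0 < n) (hl : l ∈ Finset.Icc 1 (2*n)) :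
    Complex.sin ((X n l / 2 : ℝ) : ℂ) ≠ 0 := by
  rw [← Complex.ofReal_sin]
  exact_mod_cast (sin_half_pos hn hl).ne'

lemma cs_ne {n l : ℕ} (hn : 0 < n) (hl : l ∈ Finset.Icc 1 (2*n)) :
    Complex.cos ((X n l / 2 : ℝ) : ℂ) + Complex.sin ((X n l / 2 : ℝ) : ℂ) * Complex.I ≠ 0 := by
  intro h
  have him := congrArg Complex.im h
  rw [Complex.add_im, Complex.mul_im, Complex.I_im, Complex.I_re, Complex.zero_im,
    Complex.cos_ofReal_im, Complex.sin_ofReal_re] at him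
  have := sin_half_pos hn hl
  simp at him
  linarith

lemma z_sub_one_ne {n l : ℕ} (hn : 0 < n) (hl : l ∈ Finset.Icc 1 (2*n)) :
    z n l - 1 ≠ 0 := by
  rw [z_sub_one]
  exact mul_ne_zero (mul_ne_zero (mul_ne_zero two_ne_zero (sin_ne hn hl)) (cs_ne hn hl))
    Complex.I_ne_zero

lemma z_inv_eq {n l : ℕ} (hn : 0 < n) (hl : l ∈ Finset.Icc 1 (2*n)) :
    (z n l - 1)⁻¹ = -(1/2 : ℂ)
      - (Complex.I/2) * ((Real.cos (X n l / 2) / Real.sin (X n l / 2) : ℝ) : ℂ) := by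
  have hs := sin_ne hn hl
  apply inv_eq_of_mul_eq_one_right
  rw [z_sub_one]
  push_cast
  set s := Complex.sin (((X n l : ℂ)) / 2) with hsdef
  set c := Complex.cos (((X n l : ℂ)) / 2) with hcdef
  have hs' : s ≠ 0 := by
    rw [hsdef]; convert hs using 3; push_cast; ring
  have hpy : s^2 + c^2 = 1 := by
    rw [hsdef, hcdef]; exact Complex.sin_sq_add_cos_sq _
  field_simp
  linear_combination (-s*c*Complex.I - c^2 - s^2) * Complex.I_sq + hpy



lemma z_pow_n {n l : ℕ} (hn : 0 < n) (hl : 1 ≤ l) :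
    (z n l)^n = Complex.I * (-1:ℂ)^(l+1) := by
  have hn' : (0:ℝ) < (n:ℝ) := by exact_mod_cast hn
  have h1 : ((n:ℝ) * X n l) = ((2*l-1 : ℕ):ℝ) * (π/2) := by
    have : ((2*l-1 : ℕ):ℝ) = 2*(l:ℝ) - 1 := by
      have : 1 ≤ 2*l := by omega
      push_cast [Nat.cast_sub this]; ring
    rw [X, this]
    field_simp
  have hI : Complex.exp (((π/2 : ℝ):ℂ) * Complex.I) = Complex.I := by
    rw [Complex.exp_mul_I, ← Complex.ofReal_cos, ← Complex.ofReal_sin,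
      Real.cos_pi_div_two, Real.sin_pi_div_two]
    simp
  have h2 : (z n l)^n = Complex.I ^ (2*l-1) := by
    rw [z_pow, h1]
    rw [show ((((2*l-1:ℕ) * (π/2) : ℝ)):ℂ) * Complex.I
        = ((2*l-1:ℕ):ℂ) * (((π/2:ℝ):ℂ) * Complex.I) by push_cast; ring]
    rw [Complex.exp_nat_mul, hI]
  rw [h2]
  have h3 : 2*l-1 = 2*(l-1)+1 := by omega
  rw [h3, pow_succ, pow_mul, Complex.I_sq]
  have h4 : l+1 = (l-1)+2 := by omega
  rw [h4, pow_add]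
  ring

lemma cot_id {n l : ℕ} (hn : 0 < n) (hl : l ∈ Finset.Icc 1 (2*n)) :
    (z n l)^n * (z n l + 1) =
      ((-1:ℂ)^(l+1) * ((Real.cos (X n l / 2) / Real.sin (X n l / 2) : ℝ) : ℂ)) * (z n l - 1) := by
  have hl1 : 1 ≤ l := (Finset.mem_Icc.1 hl).1
  have hc : ((Real.cos (X n l / 2) / Real.sin (X n l / 2) : ℝ):ℂ)
      = Complex.cos ((X n l / 2:ℝ):ℂ) / Complex.sin ((X n l / 2:ℝ):ℂ) := by
    push_cast; ring
  rw [z_pow_n hn hl1, z_add_one, z_sub_one, hc]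
  have hs := sin_ne hn hl
  push_cast at hs ⊢
  field_simp




def P (n : ℕ) (Q : ℝ → ℝ) : Prop :=
  ∃ a b : ℕ → ℝ, ∀ t, Q t = a 0 + ∑ j ∈ Finset.Icc 1 n,
    (a j * Real.cos (j*t) + b j * Real.sin (j*t))



lemma inv_sum {n : ℕ} (hn : 0 < n) :
    ∑ l ∈ Finset.Icc 1 (2*n), (z n l - 1)⁻¹ = -(n:ℂ) := by
  have h : ∀ l ∈ Finset.Icc 1 (2*n), (z n l - 1)⁻¹ = -(1/2 : ℂ)
      - (Complex.I/2) * ((Real.cos (X n l / 2) / Real.sin (X n l / 2) : ℝ) : ℂ) :=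
    fun l hl => z_inv_eq hn hl
  rw [Finset.sum_congr rfl h, Finset.sum_sub_distrib, Finset.sum_const, Nat.card_Icc]
  rw [← Finset.mul_sum]
  have : ∑ l ∈ Finset.Icc 1 (2*n), ((Real.cos (X n l / 2) / Real.sin (X n l / 2) : ℝ) : ℂ)
      = ((0:ℝ):ℂ) := by
    rw [← Complex.ofReal_sum]
    exact_mod_cast congrArg (Complex.ofReal) (cot_sum_zero hn)
  rw [this]
  simp
  ring

lemma term_expand {n l m : ℕ} (hn : 0 < n) (hl : l ∈ Finset.Icc 1 (2*n)) :
    ((-1:ℂ)^(l+1) * ((Real.cos (X n l / 2) / Real.sin (X n l / 2) : ℝ) : ℂ)) * (z n l)^m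
      = (z n l)^(n+m) + 2*(∑ r ∈ Finset.range (n+m), (z n l)^r) + 2*(z n l - 1)⁻¹ := by
  apply mul_right_cancel₀ (z_sub_one_ne hn hl)
  have h1 := cot_id hn hl
  have h2 := geom_sum_mul (z n l) (n+m)
  have h3 := inv_mul_cancel₀ (z_sub_one_ne hn hl)
  calc ((-1:ℂ)^(l+1) * ((Real.cos (X n l / 2) / Real.sin (X n l / 2) : ℝ) : ℂ)) * (z n l)^m
        * (z n l - 1)
      = (z n l)^m * ((z n l)^n * (z n l + 1)) := by linear_combination (-(z n l)^m) * h1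
    _ = ((z n l)^(n+m) + 2*(∑ r ∈ Finset.range (n+m), (z n l)^r) + 2*(z n l - 1)⁻¹)
        * (z n l - 1) := by
        rw [pow_add]
        linear_combination (-2) * h2 + (-2) * h3

lemma G_sum {n m : ℕ} (hn : 0 < n) (hm : m + 1 ≤ n) :
    ∑ l ∈ Finset.Icc 1 (2*n),
      ((-1:ℂ)^(l+1) * ((Real.cos (X n l / 2) / Real.sin (X n l / 2) : ℝ) : ℂ)) * (z n l)^m
      = 2*(n:ℂ) := by
  rw [Finset.sum_congr rfl (fun l hl => term_expand hn hl)]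
  rw [Finset.sum_add_distrib, Finset.sum_add_distrib, ← Finset.mul_sum, ← Finset.mul_sum]
  have e1 : ∑ l ∈ Finset.Icc 1 (2*n), (z n l)^(n+m) = 0 :=
    sum_z_pow hn (by omega) (by omega)
  have e2 : ∑ l ∈ Finset.Icc 1 (2*n), ∑ r ∈ Finset.range (n+m), (z n l)^r = 2*(n:ℂ) := by
    rw [Finset.sum_comm]
    rw [Finset.sum_eq_single_of_mem 0 (Finset.mem_range.2 (by omega))]
    · simp [Nat.card_Icc]
    · intro r hr hr0
      exact sum_z_pow hn (by omega) (by simp at hr; omega)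
  rw [e1, e2, inv_sum hn]
  ring



lemma C_sum {n m : ℕ} (hn : 0 < n) (hm : m + 1 ≤ n) :
    ∑ l ∈ Finset.Icc 1 (2*n),
      (-1:ℝ)^(l+1) * (Real.cos (X n l / 2) / Real.sin (X n l / 2)) * Real.cos (m * X n l)
      = 2*(n:ℝ) := by
  have hterm : ∀ l ∈ Finset.Icc 1 (2*n),
      ((-1:ℂ)^(l+1) * ((Real.cos (X n l / 2) / Real.sin (X n l / 2) : ℝ) : ℂ)) * (z n l)^m
      = (((-1:ℝ)^(l+1) * (Real.cos (X n l / 2) / Real.sin (X n l / 2))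
            * Real.cos (m * X n l) : ℝ) : ℂ)
        + (((-1:ℝ)^(l+1) * (Real.cos (X n l / 2) / Real.sin (X n l / 2))
            * Real.sin (m * X n l) : ℝ) : ℂ) * Complex.I := by
    intro l _
    rw [z_pow, Complex.exp_mul_I, ← Complex.ofReal_cos, ← Complex.ofReal_sin]
    push_cast
    ring
  have h := G_sum hn hm
  rw [Finset.sum_congr rfl hterm, Finset.sum_add_distrib, ← Finset.sum_mul,
    ← Complex.ofReal_sum, ← Complex.ofReal_sum] at h
  have hre := congrArg Complex.re h
  simp only [Complex.add_re, Complex.mul_re, Complex.ofReal_re, Complex.ofReal_im,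
    Complex.I_re, Complex.I_im, Complex.natCast_re, Complex.natCast_im, Complex.re_ofNat,
    Complex.im_ofNat, mul_zero, mul_one, zero_mul, sub_zero, add_zero, zero_sub, neg_zero] at hre
  exact hre

lemma S_val {n : ℕ} (hn : 0 < n) : ∀ j, j ≤ n →
    ∑ l ∈ Finset.Icc 1 (2*n),
      (-1:ℝ)^(l+1) / Real.sin (X n l / 2)^2 * Real.sin (j * X n l)
      = 4*(n:ℝ)*(j:ℝ) := by
  intro j
  induction j using Nat.strong_induction_on with
  | _ j ih =>
    match j with
    | 0 => intro _; simp
    | 1 =>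
      intro h1
      have key : ∀ l ∈ Finset.Icc 1 (2*n),
          (-1:ℝ)^(l+1) / Real.sin (X n l / 2)^2 * Real.sin ((1:ℕ) * X n l)
          = 2 * ((-1:ℝ)^(l+1) * (Real.cos (X n l / 2) / Real.sin (X n l / 2))
              * Real.cos ((0:ℕ) * X n l)) := by
        intro l hl
        have hs := (sin_half_pos hn hl).ne'
        rw [show ((1:ℕ):ℝ) * X n l = 2*(X n l / 2) by push_cast; ring, Real.sin_two_mul]
        simp only [Nat.cast_zero, zero_mul, Real.cos_zero, mul_one]
        field_simp
      rw [Finset.sum_congr rfl key, ← Finset.mul_sum, C_sum hn (by omega)]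
      push_cast
      ring
    | (j+2) =>
      intro hj2
      have key : ∀ l ∈ Finset.Icc 1 (2*n),
          (-1:ℝ)^(l+1) / Real.sin (X n l / 2)^2 * Real.sin ((j+2:ℕ) * X n l)
          = (-1:ℝ)^(l+1) / Real.sin (X n l / 2)^2 * Real.sin (j * X n l)
            + 4 * ((-1:ℝ)^(l+1) * (Real.cos (X n l / 2) / Real.sin (X n l / 2))
              * Real.cos ((j+1:ℕ) * X n l)) := by
        intro l hl
        have hs := (sin_half_pos hn hl).ne'
        have e1 : ((j+2:ℕ):ℝ) * X n l = ((j+1:ℕ):ℝ) * X n l + X n l := by push_cast; ring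
        have e2 : ((j:ℕ):ℝ) * X n l = ((j+1:ℕ):ℝ) * X n l - X n l := by push_cast; ring
        rw [e1, e2, Real.sin_add, Real.sin_sub,
          show X n l = 2*(X n l / 2) by ring, Real.sin_two_mul, Real.cos_two_mul]
        field_simp
        ring
      rw [Finset.sum_congr rfl key, Finset.sum_add_distrib, ih j (by omega) (by omega),
        ← Finset.mul_sum, C_sum hn (by omega)]
      push_cast
      ring

lemma sin_nX {n l : ℕ} (hn : 0 < n) (hl : l ∈ Finset.Icc 1 (2*n)) :
    Real.sin ((n:ℝ) * X n l) = (-1:ℝ)^(l+1) := by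
  have hl1 : 1 ≤ l := (Finset.mem_Icc.1 hl).1
  have hn' : (0:ℝ) < (n:ℝ) := by exact_mod_cast hn
  have h1 : (n:ℝ) * X n l = (l:ℝ)*π - π/2 := by
    rw [X]; field_simp
  rw [h1, Real.sin_sub]
  have hcos : Real.cos ((l:ℝ)*π) = (-1:ℝ)^l := by
    have := Real.cos_nat_mul_pi_sub 0 l
    simpa using this
  have hsin : Real.sin ((l:ℝ)*π) = 0 := Real.sin_nat_mul_pi l
  rw [hcos, hsin, Real.cos_pi_div_two, Real.sin_pi_div_two]
  ring

lemma E_sum {n : ℕ} (hn : 0 < n) :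
    ∑ l ∈ Finset.Icc 1 (2*n), 1 / Real.sin (X n l / 2)^2 = 4*(n:ℝ)*(n:ℝ) := by
  have h := S_val hn n le_rfl
  rw [Finset.sum_congr rfl (fun l hl => ?_)] at h
  · exact h
  · rw [sin_nX hn hl]
    have : ((-1:ℝ)^(l+1))^2 = 1 := by
      rcases Nat.even_or_odd (l+1) with he | ho
      · rw [he.neg_one_pow]; norm_num
      · rw [ho.neg_one_pow]; norm_num
    calc (-1:ℝ)^(l+1) / Real.sin (X n l / 2)^2 * (-1:ℝ)^(l+1)
        = ((-1:ℝ)^(l+1))^2 / Real.sin (X n l / 2)^2 := by ring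
      _ = 1 / Real.sin (X n l / 2)^2 := by rw [this]



lemma master {n : ℕ} (hn : 0 < n) (a b : ℕ → ℝ) :
    ∑ l ∈ Finset.Icc 1 (2*n), (-1:ℝ)^(l+1) / Real.sin (X n l / 2)^2 *
      (a 0 + ∑ j ∈ Finset.Icc 1 n, (a j * Real.cos (j * X n l) + b j * Real.sin (j * X n l)))
    = 4*(n:ℝ) * ∑ j ∈ Finset.Icc 1 n, (j:ℝ) * b j := by
  have hZ0 : ∑ l ∈ Finset.Icc 1 (2*n), (-1:ℝ)^(l+1) / Real.sin (X n l / 2)^2 = 0 := by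
    have := Z_zero hn 0
    simpa using this
  calc ∑ l ∈ Finset.Icc 1 (2*n), (-1:ℝ)^(l+1) / Real.sin (X n l / 2)^2 *
      (a 0 + ∑ j ∈ Finset.Icc 1 n, (a j * Real.cos (j * X n l) + b j * Real.sin (j * X n l)))
      = ∑ l ∈ Finset.Icc 1 (2*n), (a 0 * ((-1:ℝ)^(l+1) / Real.sin (X n l / 2)^2)
          + ∑ j ∈ Finset.Icc 1 n,
            (a j * ((-1:ℝ)^(l+1) / Real.sin (X n l / 2)^2 * Real.cos (j * X n l))
             + b j * ((-1:ℝ)^(l+1) / Real.sin (X n l / 2)^2 * Real.sin (j * X n l)))) := by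
        refine Finset.sum_congr rfl fun l _ => ?_
        rw [mul_add, Finset.mul_sum]
        congr 1
        · ring
        · exact Finset.sum_congr rfl fun j _ => by ring
    _ = a 0 * (∑ l ∈ Finset.Icc 1 (2*n), (-1:ℝ)^(l+1) / Real.sin (X n l / 2)^2)
        + ∑ j ∈ Finset.Icc 1 n, ∑ l ∈ Finset.Icc 1 (2*n),
            (a j * ((-1:ℝ)^(l+1) / Real.sin (X n l / 2)^2 * Real.cos (j * X n l))
             + b j * ((-1:ℝ)^(l+1) / Real.sin (X n l / 2)^2 * Real.sin (j * X n l))) := by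
        rw [Finset.sum_add_distrib, ← Finset.mul_sum, Finset.sum_comm]
    _ = ∑ j ∈ Finset.Icc 1 n,
          (a j * ∑ l ∈ Finset.Icc 1 (2*n),
              ((-1:ℝ)^(l+1) / Real.sin (X n l / 2)^2 * Real.cos (j * X n l))
           + b j * ∑ l ∈ Finset.Icc 1 (2*n),
              ((-1:ℝ)^(l+1) / Real.sin (X n l / 2)^2 * Real.sin (j * X n l))) := by
        rw [hZ0, mul_zero, zero_add]
        exact Finset.sum_congr rfl fun j _ => by
          rw [Finset.sum_add_distrib, ← Finset.mul_sum, ← Finset.mul_sum]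
    _ = ∑ j ∈ Finset.Icc 1 n, (b j * (4*(n:ℝ)*(j:ℝ))) := by
        refine Finset.sum_congr rfl fun j hj => ?_
        rw [Z_zero hn j, S_val hn j (Finset.mem_Icc.1 hj).2, mul_zero, zero_add]
    _ = 4*(n:ℝ) * ∑ j ∈ Finset.Icc 1 n, (j:ℝ) * b j := by
        rw [Finset.mul_sum]
        exact Finset.sum_congr rfl fun j _ => by ring

lemma bern_core {n : ℕ} (hn : 0 < n) (a b : ℕ → ℝ) (Q : ℝ → ℝ)
    (hQ : ∀ t, Q t = a 0 + ∑ j ∈ Finset.Icc 1 n,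
      (a j * Real.cos (j*t) + b j * Real.sin (j*t)))
    (M : ℝ) (hM : ∀ t, |Q t| ≤ M) :
    |∑ j ∈ Finset.Icc 1 n, (j:ℝ) * b j| ≤ (n:ℝ) * M := by
  have hn' : (0:ℝ) < (n:ℝ) := by exact_mod_cast hn
  have key : ∑ l ∈ Finset.Icc 1 (2*n), (-1:ℝ)^(l+1) / Real.sin (X n l / 2)^2 * Q (X n l)
      = 4*(n:ℝ) * ∑ j ∈ Finset.Icc 1 n, (j:ℝ) * b j := by
    rw [Finset.sum_congr rfl fun l _ => by rw [hQ (X n l)]]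
    exact master hn a b
  have habs : |∑ l ∈ Finset.Icc 1 (2*n),
      (-1:ℝ)^(l+1) / Real.sin (X n l / 2)^2 * Q (X n l)| ≤ 4*(n:ℝ)*(n:ℝ)*M := by
    calc |∑ l ∈ Finset.Icc 1 (2*n), (-1:ℝ)^(l+1) / Real.sin (X n l / 2)^2 * Q (X n l)|
        ≤ ∑ l ∈ Finset.Icc 1 (2*n),
            |(-1:ℝ)^(l+1) / Real.sin (X n l / 2)^2 * Q (X n l)| := Finset.abs_sum_le_sum_abs _ _
      _ ≤ ∑ l ∈ Finset.Icc 1 (2*n), (1 / Real.sin (X n l / 2)^2) * M := by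
          refine Finset.sum_le_sum fun l hl => ?_
          have hs := sin_half_pos hn hl
          rw [abs_mul, abs_div, abs_pow, abs_neg, abs_one, one_pow]
          have h1 : |Real.sin (X n l / 2)^2| = Real.sin (X n l / 2)^2 := abs_of_pos (by positivity)
          rw [h1]
          apply mul_le_mul_of_nonneg_left (hM _) (by positivity)
      _ = 4*(n:ℝ)*(n:ℝ)*M := by rw [← Finset.sum_mul, E_sum hn]
  rw [key] at habs
  rw [abs_mul] at habs
  have h4 : |4*(n:ℝ)| = 4*(n:ℝ) := abs_of_pos (by positivity)
  rw [h4] at habs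
  nlinarith [abs_nonneg (∑ j ∈ Finset.Icc 1 n, (j:ℝ) * b j)]




lemma trig_hasDerivAt (a b : ℕ → ℝ) (n : ℕ) (t : ℝ) :
    HasDerivAt (fun t => a 0 + ∑ j ∈ Finset.Icc 1 n,
        (a j * Real.cos (j*t) + b j * Real.sin (j*t)))
      (∑ j ∈ Finset.Icc 1 n,
        ((j:ℝ) * b j * Real.cos ((j:ℝ)*t) - (j:ℝ) * a j * Real.sin ((j:ℝ)*t))) t := by
  apply HasDerivAt.const_add
  apply HasDerivAt.fun_sum
  intro j _
  have hlin : HasDerivAt (fun t : ℝ => (j:ℝ)*t) (j:ℝ) t := by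
    simpa using (hasDerivAt_id t).const_mul (j:ℝ)
  have hcos : HasDerivAt (fun t : ℝ => Real.cos ((j:ℝ)*t))
      (-Real.sin ((j:ℝ)*t) * (j:ℝ)) t := (Real.hasDerivAt_cos _).comp t hlin
  have hsin : HasDerivAt (fun t : ℝ => Real.sin ((j:ℝ)*t))
      (Real.cos ((j:ℝ)*t) * (j:ℝ)) t := (Real.hasDerivAt_sin _).comp t hlin
  have := (hcos.const_mul (a j)).add (hsin.const_mul (b j))
  convert this using 1
  · rfl
  ring

lemma P_hasDerivAt {n : ℕ} {Q : ℝ → ℝ} (a b : ℕ → ℝ)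
    (hQ : ∀ t, Q t = a 0 + ∑ j ∈ Finset.Icc 1 n,
      (a j * Real.cos (j*t) + b j * Real.sin (j*t))) (t : ℝ) :
    HasDerivAt Q (∑ j ∈ Finset.Icc 1 n,
      ((j:ℝ) * b j * Real.cos ((j:ℝ)*t) - (j:ℝ) * a j * Real.sin ((j:ℝ)*t))) t := by
  have hQF : Q = fun t => a 0 + ∑ j ∈ Finset.Icc 1 n,
      (a j * Real.cos (j*t) + b j * Real.sin (j*t)) := funext hQ
  rw [hQF]
  exact trig_hasDerivAt a b n t

lemma P_diff {n : ℕ} {Q : ℝ → ℝ} (h : P n Q) : Differentiable ℝ Q := by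
  obtain ⟨a, b, hQ⟩ := h
  exact fun t => (P_hasDerivAt a b hQ t).differentiableAt

lemma P_step {n : ℕ} {Q : ℝ → ℝ} (hn : 0 < n) (h : P n Q) :
    P n (deriv Q) ∧ ∀ M, (∀ t, |Q t| ≤ M) → ∀ t, |deriv Q t| ≤ (n:ℝ) * M := by
  obtain ⟨a, b, hQ⟩ := h
  have hd : ∀ t, deriv Q t = ∑ j ∈ Finset.Icc 1 n,
      ((j:ℝ) * b j * Real.cos ((j:ℝ)*t) - (j:ℝ) * a j * Real.sin ((j:ℝ)*t)) :=
    fun t => (P_hasDerivAt a b hQ t).deriv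
  constructor
  · refine ⟨fun j => (j:ℝ) * b j, fun j => -((j:ℝ) * a j), fun t => ?_⟩
    rw [hd t]
    simp only [Nat.cast_zero, zero_mul, zero_add]
    exact Finset.sum_congr rfl fun j _ => by ring
  · intro M hM t
    set A : ℕ → ℝ := fun j => a j * Real.cos ((j:ℝ)*t) + b j * Real.sin ((j:ℝ)*t) with hA
    set B : ℕ → ℝ := fun j => b j * Real.cos ((j:ℝ)*t) - a j * Real.sin ((j:ℝ)*t) with hB
    have hQt : ∀ s, Q (t + s) = A 0 + ∑ j ∈ Finset.Icc 1 n,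
        (A j * Real.cos ((j:ℝ)*s) + B j * Real.sin ((j:ℝ)*s)) := by
      intro s
      rw [hQ (t + s)]
      have hA0 : A 0 = a 0 := by rw [hA]; simp
      rw [hA0]
      refine congrArg _ (Finset.sum_congr rfl fun j _ => ?_)
      rw [hA, hB]
      simp only
      rw [show (j:ℝ)*(t+s) = (j:ℝ)*t + (j:ℝ)*s by ring, Real.cos_add, Real.sin_add]
      ring
    have hcore := bern_core hn A B (fun s => Q (t + s)) hQt M (fun s => hM (t + s))
    rw [hd t]
    have heq : ∑ j ∈ Finset.Icc 1 n,
        ((j:ℝ) * b j * Real.cos ((j:ℝ)*t) - (j:ℝ) * a j * Real.sin ((j:ℝ)*t))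
        = ∑ j ∈ Finset.Icc 1 n, (j:ℝ) * B j := by
      refine Finset.sum_congr rfl fun j _ => ?_
      rw [hB]; simp only; ring
    rw [heq]
    exact hcore

lemma iter_P {n : ℕ} {Q : ℝ → ℝ} (hn : 0 < n) (h : P n Q) (M : ℝ)
    (hM : ∀ t, |Q t| ≤ M) :
    ∀ k, P n (iteratedDeriv k Q) ∧ ∀ t, |iteratedDeriv k Q t| ≤ (n:ℝ)^k * M := by
  intro k
  induction k with
  | zero => simpa [iteratedDeriv_zero] using ⟨h, hM⟩
  | succ k ih =>
    obtain ⟨hPk, hBk⟩ := ih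
    have hstep := P_step hn hPk
    rw [iteratedDeriv_succ]
    refine ⟨hstep.1, fun t => ?_⟩
    have := hstep.2 ((n:ℝ)^k * M) hBk t
    calc |deriv (iteratedDeriv k Q) t| ≤ (n:ℝ) * ((n:ℝ)^k * M) := this
      _ = (n:ℝ)^(k+1) * M := by ring



lemma nonneg_of_deriv (f f' : ℝ → ℝ) (hf : ∀ s, HasDerivAt f (f' s) s) (h0 : f 0 = 0)
    (hpos : ∀ s, 0 ≤ s → 0 ≤ f' s) : ∀ t, 0 ≤ t → 0 ≤ f t := by
  intro t ht
  have mono : MonotoneOn f (Set.Ici 0) := by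
    apply monotoneOn_of_deriv_nonneg (convex_Ici 0)
    · exact fun s _ => (hf s).continuousAt.continuousWithinAt
    · intro s _
      exact (hf s).differentiableAt.differentiableWithinAt
    · intro s hs
      rw [(hf s).deriv]
      refine hpos s (le_of_lt ?_)
      simpa using hs
  have h2 := mono Set.self_mem_Ici (show t ∈ Set.Ici 0 from ht) ht
  linarith [h0 ▸ h2]

lemma taylor_bound : ∀ (k : ℕ) (g : ℝ → ℝ) (B : ℝ), 0 ≤ B →
    (∀ m, Differentiable ℝ (iteratedDeriv m g)) →
    (∀ i < k, iteratedDeriv i g 0 = 0) →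
    (∀ t, |iteratedDeriv k g t| ≤ B) →
    ∀ t, 0 ≤ t → |g t| ≤ B * t^k / (Nat.factorial k) := by
  intro k
  induction k with
  | zero =>
    intro g B _ _ _ hbound t _
    simpa using hbound t
  | succ k ih =>
    intro g B hB hdiff hzero hbound t ht
    have hdiff' : ∀ m, Differentiable ℝ (iteratedDeriv m (deriv g)) := by
      intro m
      rw [← iteratedDeriv_succ']
      exact hdiff (m+1)
    have hzero' : ∀ i < k, iteratedDeriv i (deriv g) 0 = 0 := by
      intro i hi
      rw [← iteratedDeriv_succ']
      exact hzero (i+1) (by omega)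
    have hbound' : ∀ s, |iteratedDeriv k (deriv g) s| ≤ B := by
      intro s
      rw [← iteratedDeriv_succ']
      exact hbound s
    have hIH : ∀ s, 0 ≤ s → |deriv g s| ≤ B * s^k / (Nat.factorial k) :=
      ih (deriv g) B hB hdiff' hzero' hbound'
    have hg0 : g 0 = 0 := by
      have := hzero 0 (by omega)
      simpa [iteratedDeriv_zero] using this
    have hgd : ∀ s, HasDerivAt g (deriv g s) s := by
      intro s
      have := hdiff 0
      rw [iteratedDeriv_zero] at this
      exact (this s).hasDerivAt
    have hpow : ∀ s : ℝ, HasDerivAt (fun s : ℝ => B * s^(k+1) / (Nat.factorial (k+1)))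
        (B * s^k / (Nat.factorial k)) s := by
      intro s
      have h1 : HasDerivAt (fun s : ℝ => s^(k+1)) ((k+1) * s^k) s := by
        simpa using hasDerivAt_pow (k+1) s
      have h2 := h1.const_mul (B / (Nat.factorial (k+1) : ℝ))
      have hfac : (Nat.factorial (k+1) : ℝ) = ((k:ℝ)+1) * Nat.factorial k := by
        rw [Nat.factorial_succ]; push_cast; ring
      have hk : (Nat.factorial k : ℝ) ≠ 0 := by
        exact_mod_cast (Nat.factorial_pos k).ne'
      have hk1 : ((k:ℝ)+1) ≠ 0 := by positivity
      have hfun : (fun s : ℝ => B * s^(k+1) / (Nat.factorial (k+1) : ℝ))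
          = fun y : ℝ => B / (Nat.factorial (k+1) : ℝ) * y^(k+1) := funext fun y => by ring
      have hval : B * s^k / (Nat.factorial k : ℝ)
          = B / (Nat.factorial (k+1) : ℝ) * (((k:ℝ)+1) * s^k) := by
        rw [hfac]; field_simp
      rw [hfun, hval]
      exact h2
    have hup : 0 ≤ B * t^(k+1) / (Nat.factorial (k+1)) - g t := by
      apply nonneg_of_deriv _ (fun s => B * s^k / (Nat.factorial k) - deriv g s)
        (fun s => (hpow s).sub (hgd s)) (by simp [hg0]) _ t ht
      intro s hs
      have := hIH s hs
      have := abs_le.1 this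
      linarith [this.2]
    have hlo : 0 ≤ B * t^(k+1) / (Nat.factorial (k+1)) + g t := by
      apply nonneg_of_deriv _ (fun s => B * s^k / (Nat.factorial k) + deriv g s)
        (fun s => (hpow s).add (hgd s)) (by simp [hg0]) _ t ht
      intro s hs
      have := abs_le.1 (hIH s hs)
      linarith [this.1]
    rw [abs_le]
    constructor <;> linarith



lemma periodic {n : ℕ} {Q : ℝ → ℝ} {a b : ℕ → ℝ}
    (hQ : ∀ t, Q t = a 0 + ∑ j ∈ Finset.Icc 1 n,
      (a j * Real.cos (j*t) + b j * Real.sin (j*t))) (t : ℝ) (m : ℤ) :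
    Q (t + m * (2*π)) = Q t := by
  rw [hQ, hQ]
  refine congrArg _ (Finset.sum_congr rfl fun j _ => ?_)
  have h1 : (j:ℝ) * (t + m * (2*π)) = (j:ℝ)*t + ((j:ℤ)*m : ℤ) * (2*π) := by
    push_cast; ring
  rw [h1, Real.cos_add_int_mul_two_pi, Real.sin_add_int_mul_two_pi]


end TrigBern



open TrigBern in
theorem trig_poly_zero_order_max_dist_a
    (n k : ℕ) (hn : 0 < n) (hk : 0 < k)
    (Q : ℝ → ℝ) (a b : ℕ → ℝ)
    (hQ : ∀ t, Q t = a 0 + ∑ j ∈ Finset.Icc 1 n,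
        (a j * Real.cos (j * t) + b j * Real.sin (j * t)))
    (hQne : ∃ t, Q t ≠ 0)
    (hzero : ∀ i < k, iteratedDeriv i Q 0 = 0)
    (t₀ : ℝ) (ht₀ : t₀ ∈ Set.Icc 0 (2 * π))
    (hmax : ∀ t ∈ Set.Icc 0 (2 * π), |Q t| ≤ |Q t₀|) :
    ((k.factorial : ℝ) / (n : ℝ) ^ k) ^ ((1 : ℝ) / k) ≤ t₀ := by
  have hpi := Real.pi_pos
  set M := |Q t₀| with hM
  -- global bound
  have hMg : ∀ t, |Q t| ≤ M := by
    intro t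
    set m : ℤ := ⌊t / (2*π)⌋ with hm
    have h1 : t - m * (2*π) ∈ Set.Icc 0 (2*π) := by
      constructor
      · have := Int.floor_le (t / (2*π))
        rw [sub_nonneg]
        calc (m:ℝ) * (2*π) ≤ (t/(2*π)) * (2*π) := by
              apply mul_le_mul_of_nonneg_right this (by positivity)
          _ = t := by field_simp
      · have := Int.lt_floor_add_one (t / (2*π))
        have h2 : t < ((m:ℝ)+1) * (2*π) := by
          calc t = (t/(2*π)) * (2*π) := by field_simp
            _ < ((m:ℝ)+1) * (2*π) := by
              apply mul_lt_mul_of_pos_right this (by positivity)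
        nlinarith
    have h2 : Q t = Q (t - m * (2*π)) := by
      have := periodic hQ (t - m * (2*π)) m
      rw [sub_add_cancel] at this
      exact this
    rw [h2]
    exact hmax _ h1
  have hMpos : 0 < M := by
    obtain ⟨t₁, ht₁⟩ := hQne
    calc (0:ℝ) < |Q t₁| := abs_pos.2 ht₁
      _ ≤ M := hMg t₁
  have hP : P n Q := ⟨a, b, hQ⟩
  have hiter := iter_P hn hP M hMg
  have hdiffm : ∀ m, Differentiable ℝ (iteratedDeriv m Q) := fun m => P_diff (hiter m).1
  have hbound : ∀ t, |iteratedDeriv k Q t| ≤ (n:ℝ)^k * M := (hiter k).2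
  have hT := taylor_bound k Q ((n:ℝ)^k * M) (by positivity) hdiffm hzero hbound t₀ ht₀.1
  have hfac : (0:ℝ) < (Nat.factorial k : ℝ) := by exact_mod_cast Nat.factorial_pos k
  have hnk : (0:ℝ) < (n:ℝ)^k := by
    have : (0:ℝ) < (n:ℝ) := by exact_mod_cast hn
    positivity
  have ht0 : (0:ℝ) ≤ t₀ := ht₀.1
  have hkey : (Nat.factorial k : ℝ) / (n:ℝ)^k ≤ t₀^k := by
    rw [div_le_iff₀ hnk]
    have h4 : M * (Nat.factorial k : ℝ) ≤ (n:ℝ)^k * M * t₀^k := by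
      rw [← le_div_iff₀ hfac]
      linarith [hT]
    nlinarith
  calc ((Nat.factorial k : ℝ) / (n:ℝ)^k) ^ ((1:ℝ)/k)
      ≤ (t₀^k) ^ ((1:ℝ)/k) := by
        apply Real.rpow_le_rpow (by positivity) hkey (by positivity)
    _ = t₀ := by
        rw [← Real.rpow_natCast t₀ k, ← Real.rpow_mul ht0]
        rw [show (k:ℝ) * ((1:ℝ)/k) = 1 by
          field_simp]
        exact Real.rpow_one t₀
end

section
/- Let Q be a real trigonometric polynomial of degree n that has a zero of order k at t = 0, and suppose |Q| attains its maximum over [0, 2π] at a point t₀ ∈ [0, 2π]. Then t₀ ≥ k/(e·n). -/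
open Real Finset

noncomputable def tpzE (m : ℤ) : ℝ → ℂ := fun t => Complex.exp (m * Complex.I * t)

lemma tpzE_mul (a b : ℤ) : tpzE a * tpzE b = tpzE (a + b) := by
  funext t
  simp only [tpzE, Pi.mul_apply, ← Complex.exp_add]
  congr 1
  push_cast
  ring

lemma tpzE_norm (m : ℤ) (t : ℝ) : ‖tpzE m t‖ = 1 := by
  simp only [tpzE, Complex.norm_exp]
  norm_num [Complex.mul_re, Complex.mul_im]

lemma tpzE_hasDerivAt (m : ℤ) (t : ℝ) :
    HasDerivAt (tpzE m) ((m : ℂ) * Complex.I * tpzE m t) t := by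
  have h1 : HasDerivAt (fun t : ℝ => ((t : ℂ))) 1 t := (hasDerivAt_id t).ofReal_comp
  have h2 : HasDerivAt (fun t : ℝ => (m : ℂ) * Complex.I * (t : ℂ))
      ((m : ℂ) * Complex.I) t := by
    simpa using h1.const_mul ((m : ℂ) * Complex.I)
  have h3 := h2.cexp
  unfold tpzE
  convert h3 using 1
  ring

lemma tpzE_contDiff (m : ℤ) : ContDiff ℝ (⊤ : ℕ∞) (tpzE m) := by
  apply Complex.contDiff_exp.comp
  exact (contDiff_const.mul (Complex.ofRealCLM.contDiff))

lemma tpzE_integral (k : ℤ) :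
    ∫ t in (0:ℝ)..(2 * π), tpzE k t = if k = 0 then (2 * π : ℝ) else 0 := by
  rcases eq_or_ne k 0 with rfl | hk
  · simp [tpzE]
  · rw [if_neg hk]
    have hc : (k : ℂ) * Complex.I ≠ 0 := by
      simp [Complex.I_ne_zero, Complex.ext_iff, hk]
    have := integral_exp_mul_complex (a := 0) (b := 2 * π) hc
    simp only [tpzE]
    rw [this]
    have : Complex.exp ((k : ℂ) * Complex.I * (2 * π : ℝ)) = 1 := by
      have := Complex.exp_int_mul_two_pi_mul_I k
      rw [← this]
      congr 1
      push_cast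
      ring
    rw [this]
    simp

noncomputable def tpzSpan (d : ℕ) : Submodule ℂ (ℝ → ℂ) :=
  Submodule.span ℂ (tpzE '' (Set.Icc (-(d : ℤ)) d))

lemma tpzSpan_mul {d e : ℕ} {f g : ℝ → ℂ} (hf : f ∈ tpzSpan d) (hg : g ∈ tpzSpan e) :
    f * g ∈ tpzSpan (d + e) := by
  have h := Submodule.mul_mem_mul hf hg
  rw [tpzSpan, tpzSpan, Submodule.span_mul_span] at h
  refine Submodule.span_mono ?_ h
  rw [Set.mul_subset_iff]
  rintro x ⟨a, ha, rfl⟩ y ⟨b, hb, rfl⟩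
  rw [tpzE_mul]
  exact ⟨a + b, by push_cast; simp at ha hb ⊢; omega, rfl⟩

lemma tpzSpan_pow {d : ℕ} {f : ℝ → ℂ} (hf : f ∈ tpzSpan d) (N : ℕ) (hN : 0 < N) :
    f ^ N ∈ tpzSpan (d * N) := by
  induction N with
  | zero => omega
  | succ N ih =>
    rcases Nat.eq_zero_or_pos N with rfl | hN'
    · simpa using hf
    · rw [pow_succ, mul_add, mul_one]
      exact tpzSpan_mul (ih hN') hf

lemma tpz_cos_sin (A B : ℂ) (j : ℕ) (t : ℝ) :
    A * Complex.cos (j * t) + B * Complex.sin (j * t)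
      = ((A - Complex.I * B) / 2) * tpzE (j : ℤ) t
        + ((A + Complex.I * B) / 2) * tpzE (-(j : ℤ)) t := by
  have h1 : tpzE (j : ℤ) t = Complex.cos (j * t) + Complex.sin (j * t) * Complex.I := by
    rw [tpzE, show ((j : ℤ) : ℂ) * Complex.I * (t : ℂ) = ((j : ℂ) * t) * Complex.I by
      push_cast; ring, Complex.exp_mul_I]
  have h2 : tpzE (-(j : ℤ)) t = Complex.cos (j * t) - Complex.sin (j * t) * Complex.I := by
    rw [tpzE]
    rw [show (((-(j : ℤ)) : ℤ) : ℂ) * Complex.I * (t : ℂ) = (-((j : ℂ) * t)) * Complex.I from by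
      push_cast; ring]
    rw [Complex.exp_mul_I, Complex.cos_neg, Complex.sin_neg]
    ring
  rw [h1, h2]
  linear_combination (B * Complex.sin ((j : ℂ) * t)) * Complex.I_sq

lemma tpzQ_mem (n : ℕ) (Q : ℝ → ℝ) (a b : ℕ → ℝ)
    (hQ : ∀ t, Q t = a 0 + ∑ j ∈ Finset.Icc 1 n,
        (a j * Real.cos (j * t) + b j * Real.sin (j * t))) :
    (fun t => (Q t : ℂ)) ∈ tpzSpan n := by
  have hrep : (fun t => (Q t : ℂ))
      = (a 0 : ℂ) • tpzE 0 + ∑ j ∈ Finset.Icc 1 n,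
          ((((a j : ℂ) - Complex.I * (b j : ℂ)) / 2) • tpzE (j : ℤ)
            + (((a j : ℂ) + Complex.I * (b j : ℂ)) / 2) • tpzE (-(j : ℤ))) := by
    funext t
    simp only [Pi.add_apply, Finset.sum_apply, Pi.smul_apply, smul_eq_mul, hQ t]
    push_cast
    rw [show tpzE 0 t = 1 by simp [tpzE]]
    rw [mul_one]
    congr 1
    apply Finset.sum_congr rfl
    intro j _
    exact tpz_cos_sin _ _ j t
  rw [hrep]
  apply Submodule.add_mem
  · exact Submodule.smul_mem _ _ (Submodule.subset_span ⟨0, by simp, rfl⟩)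
  · apply Submodule.sum_mem
    intro j hj
    simp only [Finset.mem_Icc] at hj
    apply Submodule.add_mem
    · exact Submodule.smul_mem _ _ (Submodule.subset_span ⟨(j : ℤ), by constructor <;> omega, rfl⟩)
    · exact Submodule.smul_mem _ _ (Submodule.subset_span ⟨-(j : ℤ), by constructor <;> omega, rfl⟩)

lemma tpz_extract (D : ℕ) (F : ℝ → ℂ) (hF : F ∈ tpzSpan D) (M : ℝ)
    (hM : ∀ t ∈ Set.Icc (0:ℝ) (2 * π), ‖F t‖ ≤ M) :
    ∃ d : ℤ → ℂ, (∀ m, ‖d m‖ ≤ M) ∧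
      ∀ t, F t = ∑ m ∈ Finset.Icc (-(D : ℤ)) D, d m * tpzE m t := by
  classical
  obtain ⟨c, hsupp, hsum⟩ := Submodule.mem_span_set.1 hF
  set φ : (ℝ → ℂ) → ℤ := fun g =>
    if h : ∃ m : ℤ, m ∈ Set.Icc (-(D : ℤ)) D ∧ tpzE m = g then h.choose else 0 with hφdef
  have hφ : ∀ g ∈ c.support, tpzE (φ g) = g ∧ φ g ∈ Set.Icc (-(D : ℤ)) D := by
    intro g hg
    obtain ⟨m, hm, rfl⟩ := hsupp hg
    have hex : ∃ m' : ℤ, m' ∈ Set.Icc (-(D : ℤ)) D ∧ tpzE m' = tpzE m := ⟨m, hm, rfl⟩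
    simp only [hφdef, dif_pos hex]
    exact ⟨hex.choose_spec.2, hex.choose_spec.1⟩
  have Fpt : ∀ t, F t = ∑ g ∈ c.support, c g * g t := by
    intro t
    rw [← hsum]
    simp [Finsupp.sum, Finset.sum_apply]
  set d : ℤ → ℂ := fun m => ∑ g ∈ c.support.filter (fun g => φ g = m), c g with hd
  have key : ∀ m : ℤ, (∫ t in (0:ℝ)..(2 * π), F t * tpzE (-m) t) = (2 * π : ℝ) * d m := by
    intro m
    have heq : Set.EqOn (fun t => F t * tpzE (-m) t)
        (fun t => ∑ g ∈ c.support, c g * tpzE (φ g - m) t) (Set.uIcc 0 (2 * π)) := by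
      intro t _
      simp only
      rw [Fpt t, Finset.sum_mul]
      apply Finset.sum_congr rfl
      intro g hg
      have h1 := (hφ g hg).1
      have h2 : g t * tpzE (-m) t = tpzE (φ g - m) t := by
        conv_lhs => rw [← h1]
        rw [show φ g - m = φ g + (-m) by ring, ← tpzE_mul]
        rfl
      rw [mul_assoc, h2]
    rw [intervalIntegral.integral_congr heq]
    rw [intervalIntegral.integral_finset_sum (fun g _ =>
      (show IntervalIntegrable (fun x => c g * tpzE (φ g - m) x) MeasureTheory.volume 0 (2 * π) from
        (continuous_const.mul (tpzE_contDiff _).continuous).intervalIntegrable _ _))]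
    simp_rw [intervalIntegral.integral_const_mul, tpzE_integral]
    rw [hd]
    push_cast
    rw [Finset.sum_filter, Finset.mul_sum]
    apply Finset.sum_congr rfl
    intro g _
    by_cases h : φ g = m
    · rw [if_pos (by rw [h]; ring), if_pos h]; push_cast; ring
    · rw [if_neg (fun hc => h (by omega)), if_neg h]
      simp
  have hbound : ∀ m : ℤ, ‖d m‖ ≤ M := by
    intro m
    have hb : ‖∫ t in (0:ℝ)..(2 * π), F t * tpzE (-m) t‖ ≤ M * |2 * π - 0| := by
      apply intervalIntegral.norm_integral_le_of_norm_le_const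
      intro t ht
      rw [norm_mul, tpzE_norm, mul_one]
      apply hM
      rw [Set.uIoc_of_le (by positivity)] at ht
      exact ⟨le_of_lt ht.1, ht.2⟩
    rw [key m, norm_mul] at hb
    have hπ : (0:ℝ) < 2 * π := by positivity
    rw [Complex.norm_real, Real.norm_eq_abs, abs_of_pos hπ] at hb
    rw [sub_zero, abs_of_pos hπ] at hb
    nlinarith [hb, hπ]
  refine ⟨d, hbound, fun t => ?_⟩
  rw [Fpt t, hd]
  have hcg : ∀ x ∈ Finset.Icc (-(D : ℤ)) D,
      (∑ g ∈ c.support.filter (fun g => φ g = x), c g) * tpzE x t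
        = ∑ g ∈ c.support.filter (fun g => φ g = x), c g * tpzE (φ g) t := by
    intro x _
    rw [Finset.sum_mul]
    apply Finset.sum_congr rfl
    intro g hg
    rw [(Finset.mem_filter.mp hg).2]
  rw [Finset.sum_congr rfl hcg,
    Finset.sum_fiberwise_of_maps_to (fun g hg => Finset.mem_Icc.mpr
      (Set.mem_Icc.mp (hφ g hg).2))]
  apply Finset.sum_congr rfl
  intro g hg
  rw [(hφ g hg).1]

lemma tpz_sum_contDiff (D : ℕ) (d : ℤ → ℂ) :
    ContDiff ℝ (⊤ : ℕ∞) (fun t => ∑ m ∈ Finset.Icc (-(D : ℤ)) D, d m * tpzE m t) := by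
  apply ContDiff.sum
  intro m _
  exact contDiff_const.mul (tpzE_contDiff m)

lemma tpz_deriv_rep (D : ℕ) (d : ℤ → ℂ) (j : ℕ) :
    iteratedDeriv j (fun t => ∑ m ∈ Finset.Icc (-(D : ℤ)) D, d m * tpzE m t)
      = fun s => ∑ m ∈ Finset.Icc (-(D : ℤ)) D,
          d m * ((m : ℂ) * Complex.I) ^ j * tpzE m s := by
  induction j with
  | zero => simp
  | succ j ih =>
    rw [iteratedDeriv_succ, ih]
    funext x
    have hd : HasDerivAt (fun s => ∑ m ∈ Finset.Icc (-(D : ℤ)) D,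
        d m * ((m : ℂ) * Complex.I) ^ j * tpzE m s)
        (∑ m ∈ Finset.Icc (-(D : ℤ)) D,
          d m * ((m : ℂ) * Complex.I) ^ j * ((m : ℂ) * Complex.I * tpzE m x)) x := by
      apply HasDerivAt.fun_sum
      intro m _
      exact (tpzE_hasDerivAt m x).const_mul _
    rw [hd.deriv]
    apply Finset.sum_congr rfl
    intro m _
    ring

lemma tpz_deriv_bound (D : ℕ) (d : ℤ → ℂ) (M : ℝ) (hM : ∀ m, ‖d m‖ ≤ M) (j : ℕ) (s : ℝ) :
    ‖iteratedDeriv j (fun t => ∑ m ∈ Finset.Icc (-(D : ℤ)) D, d m * tpzE m t) s‖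
      ≤ (2 * D + 1) * D ^ j * M := by
  have hM0 : 0 ≤ M := le_trans (norm_nonneg _) (hM 0)
  rw [tpz_deriv_rep]
  calc ‖∑ m ∈ Finset.Icc (-(D : ℤ)) D, d m * ((m : ℂ) * Complex.I) ^ j * tpzE m s‖
      ≤ ∑ m ∈ Finset.Icc (-(D : ℤ)) D, ‖d m * ((m : ℂ) * Complex.I) ^ j * tpzE m s‖ :=
        norm_sum_le _ _
    _ ≤ ∑ m ∈ Finset.Icc (-(D : ℤ)) D, M * (D : ℝ) ^ j := by
        apply Finset.sum_le_sum
        intro m hm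
        rw [norm_mul, norm_mul, tpzE_norm, mul_one, norm_pow, norm_mul, Complex.norm_I, mul_one]
        have hmD : ‖((m : ℤ) : ℂ)‖ ≤ (D : ℝ) := by
          rw [Complex.norm_intCast]
          simp only [Finset.mem_Icc] at hm
          have h1 : (-(D : ℝ)) ≤ ((m : ℤ) : ℝ) := by exact_mod_cast hm.1
          have h2 : ((m : ℤ) : ℝ) ≤ (D : ℝ) := by exact_mod_cast hm.2
          rw [abs_le]
          exact ⟨h1, h2⟩
        exact mul_le_mul (hM m) (pow_le_pow_left₀ (norm_nonneg _) hmD j) (by positivity) hM0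
    _ = (Finset.Icc (-(D : ℤ)) D).card * (M * (D : ℝ) ^ j) := by
        rw [Finset.sum_const, nsmul_eq_mul]
    _ ≤ (2 * D + 1) * D ^ j * M := by
        rw [Int.card_Icc]
        have : ((D : ℤ) + 1 - -(D : ℤ)).toNat = 2 * D + 1 := by omega
        rw [this]
        push_cast
        ring_nf
        exact le_refl _

lemma tpz_iteratedDeriv_add {f g : ℝ → ℂ} (hf : ContDiff ℝ (⊤ : ℕ∞) f) (hg : ContDiff ℝ (⊤ : ℕ∞) g)
    (i : ℕ) (x : ℝ) :
    iteratedDeriv i (fun t => f t + g t) x = iteratedDeriv i f x + iteratedDeriv i g x := by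
  rw [← iteratedDerivWithin_univ, ← iteratedDerivWithin_univ, ← iteratedDerivWithin_univ]
  exact iteratedDerivWithin_add (Set.mem_univ x) uniqueDiffOn_univ
    (hf.contDiffAt.contDiffWithinAt.of_le (by exact_mod_cast le_top)) (hg.contDiffAt.contDiffWithinAt.of_le (by exact_mod_cast le_top))

lemma tpz_vanish_mul : ∀ (i : ℕ) (f g : ℝ → ℂ), ContDiff ℝ (⊤ : ℕ∞) f → ContDiff ℝ (⊤ : ℕ∞) g →
    ∀ (A B : ℕ), (∀ i' < A, iteratedDeriv i' f 0 = 0) → (∀ i' < B, iteratedDeriv i' g 0 = 0) →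
    i < A + B → iteratedDeriv i (fun t => f t * g t) 0 = 0 := by
  intro i
  induction i with
  | zero =>
    intro f g _ _ A B hA hB hi
    rw [iteratedDeriv_zero]
    rcases Nat.eq_zero_or_pos A with rfl | hA'
    · have := hB 0 (by omega)
      rw [iteratedDeriv_zero] at this
      rw [this, mul_zero]
    · have := hA 0 hA'
      rw [iteratedDeriv_zero] at this
      rw [this, zero_mul]
  | succ i ih =>
    intro f g hf hg A B hA hB hi
    rw [iteratedDeriv_succ']
    have hf' : ContDiff ℝ (⊤ : ℕ∞) (deriv f) := (contDiff_infty_iff_deriv.mp hf).2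
    have hg' : ContDiff ℝ (⊤ : ℕ∞) (deriv g) := (contDiff_infty_iff_deriv.mp hg).2
    have hder : deriv (fun t => f t * g t) = fun t => deriv f t * g t + f t * deriv g t := by
      funext t
      exact deriv_fun_mul (hf.differentiable (by simp) t) (hg.differentiable (by simp) t)
    rw [hder]
    rw [tpz_iteratedDeriv_add (hf'.mul hg) (hf.mul hg') i 0]
    have hz1 : iteratedDeriv i (fun t => deriv f t * g t) 0 = 0 := by
      apply ih (deriv f) g hf' hg (A - 1) B
      · intro i' hi'
        rw [← iteratedDeriv_succ']
        exact hA (i' + 1) (by omega)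
      · exact hB
      · omega
    have hz2 : iteratedDeriv i (fun t => f t * deriv g t) 0 = 0 := by
      apply ih f (deriv g) hf hg' A (B - 1)
      · exact hA
      · intro i' hi'
        rw [← iteratedDeriv_succ']
        exact hB (i' + 1) (by omega)
      · omega
    rw [hz1, hz2, add_zero]

lemma tpz_vanish_pow {f : ℝ → ℂ} (hf : ContDiff ℝ (⊤ : ℕ∞) f) {k : ℕ}
    (h : ∀ i < k, iteratedDeriv i f 0 = 0) (N : ℕ) :
    ∀ i < k * N, iteratedDeriv i (fun t => (f t) ^ N) 0 = 0 := by
  induction N with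
  | zero => intro i hi; omega
  | succ N ih =>
    intro i hi
    have : (fun t => (f t) ^ (N + 1)) = fun t => (f t) ^ N * f t := by
      funext t; rw [pow_succ]
    rw [this]
    exact tpz_vanish_mul i _ f (hf.pow N) hf (k * N) k ih h (by rw [Nat.mul_succ] at hi; exact hi)

lemma tpz_ofReal_iteratedDeriv {Q : ℝ → ℝ} (hQ : ContDiff ℝ (⊤ : ℕ∞) Q) (i : ℕ) (x : ℝ) :
    iteratedDeriv i (fun t => (Q t : ℂ)) x = ((iteratedDeriv i Q x : ℝ) : ℂ) := by
  rw [iteratedDeriv_eq_iteratedFDeriv, iteratedDeriv_eq_iteratedFDeriv]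
  have h := Complex.ofRealCLM.iteratedFDeriv_comp_left (hQ.contDiffAt (x := x)) (i := i) (by exact_mod_cast le_top)
  rw [show (fun t => (Q t : ℂ)) = (Complex.ofRealCLM ∘ Q) from rfl, h]
  rfl

lemma tpz_idw {f : ℝ → ℂ} (hf : ContDiff ℝ (⊤ : ℕ∞) f) {s : Set ℝ} (hs : UniqueDiffOn ℝ s)
    {x : ℝ} (hx : x ∈ s) (m : ℕ) : iteratedDerivWithin m f s x = iteratedDeriv m f x := by
  rw [iteratedDerivWithin_eq_iteratedFDerivWithin, iteratedDeriv_eq_iteratedFDeriv]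
  congr 1
  have h : HasFTaylorSeriesUpTo (⊤ : ℕ∞) f (ftaylorSeries ℝ f) :=
    contDiff_iff_ftaylorSeries.mp hf
  have h2 : HasFTaylorSeriesUpToOn (⊤ : ℕ∞) f (ftaylorSeries ℝ f) s :=
    (hasFTaylorSeriesUpToOn_univ_iff.mpr h).mono (Set.subset_univ s)
  rw [← h2.eq_iteratedFDerivWithin_of_uniqueDiffOn (by exact_mod_cast le_top) hs hx,
    h.eq_iteratedFDeriv (by exact_mod_cast le_top) x]

lemma tpz_taylor {F : ℝ → ℂ} (hF : ContDiff ℝ (⊤ : ℕ∞) F) (n : ℕ)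
    (hvan : ∀ i < n + 1, iteratedDeriv i F 0 = 0) {t₀ C : ℝ} (ht : 0 < t₀)
    (hC : ∀ y, ‖iteratedDeriv (n + 1) F y‖ ≤ C) :
    ‖F t₀‖ ≤ C * t₀ ^ (n + 1) / (Nat.factorial n) := by
  have hud := uniqueDiffOn_Icc ht
  have h0 : (0 : ℝ) ∈ Set.Icc 0 t₀ := Set.mem_Icc.mpr ⟨le_refl 0, ht.le⟩
  have htay := taylor_mean_remainder_bound (f := F) (a := 0) (b := t₀) (x := t₀) (n := n) ht.le
    ((hF.of_le (by exact_mod_cast le_top)).contDiffOn)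
    (Set.mem_Icc.mpr ⟨ht.le, le_refl t₀⟩)
    (fun y hy => by rw [tpz_idw hF hud hy]; exact hC y)
  rw [taylor_within_apply] at htay
  have hz : ∑ i ∈ Finset.range (n + 1),
      (((Nat.factorial i : ℝ))⁻¹ * (t₀ - 0) ^ i) • iteratedDerivWithin i F (Set.Icc 0 t₀) 0 = 0 := by
    apply Finset.sum_eq_zero
    intro i hi
    rw [tpz_idw hF hud h0, hvan i (Finset.mem_range.mp hi), smul_zero]
  rw [hz, sub_zero, sub_zero] at htay
  exact htay

lemma tpz_fact (m : ℕ) : ((m : ℝ) / Real.exp 1) ^ m ≤ (Nat.factorial m : ℝ) := by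
  have he : (0 : ℝ) < Real.exp 1 := Real.exp_pos 1
  have hfa : (0 : ℝ) < (Nat.factorial m : ℝ) := by exact_mod_cast m.factorial_pos
  have h1 : ((m : ℝ)) ^ m / (Nat.factorial m) ≤ Real.exp m := by
    calc ((m : ℝ)) ^ m / (Nat.factorial m)
        ≤ ∑ i ∈ Finset.range (m + 1), (m : ℝ) ^ i / (Nat.factorial i) :=
          Finset.single_le_sum (f := fun i => (m : ℝ) ^ i / (Nat.factorial i))
            (fun i _ => by positivity) (Finset.self_mem_range_succ m)
      _ ≤ Real.exp m := Real.sum_le_exp_of_nonneg (by positivity) (m + 1)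
  have h2 : Real.exp m = (Real.exp 1) ^ m := by
    rw [← Real.exp_nat_mul, mul_one]
  rw [div_pow, div_le_iff₀ (by positivity)]
  have h3 : ((m : ℝ)) ^ m ≤ Real.exp m * (Nat.factorial m) := (div_le_iff₀ hfa).mp h1
  rw [h2] at h3
  nlinarith [h3]

lemma tpz_limit (A B : ℝ) (q : ℝ) (hq0 : 0 ≤ q) (hq1 : q < 1) :
    ∃ N : ℕ, 1 ≤ N ∧ (A * N ^ 2 + B * N) * q ^ N < 1 := by
  have h2 : Filter.Tendsto (fun N : ℕ => (N : ℝ) ^ 2 * q ^ N) Filter.atTop (nhds 0) :=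
    (summable_pow_mul_geometric_of_norm_lt_one (R := ℝ) 2
      (by rwa [Real.norm_eq_abs, abs_of_nonneg hq0])).tendsto_atTop_zero
  have h1 : Filter.Tendsto (fun N : ℕ => (N : ℝ) ^ 1 * q ^ N) Filter.atTop (nhds 0) :=
    (summable_pow_mul_geometric_of_norm_lt_one (R := ℝ) 1
      (by rwa [Real.norm_eq_abs, abs_of_nonneg hq0])).tendsto_atTop_zero
  have h : Filter.Tendsto (fun N : ℕ => (A * N ^ 2 + B * N) * q ^ N) Filter.atTop (nhds 0) := by
    have := (h2.const_mul A).add (h1.const_mul B)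
    simp only [mul_zero, add_zero] at this
    convert this using 2 with N
    ring
  have := (h.eventually_lt_const (by norm_num : (0:ℝ) < 1)).and (Filter.eventually_ge_atTop 1)
  obtain ⟨N, hN1, hN2⟩ := this.exists
  exact ⟨N, hN2, hN1⟩

theorem trig_poly_zero_order_max_dist_b
    (n k : ℕ) (hn : 0 < n) (hk : 0 < k)
    (Q : ℝ → ℝ) (a b : ℕ → ℝ)
    (hQ : ∀ t, Q t = a 0 + ∑ j ∈ Finset.Icc 1 n,
        (a j * Real.cos (j * t) + b j * Real.sin (j * t)))
    (hQne : ∃ t, Q t ≠ 0)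
    (hzero : ∀ i < k, iteratedDeriv i Q 0 = 0)
    (t₀ : ℝ) (ht₀ : t₀ ∈ Set.Icc 0 (2 * π))
    (hmax : ∀ t ∈ Set.Icc 0 (2 * π), |Q t| ≤ |Q t₀|) :
    (k : ℝ) / (Real.exp 1 * n) ≤ t₀ := by
  by_contra hcon
  push_neg at hcon
  obtain ⟨ht₀0, ht₀2π⟩ := ht₀
  have hπ : (0:ℝ) < π := Real.pi_pos
  have hQfun : Q = fun t => a 0 + ∑ j ∈ Finset.Icc 1 n,
      (a j * Real.cos (j * t) + b j * Real.sin (j * t)) := funext hQ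
  have hQs : ContDiff ℝ (⊤ : ℕ∞) Q := by
    rw [hQfun]
    apply ContDiff.add contDiff_const
    apply ContDiff.sum
    intro j _
    apply ContDiff.add
    · exact contDiff_const.mul (Real.contDiff_cos.comp (contDiff_const.mul contDiff_id))
    · exact contDiff_const.mul (Real.contDiff_sin.comp (contDiff_const.mul contDiff_id))
  have hper : Function.Periodic Q (2 * π) := by
    intro t
    rw [hQ, hQ]
    congr 1
    apply Finset.sum_congr rfl
    intro j _
    have hc : (j : ℝ) * (t + 2 * π) = (j : ℝ) * t + (j : ℕ) * (2 * π) := by push_cast; ring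
    rw [hc, Real.cos_add_nat_mul_two_pi, Real.sin_add_nat_mul_two_pi]
  set M := |Q t₀| with hM
  have hM0 : 0 < M := by
    obtain ⟨t1, ht1⟩ := hQne
    obtain ⟨t', ht', hQt'⟩ := hper.exists_mem_Ico₀ (by positivity) t1
    have h1 : |Q t1| ≤ M := by rw [hQt']; exact hmax t' ⟨ht'.1, ht'.2.le⟩
    have h2 := abs_pos.mpr ht1
    linarith
  have ht0pos : 0 < t₀ := by
    rcases lt_or_eq_of_le ht₀0 with h | h
    · exact h
    · exfalso
      have h0 := hzero 0 hk
      rw [iteratedDeriv_zero] at h0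
      rw [hM, ← h, h0, abs_zero] at hM0
      exact lt_irrefl 0 hM0
  set Qc : ℝ → ℂ := fun t => (Q t : ℂ) with hQc
  have hQcs : ContDiff ℝ (⊤ : ℕ∞) Qc := Complex.ofRealCLM.contDiff.comp hQs
  have hQc_mem : Qc ∈ tpzSpan n := tpzQ_mem n Q a b hQ
  have hQcvan : ∀ i < k, iteratedDeriv i Qc 0 = 0 := by
    intro i hi
    rw [hQc, tpz_ofReal_iteratedDeriv hQs i 0, hzero i hi, Complex.ofReal_zero]
  have hr0 : (0:ℝ) ≤ t₀ * Real.exp 1 * n / k := by positivity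
  set r : ℝ := t₀ * Real.exp 1 * n / k with hrdef
  have hr1 : r < 1 := by
    rw [hrdef, div_lt_one (by positivity)]
    have hen : (0:ℝ) < Real.exp 1 * n := by positivity
    calc t₀ * Real.exp 1 * n = t₀ * (Real.exp 1 * n) := by ring
      _ < (k / (Real.exp 1 * n)) * (Real.exp 1 * n) := mul_lt_mul_of_pos_right hcon hen
      _ = k := by field_simp
  set q : ℝ := r ^ k with hqdef
  have hq0 : 0 ≤ q := pow_nonneg hr0 k
  have hq1 : q < 1 := pow_lt_one₀ hr0 hr1 (by omega)
  obtain ⟨N, hN1, hN2⟩ := tpz_limit (2 * n * k) k q hq0 hq1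
  have hNpos : 0 < N := hN1
  have hkN : 0 < k * N := by positivity
  have hmem : Qc ^ N ∈ tpzSpan (n * N) := tpzSpan_pow hQc_mem N hNpos
  have hbound2π : ∀ t ∈ Set.Icc (0:ℝ) (2 * π), ‖(Qc ^ N) t‖ ≤ M ^ N := by
    intro t ht
    rw [Pi.pow_apply, norm_pow]
    apply pow_le_pow_left₀ (norm_nonneg _)
    rw [hQc, Complex.norm_real, Real.norm_eq_abs]
    exact hmax t ht
  obtain ⟨d, hdb, hrep⟩ := tpz_extract (n * N) (Qc ^ N) hmem (M ^ N) hbound2π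
  have hFeq : (Qc ^ N : ℝ → ℂ)
      = fun t => ∑ m ∈ Finset.Icc (-((n * N : ℕ) : ℤ)) ((n * N : ℕ) : ℤ), d m * tpzE m t :=
    funext hrep
  have hFs : ContDiff ℝ (⊤ : ℕ∞) (Qc ^ N : ℝ → ℂ) := by
    rw [hFeq]; exact tpz_sum_contDiff _ d
  have hvan : ∀ i < k * N, iteratedDeriv i (Qc ^ N : ℝ → ℂ) 0 = 0 := by
    intro i hi
    exact tpz_vanish_pow hQcs hQcvan N i hi
  have hCb : ∀ y, ‖iteratedDeriv (k * N) (Qc ^ N : ℝ → ℂ) y‖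
      ≤ (2 * ((n * N : ℕ) : ℝ) + 1) * ((n * N : ℕ) : ℝ) ^ (k * N) * M ^ N := by
    intro y
    rw [hFeq]
    exact tpz_deriv_bound (n * N) d (M ^ N) hdb (k * N) y
  have hkN1 : k * N - 1 + 1 = k * N := Nat.succ_pred_eq_of_pos hkN
  have htb := tpz_taylor hFs (k * N - 1) (by rw [hkN1]; exact hvan) ht0pos
    (by rw [hkN1]; exact hCb)
  rw [hkN1] at htb
  have hPt : ‖(Qc ^ N : ℝ → ℂ) t₀‖ = M ^ N := by
    rw [Pi.pow_apply, norm_pow, hQc, Complex.norm_real, Real.norm_eq_abs]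
  rw [hPt] at htb
  -- real arithmetic from here
  set KK := k * N with hKK
  set DD := n * N with hDD
  have hfact : (0:ℝ) < (Nat.factorial (KK - 1) : ℝ) := by exact_mod_cast (KK - 1).factorial_pos
  have hMN : (0:ℝ) < M ^ N := pow_pos hM0 N
  have h5 : M ^ N * (Nat.factorial (KK - 1) : ℝ)
      ≤ (2 * (DD : ℝ) + 1) * (DD : ℝ) ^ KK * M ^ N * t₀ ^ KK := (le_div_iff₀ hfact).mp htb
  have h5' : (Nat.factorial (KK - 1) : ℝ) * M ^ N
      ≤ ((2 * (DD : ℝ) + 1) * ((DD : ℝ) * t₀) ^ KK) * M ^ N := by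
    rw [mul_pow]
    nlinarith [h5]
  have h6 : (Nat.factorial (KK - 1) : ℝ) ≤ (2 * (DD : ℝ) + 1) * ((DD : ℝ) * t₀) ^ KK :=
    le_of_mul_le_mul_right h5' hMN
  have h7 : ((KK : ℝ) / Real.exp 1) ^ KK ≤ (KK : ℝ) * (Nat.factorial (KK - 1) : ℝ) := by
    calc ((KK : ℝ) / Real.exp 1) ^ KK ≤ (Nat.factorial KK : ℝ) := tpz_fact KK
      _ = (KK : ℝ) * (Nat.factorial (KK - 1) : ℝ) := by
          rw [← Nat.mul_factorial_pred hkN.ne']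
          push_cast
          ring
  have h8 : ((KK : ℝ) / Real.exp 1) ^ KK
      ≤ (KK : ℝ) * ((2 * (DD : ℝ) + 1) * ((DD : ℝ) * t₀) ^ KK) := by
    calc ((KK : ℝ) / Real.exp 1) ^ KK ≤ (KK : ℝ) * (Nat.factorial (KK - 1) : ℝ) := h7
      _ ≤ (KK : ℝ) * ((2 * (DD : ℝ) + 1) * ((DD : ℝ) * t₀) ^ KK) := by
          apply mul_le_mul_of_nonneg_left h6 (by positivity)
  have h9 : (DD : ℝ) * t₀ = r * ((KK : ℝ) / Real.exp 1) := by
    rw [hrdef, hKK, hDD]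
    have hkne : (k : ℝ) ≠ 0 := by positivity
    have hene : Real.exp 1 ≠ 0 := (Real.exp_pos 1).ne'
    field_simp
    push_cast
    ring
  have hXpos : (0:ℝ) < ((KK : ℝ) / Real.exp 1) ^ KK := by
    apply pow_pos
    apply div_pos _ (Real.exp_pos 1)
    exact_mod_cast hkN
  have h10 : ((KK : ℝ) / Real.exp 1) ^ KK
      ≤ ((KK : ℝ) * (2 * (DD : ℝ) + 1) * q ^ N) * ((KK : ℝ) / Real.exp 1) ^ KK := by
    rw [h9, mul_pow] at h8
    have hrKK : r ^ KK = q ^ N := by rw [hqdef, hKK, pow_mul]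
    rw [hrKK] at h8
    calc ((KK : ℝ) / Real.exp 1) ^ KK
        ≤ (KK : ℝ) * ((2 * (DD : ℝ) + 1) * (q ^ N * ((KK : ℝ) / Real.exp 1) ^ KK)) := h8
      _ = ((KK : ℝ) * (2 * (DD : ℝ) + 1) * q ^ N) * ((KK : ℝ) / Real.exp 1) ^ KK := by ring
  have h11 : (1:ℝ) ≤ (KK : ℝ) * (2 * (DD : ℝ) + 1) * q ^ N := by
    have := le_of_mul_le_mul_right (by linarith [h10] :
      (1:ℝ) * ((KK : ℝ) / Real.exp 1) ^ KK
        ≤ ((KK : ℝ) * (2 * (DD : ℝ) + 1) * q ^ N) * ((KK : ℝ) / Real.exp 1) ^ KK) hXpos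
    linarith
  have h12 : (KK : ℝ) * (2 * (DD : ℝ) + 1) * q ^ N
      = (2 * (n : ℝ) * k * (N : ℝ) ^ 2 + (k : ℝ) * N) * q ^ N := by
    rw [hKK, hDD]
    push_cast
    ring
  rw [h12] at h11
  linarith
end

section
/- If Q is a real trigonometric polynomial of degree n with a zero of order k at 0, then for all t ∈ [0, 2π], Q(t) ≤ M · n^k t^k / k!, where M = max_{[0,2π]} |Q|. -/
open Real Finset

def IsTP (n : ℕ) (Q : ℝ → ℝ) : Prop :=
  ∃ A B : ℕ → ℝ, ∀ t, Q t = A 0 + ∑ j ∈ Finset.Icc 1 n,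
    (A j * Real.cos (j * t) + B j * Real.sin (j * t))

lemma IsTP.continuous {n Q} (h : IsTP n Q) : Continuous Q := by
  obtain ⟨A, B, hAB⟩ := h
  have : Q = fun t => A 0 + ∑ j ∈ Finset.Icc 1 n,
      (A j * Real.cos (j * t) + B j * Real.sin (j * t)) := funext hAB
  rw [this]; fun_prop

lemma IsTP.periodic {n Q} (h : IsTP n Q) : Function.Periodic Q (2 * π) := by
  obtain ⟨A, B, hAB⟩ := h
  intro t
  rw [hAB, hAB]
  congr 1
  apply Finset.sum_congr rfl
  intro j _
  have h1 : (j : ℝ) * (t + 2 * π) = j * t + (j : ℤ) * (2 * π) := by push_cast; ring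
  rw [h1, Real.cos_add_int_mul_two_pi, Real.sin_add_int_mul_two_pi]

lemma IsTP.deriv_exists {n Q} (h : IsTP n Q) :
    ∃ D : ℝ → ℝ, IsTP n D ∧ (∀ x, HasDerivAt Q (D x) x) ∧ deriv Q = D := by
  obtain ⟨A, B, hAB⟩ := h
  set D : ℝ → ℝ := fun t => ∑ j ∈ Finset.Icc 1 n,
      ((j * B j) * Real.cos (j * t) + (-(j * A j)) * Real.sin (j * t)) with hD
  have hd : ∀ x, HasDerivAt Q (D x) x := by
    intro x
    have : Q = fun t => A 0 + ∑ j ∈ Finset.Icc 1 n,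
        (A j * Real.cos (j * t) + B j * Real.sin (j * t)) := funext hAB
    rw [this]
    apply HasDerivAt.const_add
    apply HasDerivAt.fun_sum
    intro j _
    have hc : HasDerivAt (fun t : ℝ => Real.cos (j * t)) (-(j * Real.sin (j * x))) x := by
      have := (Real.hasDerivAt_cos ((j:ℝ) * x)).comp x ((hasDerivAt_id x).const_mul (j:ℝ))
      simpa [Function.comp_def, mul_comm] using this
    have hs : HasDerivAt (fun t : ℝ => Real.sin (j * t)) (j * Real.cos (j * x)) x := by
      have := (Real.hasDerivAt_sin ((j:ℝ) * x)).comp x ((hasDerivAt_id x).const_mul (j:ℝ))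
      simpa [Function.comp_def, mul_comm] using this
    have := ((hc.const_mul (A j)).fun_add (hs.const_mul (B j)))
    convert this using 1
    ring
  refine ⟨D, ⟨fun j => if j = 0 then 0 else j * B j, fun j => -(j * A j), ?_⟩,
    hd, funext fun x => (hd x).deriv⟩
  intro t
  rw [hD]
  simp only [if_pos, zero_add]
  apply Finset.sum_congr rfl
  intro j hj
  rw [Finset.mem_Icc] at hj
  rw [if_neg (by omega)]

open Real Finset Polynomial Complex

lemma tp_term_identity (Aj Bj t : ℝ) (nn j : ℕ) :
    Complex.exp (nn * t * Complex.I) * ((Aj * Real.cos (j * t) + Bj * Real.sin (j * t) : ℝ) : ℂ)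
    = ((Aj - Complex.I * Bj)/2) * Complex.exp ((nn + j : ℝ) * t * Complex.I)
      + ((Aj + Complex.I * Bj)/2) * Complex.exp ((nn - j : ℝ) * t * Complex.I) := by
  push_cast
  rw [show Complex.cos ((j:ℂ) * t) = (Complex.exp ((j:ℂ)*t*Complex.I) + Complex.exp (-((j:ℂ)*t)*Complex.I))/2 from rfl,
     show Complex.sin ((j:ℂ) * t) = (Complex.exp (-((j:ℂ)*t)*Complex.I) - Complex.exp ((j:ℂ)*t*Complex.I))*Complex.I/2 from rfl,
     show ((nn:ℂ) + j) * t * Complex.I = nn*t*Complex.I + j*t*Complex.I by ring,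
     show ((nn:ℂ) - j) * t * Complex.I = nn*t*Complex.I + (-(j*t))*Complex.I by ring,
     Complex.exp_add, Complex.exp_add]
  ring_nf

lemma tp_poly (n : ℕ) (A B : ℕ → ℝ) :
    ∃ P : Polynomial ℂ, P.natDegree ≤ 2 * n ∧ ∀ t : ℝ,
      P.eval (Complex.exp (t * Complex.I)) =
        Complex.exp (n * t * Complex.I) *
          ((A 0 + ∑ j ∈ Finset.Icc 1 n, (A j * Real.cos (j * t) + B j * Real.sin (j * t)) : ℝ) : ℂ) := by
  refine ⟨Polynomial.C (A 0 : ℂ) * Polynomial.X ^ n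
      + ∑ j ∈ Finset.Icc 1 n,
        (Polynomial.C (((A j : ℂ) - Complex.I * B j)/2) * Polynomial.X ^ (n + j)
          + Polynomial.C (((A j : ℂ) + Complex.I * B j)/2) * Polynomial.X ^ (n - j)), ?_, ?_⟩
  · apply le_trans (Polynomial.natDegree_add_le _ _)
    apply max_le
    · exact le_trans (Polynomial.natDegree_C_mul_X_pow_le _ _) (by omega)
    · apply le_trans (Polynomial.natDegree_sum_le _ _)
      rw [Finset.fold_max_le]
      refine ⟨by omega, fun j hj => ?_⟩
      rw [Finset.mem_Icc] at hj
      apply le_trans (Polynomial.natDegree_add_le _ _)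
      apply max_le
      · exact le_trans (Polynomial.natDegree_C_mul_X_pow_le _ _) (by omega)
      · exact le_trans (Polynomial.natDegree_C_mul_X_pow_le _ _) (by omega)
  · intro t
    simp only [Polynomial.eval_add, Polynomial.eval_mul, Polynomial.eval_pow,
      Polynomial.eval_C, Polynomial.eval_X, Polynomial.eval_finset_sum]
    push_cast [Finset.mul_sum]
    rw [mul_add]
    congr 1
    · rw [← Complex.exp_nat_mul]
      ring_nf
    · rw [Finset.mul_sum]
      apply Finset.sum_congr rfl
      intro j hj
      rw [Finset.mem_Icc] at hj
      have := tp_term_identity (A j) (B j) t n j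
      push_cast at this
      rw [this]
      rw [← Complex.exp_nat_mul, ← Complex.exp_nat_mul]
      push_cast [Nat.cast_sub hj.2]
      ring_nf

lemma tp_zero_count {n : ℕ} {Q : ℝ → ℝ} (htp : IsTP n Q) (c : ℝ) (w : ℕ → ℝ)
    (hmono : ∀ i j, i < j → j < 2 * n + 1 → w i < w j)
    (hrange : ∀ j < 2 * n + 1, w j ∈ Set.Ico c (c + 2 * π))
    (hz : ∀ j < 2 * n + 1, Q (w j) = 0)
    (x0 : ℝ) (hx0 : Q x0 ≠ 0) : False := by
  obtain ⟨A, B, hAB⟩ := htp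
  obtain ⟨P, hdeg, hev⟩ := tp_poly n A B
  have hPne : P ≠ 0 := by
    intro h0
    have h1 := hev x0
    rw [h0, Polynomial.eval_zero, ← hAB x0] at h1
    rcases mul_eq_zero.mp h1.symm with h | h
    · exact Complex.exp_ne_zero _ h
    · exact hx0 (by exact_mod_cast h)
  -- injectivity of t ↦ exp (t * I) on the window
  have hinj : ∀ i j, i < 2 * n + 1 → j < 2 * n + 1 →
      Complex.exp (w i * Complex.I) = Complex.exp (w j * Complex.I) → i = j := by
    intro i j hi hj he
    by_contra hne
    wlog hij : i < j generalizing i j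
    · exact this j i hj hi he.symm (Ne.symm hne) (by omega)
    rw [Complex.exp_eq_exp_iff_exists_int] at he
    obtain ⟨m, hm⟩ := he
    have : (w i : ℂ) = (w j + m * (2 * π) : ℝ) := by
      push_cast
      have h0 : ((w i : ℂ) - ((w j : ℂ) + (m : ℂ) * (2 * (π:ℂ)))) * Complex.I = 0 := by
        linear_combination hm
      rcases mul_eq_zero.mp h0 with h | h
      · exact sub_eq_zero.mp h
      · exact absurd h Complex.I_ne_zero
    have hwm : w i = w j + m * (2 * π) := by exact_mod_cast this
    have h1 := hmono i j hij hj
    have h2 := hrange i hi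
    have h3 := hrange j hj
    have hpi := Real.pi_pos
    simp only [Set.mem_Ico] at h2 h3
    have : (0:ℝ) < -(m:ℝ) * (2*π) := by nlinarith
    have : -(m:ℝ) * (2*π) < 2*π := by nlinarith
    have hm0 : (0:ℝ) < -(m:ℝ) := by nlinarith
    have hm1 : -(m:ℝ) < 1 := by nlinarith
    have : (0:ℤ) < -m := by exact_mod_cast hm0
    have : (-m:ℤ) < 1 := by exact_mod_cast hm1
    omega
  -- the roots
  have hroot : ∀ j < 2 * n + 1, Complex.exp (w j * Complex.I) ∈ P.roots := by
    intro j hj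
    rw [Polynomial.mem_roots hPne]
    unfold Polynomial.IsRoot
    rw [hev (w j), ← hAB (w j), hz j hj]
    simp
  set S : Finset ℂ := (Finset.range (2 * n + 1)).image (fun j => Complex.exp (w j * Complex.I)) with hS
  have hcard : S.card = 2 * n + 1 := by
    rw [hS, Finset.card_image_of_injOn, Finset.card_range]
    intro i hi j hj he
    exact hinj i j (Finset.mem_range.mp hi) (Finset.mem_range.mp hj) he
  have hsub : S ⊆ P.roots.toFinset := by
    intro z hz'
    rw [hS] at hz'
    obtain ⟨j, hj, rfl⟩ := Finset.mem_image.mp hz'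
    exact Multiset.mem_toFinset.mpr (hroot j (Finset.mem_range.mp hj))
  have := Finset.card_le_card hsub
  have := Multiset.toFinset_card_le P.roots
  have := Polynomial.card_roots' P
  omega

lemma IsTP.sub {n Q R} (hQ : IsTP n Q) (hR : IsTP n R) : IsTP n (fun t => Q t - R t) := by
  obtain ⟨A, B, hAB⟩ := hQ
  obtain ⟨C, D, hCD⟩ := hR
  refine ⟨fun j => A j - C j, fun j => B j - D j, fun t => ?_⟩
  have h1 : ∑ j ∈ Finset.Icc 1 n, ((A j - C j) * Real.cos (j*t) + (B j - D j) * Real.sin (j*t))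
      = (∑ j ∈ Finset.Icc 1 n, (A j * Real.cos (j*t) + B j * Real.sin (j*t)))
        - ∑ j ∈ Finset.Icc 1 n, (C j * Real.cos (j*t) + D j * Real.sin (j*t)) := by
    rw [← Finset.sum_sub_distrib]
    apply Finset.sum_congr rfl; intro j _; ring
  simp only [hAB, hCD, h1]
  ring

lemma IsTP.const_mul {n Q} (c : ℝ) (hQ : IsTP n Q) : IsTP n (fun t => c * Q t) := by
  obtain ⟨A, B, hAB⟩ := hQ
  refine ⟨fun j => c * A j, fun j => c * B j, fun t => ?_⟩
  have h1 : ∑ j ∈ Finset.Icc 1 n, ((c * A j) * Real.cos (j*t) + (c * B j) * Real.sin (j*t))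
      = c * ∑ j ∈ Finset.Icc 1 n, (A j * Real.cos (j*t) + B j * Real.sin (j*t)) := by
    rw [Finset.mul_sum]
    apply Finset.sum_congr rfl; intro j _; ring
  simp only [hAB, h1]
  ring

lemma sine_is_tp (n : ℕ) (hn : 1 ≤ n) (c : ℝ) :
    IsTP n (fun x => Real.sin (n * x + c)) := by
  refine ⟨fun j => if j = n then Real.sin c else 0,
    fun j => if j = n then Real.cos c else 0, fun t => ?_⟩
  rw [Finset.sum_eq_single n]
  · simp only [if_pos rfl, if_neg (by omega : (0:ℕ) ≠ n)]
    rw [Real.sin_add]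
    simp only [if_pos]
    ring
  · intro j _ hj
    simp [if_neg hj]
  · intro hn'
    exact absurd (Finset.mem_Icc.mpr ⟨hn, le_refl n⟩) hn'


lemma chain_mono (w : ℕ → ℝ) (N : ℕ) (h : ∀ j, j + 1 < N → w j < w (j + 1)) :
    ∀ i j, i < j → j < N → w i < w j := by
  intro i j hij hjN
  induction j with
  | zero => omega
  | succ m ih =>
    rcases Nat.lt_succ_iff_lt_or_eq.mp hij with h1 | h1
    · exact lt_trans (ih h1 (by omega)) (h m hjN)
    · subst h1; exact h i hjN

set_option maxHeartbeats 2000000 in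
lemma bernstein_one_side {n : ℕ} {Q : ℝ → ℝ} (htp : IsTP n Q) {M : ℝ}
    (hb : ∀ x, |Q x| ≤ M) (a : ℝ) : deriv Q a ≤ n * M := by
  by_contra hcon
  push_neg at hcon
  obtain ⟨D, hDtp, hd, hdQ⟩ := htp.deriv_exists
  have hM0 : 0 ≤ M := le_trans (abs_nonneg _) (hb 0)
  rcases Nat.eq_zero_or_pos n with hn0 | hn
  · subst hn0
    obtain ⟨A, B, hAB⟩ := htp
    have hQc : Q = fun _ => A 0 := by funext t; rw [hAB]; simp
    rw [hQc] at hcon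
    norm_num [deriv_const] at hcon
  have hnR : (0:ℝ) < n := by exact_mod_cast hn
  rcases eq_or_lt_of_le hM0 with hM | hM
  · have hQ0 : Q = fun _ => (0:ℝ) := by
      funext t
      exact abs_eq_zero.mp (le_antisymm (hM ▸ hb t) (abs_nonneg _))
    rw [hQ0, ← hM] at hcon
    norm_num [deriv_const] at hcon
  -- main case
  set r := deriv Q a with hr
  have hrpos : 0 < r := lt_of_le_of_lt (by positivity) hcon
  set l := (n * M + r) / (2 * r) with hl
  have hl0 : 0 < l := by rw [hl]; positivity
  have hl1 : l < 1 := by rw [hl, div_lt_one (by positivity)]; linarith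
  set P : ℝ → ℝ := fun x => (l / M) * Q x with hP
  have hPtp : IsTP n P := htp.const_mul _
  have hPb : ∀ x, |P x| ≤ l := by
    intro x
    rw [hP]
    simp only
    rw [abs_mul, abs_of_pos (by positivity : (0:ℝ) < l / M)]
    calc (l/M) * |Q x| ≤ (l/M) * M := by gcongr; exact hb x
    _ = l := by field_simp
  have hdP : HasDerivAt P ((l/M) * D a) a := (hd a).const_mul (l/M)
  have hdPa : deriv P a = (l/M) * r := by rw [hdP.deriv, hr, hdQ]
  have hPn : (n:ℝ) < deriv P a := by
    rw [hdPa]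
    have h2 : (l/M) * r = (n*M + r)/(2*M) := by rw [hl]; field_simp
    rw [h2, lt_div_iff₀ (by positivity)]
    linarith
  set φ := Real.arcsin (P a) with hφ
  have hPa1 : |P a| < 1 := lt_of_le_of_lt (hPb a) hl1
  have hPa1' := abs_lt.mp hPa1
  have hsinφ : Real.sin φ = P a := Real.sin_arcsin (by linarith [hPa1'.1]) (by linarith [hPa1'.2])
  have hφlt : φ < π/2 := Real.arcsin_lt_pi_div_two.mpr hPa1'.2
  have hφgt : -(π/2) < φ := Real.neg_pi_div_two_lt_arcsin.mpr hPa1'.1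
  have hcosφ : 0 < Real.cos φ := Real.cos_pos_of_mem_Ioo ⟨hφgt, hφlt⟩
  set c := φ - n * a with hc
  set s : ℝ → ℝ := fun x => Real.sin (n * x + c) with hs
  have hstp : IsTP n s := sine_is_tp n hn c
  set h : ℝ → ℝ := fun x => s x - P x with hh
  have hhtp : IsTP n h := hstp.sub hPtp
  have hhc : Continuous h := hhtp.continuous
  have hna : (n:ℝ) * a + c = φ := by rw [hc]; ring
  have hha0 : h a = 0 := by
    rw [hh]; simp only; rw [hs]; simp only; rw [hna, hsinφ]; ring
  have hsd : HasDerivAt s ((n:ℝ) * Real.cos ((n:ℝ) * a + c)) a := by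
    rw [hs]
    have := (Real.hasDerivAt_sin ((n:ℝ) * a + c)).comp a
      (((hasDerivAt_id a).const_mul (n:ℝ)).add_const c)
    simpa [Function.comp_def, mul_comm] using this
  have hhd : HasDerivAt h ((n:ℝ) * Real.cos φ - deriv P a) a := by
    have h1 := hsd.sub hdP
    rw [hna] at h1
    have h2 : (l/M) * D a = deriv P a := by rw [hdPa, hr, hdQ]
    rw [hh, ← h2]
    exact h1
  have hhd_neg : (n:ℝ) * Real.cos φ - deriv P a < 0 := by
    have h1 : Real.cos φ ≤ 1 := Real.cos_le_one φ
    nlinarith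
  -- extrema
  set e : ℕ → ℝ := fun m => a + (((m:ℝ) * π - π/2 - φ) / n) with he
  have hpi := Real.pi_pos
  have hemono : ∀ p q : ℕ, p < q → e p < e q := by
    intro p q hpq
    rw [he]
    simp only
    have hpq' : (p:ℝ) < q := by exact_mod_cast hpq
    apply (add_lt_add_iff_left a).mpr
    rw [div_lt_div_iff₀ hnR hnR]
    have hx : (p:ℝ)*π < (q:ℝ)*π := by nlinarith
    nlinarith
  have hse : ∀ m : ℕ, s (e m) = -((-1:ℝ)^m) := by
    intro m
    rw [hs, he]
    simp only
    have harg : (n:ℝ) * (a + (((m:ℝ) * π - π/2 - φ)/n)) + c = (m:ℝ) * π - π/2 := by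
      rw [hc]; field_simp; ring
    rw [harg, show (m:ℝ)*π - π/2 = -(π/2 - (m:ℝ)*π) by ring, Real.sin_neg,
      Real.sin_pi_div_two_sub,
      show (m:ℝ)*π = (m:ℝ)*π - 0 by ring, Real.cos_nat_mul_pi_sub, Real.cos_zero, mul_one]
  have hhodd : ∀ m : ℕ, Odd m → 0 < h (e m) := by
    intro m hm
    rw [hh]; simp only
    rw [hse m, Odd.neg_one_pow hm]
    have := abs_le.mp (hPb (e m))
    linarith [this.2]
  have hheven : ∀ m : ℕ, Even m → h (e m) < 0 := by
    intro m hm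
    rw [hh]; simp only
    rw [hse m, Even.neg_one_pow hm]
    have := abs_le.mp (hPb (e m))
    linarith [this.1]
  have hea0 : e 0 < a := by
    rw [he]; simp only
    have h1 : ((0:ℕ):ℝ) * π - π/2 - φ < 0 := by push_cast; linarith
    have := div_neg_of_neg_of_pos h1 hnR
    linarith
  have hea1 : a < e 1 := by
    rw [he]; simp only
    have h1 : (0:ℝ) < ((1:ℕ):ℝ) * π - π/2 - φ := by push_cast; linarith
    have := div_pos h1 hnR
    linarith
  have he2n : e (2*n) = e 0 + 2*π := by
    rw [he]; simp only
    push_cast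
    field_simp
    ring
  -- points near a
  have hslope := hasDerivAt_iff_tendsto_slope.mp hhd
  have hev : ∀ᶠ x in nhdsWithin a {a}ᶜ, slope h a x < 0 := hslope.eventually (gt_mem_nhds hhd_neg)
  obtain ⟨w1, hw1s, hw1m⟩ : ∃ x, slope h a x < 0 ∧ x ∈ Set.Ioo (e 0) a := by
    have h1 : ∀ᶠ x in nhdsWithin a (Set.Iio a), slope h a x < 0 :=
      hev.filter_mono (nhdsWithin_mono a (fun x hx => ne_of_lt hx))
    have h2 : ∀ᶠ x in nhdsWithin a (Set.Iio a), x ∈ Set.Ioo (e 0) a :=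
      Filter.eventually_of_mem (Ioo_mem_nhdsLT_of_mem ⟨hea0, le_refl a⟩) (fun x hx => hx)
    exact (h1.and h2).exists
  have hw1pos : 0 < h w1 := by
    rw [slope_def_field, hha0, sub_zero] at hw1s
    rcases div_neg_iff.mp hw1s with ⟨h1, h2⟩ | ⟨h1, h2⟩
    · exact h1
    · linarith [hw1m.2]
  obtain ⟨w2, hw2s, hw2m⟩ : ∃ x, slope h a x < 0 ∧ x ∈ Set.Ioo a (e 1) := by
    have h1 : ∀ᶠ x in nhdsWithin a (Set.Ioi a), slope h a x < 0 :=
      hev.filter_mono (nhdsWithin_mono a (fun x hx => ne_of_gt hx))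
    have h2 : ∀ᶠ x in nhdsWithin a (Set.Ioi a), x ∈ Set.Ioo a (e 1) :=
      Filter.eventually_of_mem (Ioo_mem_nhdsGT_of_mem ⟨le_refl a, hea1⟩) (fun x hx => hx)
    exact (h1.and h2).exists
  have hw2neg : h w2 < 0 := by
    rw [slope_def_field, hha0, sub_zero] at hw2s
    rcases div_neg_iff.mp hw2s with ⟨h1, h2⟩ | ⟨h1, h2⟩
    · linarith [hw2m.1]
    · exact h1
  -- zeros
  obtain ⟨z0, hz0m, hz0⟩ : ∃ x ∈ Set.Ioo (e 0) w1, h x = 0 := by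
    have h0 : (0:ℝ) ∈ Set.Ioo (h (e 0)) (h w1) := ⟨hheven 0 Even.zero, hw1pos⟩
    obtain ⟨x, hx, hx0⟩ := intermediate_value_Ioo (le_of_lt hw1m.1) hhc.continuousOn h0
    exact ⟨x, hx, hx0⟩
  obtain ⟨z2, hz2m, hz2⟩ : ∃ x ∈ Set.Ioo w2 (e 1), h x = 0 := by
    have h0 : (0:ℝ) ∈ Set.Ioo (h w2) (h (e 1)) := ⟨hw2neg, hhodd 1 odd_one⟩
    obtain ⟨x, hx, hx0⟩ := intermediate_value_Ioo (le_of_lt hw2m.2) hhc.continuousOn h0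
    exact ⟨x, hx, hx0⟩
  have hgap : ∀ m : ℕ, ∃ x, x ∈ Set.Ioo (e m) (e (m+1)) ∧ h x = 0 := by
    intro m
    rcases Nat.even_or_odd m with hme | hmo
    · have h0 : (0:ℝ) ∈ Set.Ioo (h (e m)) (h (e (m+1))) :=
        ⟨hheven m hme, hhodd (m+1) (Even.add_one hme)⟩
      obtain ⟨x, hx, hx0⟩ := intermediate_value_Ioo
        (le_of_lt (hemono m (m+1) (by omega))) hhc.continuousOn h0
      exact ⟨x, hx, hx0⟩
    · have h0 : (0:ℝ) ∈ Set.Ioo (h (e (m+1))) (h (e m)) :=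
        ⟨hheven (m+1) (Odd.add_one hmo), hhodd m hmo⟩
      obtain ⟨x, hx, hx0⟩ := intermediate_value_Ioo'
        (le_of_lt (hemono m (m+1) (by omega))) hhc.continuousOn h0
      exact ⟨x, hx, hx0⟩
  choose g hg using hgap
  set w : ℕ → ℝ := fun j => if j = 0 then z0 else if j = 1 then a else if j = 2 then z2
      else g (j - 2) with hw
  have hw0 : w 0 = z0 := rfl
  have hw1' : w 1 = a := rfl
  have hw2' : w 2 = z2 := rfl
  have hw3 : ∀ j : ℕ, w (j+3) = g (j+1) := by
    intro j
    simp only [hw]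
    rw [if_neg (by omega : ¬(j+3 = 0)), if_neg (by omega : ¬(j+3 = 1)),
      if_neg (by omega : ¬(j+3 = 2)), show j+3-2 = j+1 by omega]
  have hwz : ∀ j, j < 2*n+1 → h (w j) = 0 := by
    intro j _
    rcases j with _|_|_|j
    · rw [hw0]; exact hz0
    · rw [hw1']; exact hha0
    · rw [hw2']; exact hz2
    · show h (w (j+3)) = 0
      rw [hw3]; exact (hg (j+1)).2
  have hchain : ∀ j, j + 1 < 2*n+1 → w j < w (j+1) := by
    intro j _
    rcases j with _|_|_|j
    · rw [hw0, hw1']; exact lt_trans hz0m.2 hw1m.2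
    · rw [hw1', hw2']; exact lt_trans hw2m.1 hz2m.1
    · show w 2 < w (0+3)
      rw [hw2', hw3]
      exact lt_trans hz2m.2 (hg 1).1.1
    · show w (j+3) < w ((j+1)+3)
      rw [hw3, hw3]
      exact lt_trans (hg (j+1)).1.2 (hg (j+2)).1.1
  have hwmono := chain_mono w (2*n+1) hchain
  have hwrange : ∀ j, j < 2*n+1 → w j ∈ Set.Ico (e 0) (e 0 + 2*π) := by
    intro j hj
    rw [← he2n]
    have he12n : e 1 ≤ e (2*n) := le_of_lt (hemono 1 (2*n) (by omega))
    constructor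
    · have h0 : e 0 < w 0 := by rw [hw0]; exact hz0m.1
      rcases Nat.eq_zero_or_pos j with rfl | hjp
      · exact le_of_lt h0
      · exact le_of_lt (lt_trans h0 (hwmono 0 j hjp hj))
    · rcases j with _|_|_|j
      · rw [hw0]
        have : z0 < a := lt_trans hz0m.2 hw1m.2
        linarith [hea1, he12n]
      · rw [hw1']; linarith [hea1, he12n]
      · rw [hw2']; linarith [hz2m.2, he12n]
      · show w (j+3) < e (2*n)
        rw [hw3]
        have h1 : g (j+1) < e (j+2) := (hg (j+1)).1.2
        have h2 : e (j+2) ≤ e (2*n) := by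
          rcases Nat.lt_or_ge (j+2) (2*n) with h3 | h3
          · exact le_of_lt (hemono _ _ h3)
          · have : j + 2 = 2*n := by omega
            rw [this]
        linarith
  exact tp_zero_count hhtp (e 0) w hwmono hwrange hwz (e 1) (ne_of_gt (hhodd 1 odd_one))


lemma bernstein_abs {n : ℕ} {Q : ℝ → ℝ} (htp : IsTP n Q) {M : ℝ}
    (hb : ∀ x, |Q x| ≤ M) (x : ℝ) : |deriv Q x| ≤ n * M := by
  rw [abs_le]
  refine ⟨?_, bernstein_one_side htp hb x⟩
  have hneg : IsTP n (fun t => -Q t) := by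
    have := htp.const_mul (-1)
    simpa [neg_one_mul] using this
  have hb' : ∀ x, |(fun t => -Q t) x| ≤ M := fun x => by simpa [abs_neg] using hb x
  have h1 := bernstein_one_side hneg hb' x
  rw [show (fun t => -Q t) = (fun t => -(Q t)) from rfl, deriv.fun_neg] at h1
  linarith

lemma bernstein_iter {n : ℕ} {Q : ℝ → ℝ} (htp : IsTP n Q) {M : ℝ}
    (hb : ∀ x, |Q x| ≤ M) (k : ℕ) :
    IsTP n (iteratedDeriv k Q) ∧ ∀ x, |iteratedDeriv k Q x| ≤ (n:ℝ)^k * M := by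
  induction k with
  | zero => simpa [iteratedDeriv_zero] using ⟨htp, hb⟩
  | succ m ih =>
    obtain ⟨htp', hb'⟩ := ih
    obtain ⟨D, hDtp, hd, hdQ⟩ := htp'.deriv_exists
    rw [iteratedDeriv_succ]
    refine ⟨hdQ ▸ hDtp, fun x => ?_⟩
    have h1 := bernstein_abs htp' hb' x
    calc |deriv (iteratedDeriv m Q) x| ≤ n * ((n:ℝ)^m * M) := h1
    _ = (n:ℝ)^(m+1) * M := by ring

lemma tp_global_bound {n : ℕ} {Q : ℝ → ℝ} (htp : IsTP n Q) {M : ℝ}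
    (hb : ∀ t ∈ Set.Icc (0:ℝ) (2*π), |Q t| ≤ M) : ∀ x, |Q x| ≤ M := by
  intro x
  obtain ⟨y, hy, hQxy⟩ := htp.periodic.exists_mem_Ico₀ Real.two_pi_pos x
  rw [hQxy]
  exact hb y ⟨hy.1, le_of_lt hy.2⟩

lemma taylor_bound {n k : ℕ} {Q : ℝ → ℝ} {M : ℝ} (htp : IsTP n Q)
    (hb : ∀ x, |Q x| ≤ M) (hzero : ∀ i < k, iteratedDeriv i Q 0 = 0) :
    ∀ t, 0 ≤ t → |Q t| ≤ (n:ℝ)^k * M * t^k / (Nat.factorial k) := by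
  have hM0 : 0 ≤ M := le_trans (abs_nonneg _) (hb 0)
  have key : ∀ i, i ≤ k → ∀ t, 0 ≤ t →
      |iteratedDeriv (k - i) Q t| ≤ (n:ℝ)^k * M * t^i / (Nat.factorial i) := by
    intro i
    induction i with
    | zero =>
      intro _ t _
      simpa using (bernstein_iter htp hb (k - 0)).2 t
    | succ i ih =>
      intro hik t ht
      have hik' : i ≤ k := by omega
      have hj : k - i = (k - (i+1)) + 1 := by omega
      set g := iteratedDeriv (k - (i+1)) Q with hg
      have hgtp : IsTP n g := (bernstein_iter htp hb (k-(i+1))).1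
      obtain ⟨D, hDtp, hd, hdQ⟩ := hgtp.deriv_exists
      have hg0 : g 0 = 0 := hzero _ (by omega)
      have hder : iteratedDeriv (k - i) Q = D := by
        rw [hj, iteratedDeriv_succ, ← hg, hdQ]
      have hcont : Continuous (iteratedDeriv (k-i) Q) := (bernstein_iter htp hb (k-i)).1.continuous
      have hftc : ∫ s in (0:ℝ)..t, iteratedDeriv (k-i) Q s = g t - g 0 := by
        apply intervalIntegral.integral_eq_sub_of_hasDerivAt
        · intro x _
          rw [hder]; exact hd x
        · exact hcont.intervalIntegrable _ _
      have hbound : |∫ s in (0:ℝ)..t, iteratedDeriv (k-i) Q s| ≤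
          |∫ s in (0:ℝ)..t, (n:ℝ)^k * M * s^i / (Nat.factorial i)| := by
        rw [show |∫ s in (0:ℝ)..t, iteratedDeriv (k-i) Q s|
          = ‖∫ s in (0:ℝ)..t, iteratedDeriv (k-i) Q s‖ from (Real.norm_eq_abs _).symm]
        apply intervalIntegral.norm_integral_le_abs_of_norm_le
        · rw [MeasureTheory.ae_restrict_iff' measurableSet_uIoc]
          apply Filter.Eventually.of_forall
          intro s hs
          have hs0 : 0 ≤ s := by
            rcases Set.mem_uIoc.mp hs with h1 | h1
            · linarith [h1.1]
            · linarith [h1.1, h1.2]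
          simpa [Real.norm_eq_abs] using ih hik' s hs0
        · apply Continuous.intervalIntegrable
          fun_prop
      have hval : ∫ s in (0:ℝ)..t, (n:ℝ)^k * M * s^i / (Nat.factorial i)
          = (n:ℝ)^k * M * t^(i+1) / (Nat.factorial (i+1)) := by
        have h2 : ∀ s:ℝ, (n:ℝ)^k * M * s^i / (Nat.factorial i)
            = ((n:ℝ)^k * M / (Nat.factorial i)) * s^i := fun s => by ring
        simp_rw [h2]
        rw [intervalIntegral.integral_const_mul, integral_pow, Nat.factorial_succ]
        push_cast
        rw [zero_pow (by omega : i + 1 ≠ 0), sub_zero, div_mul_div_comm]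
        ring
      have hnonneg : (0:ℝ) ≤ (n:ℝ)^k * M * t^(i+1) / (Nat.factorial (i+1)) := by
        apply div_nonneg
        · exact mul_nonneg (mul_nonneg (by positivity) hM0) (by positivity)
        · positivity
      calc |g t| = |g t - g 0| := by rw [hg0, sub_zero]
      _ = |∫ s in (0:ℝ)..t, iteratedDeriv (k-i) Q s| := by rw [hftc]
      _ ≤ |∫ s in (0:ℝ)..t, (n:ℝ)^k * M * s^i / (Nat.factorial i)| := hbound
      _ = (n:ℝ)^k * M * t^(i+1) / (Nat.factorial (i+1)) := by rw [hval, _root_.abs_of_nonneg hnonneg]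
  intro t ht
  have := key k (le_refl k) t ht
  simpa [Nat.sub_self, iteratedDeriv_zero] using this

theorem trig_poly_zero_order_growth_bound
    (n k : ℕ)
    (Q : ℝ → ℝ) (a b : ℕ → ℝ)
    (hQ : ∀ t, Q t = a 0 + ∑ j ∈ Finset.Icc 1 n,
        (a j * Real.cos (j * t) + b j * Real.sin (j * t)))
    (hzero : ∀ i < k, iteratedDeriv i Q 0 = 0)
    (M : ℝ)
    (hM : IsGreatest ((fun t => |Q t|) '' Set.Icc 0 (2 * π)) M) :
    ∀ t ∈ Set.Icc 0 (2 * π), Q t ≤ M * (n : ℝ) ^ k * t ^ k / (k.factorial : ℝ) := by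
  have htp : IsTP n Q := ⟨a, b, hQ⟩
  have hb : ∀ x, |Q x| ≤ M := tp_global_bound htp (fun t ht => hM.2 ⟨t, ht, rfl⟩)
  intro t ht
  have h1 := taylor_bound htp hb hzero t ht.1
  calc Q t ≤ |Q t| := le_abs_self _
  _ ≤ (n:ℝ)^k * M * t^k / (Nat.factorial k) := h1
  _ = M * (n:ℝ)^k * t^k / (Nat.factorial k) := by ring
end

section
/- For any d linearly independent unit vectors v₁, ..., v_d ∈ ℂ^d, there exists a unit vector q ∈ ℂ^d such that for every i, |⟨v_i, q⟩| ≤ 1/√d; equivalently, the Euclidean distance from q to the complex line spanned by each v_i is at least √((d−1)/d). -/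
open Finset

lemma exists_signs {E : Type*} [NormedAddCommGroup E] [InnerProductSpace ℂ E]
    {ι : Type*} [DecidableEq ι] (s : Finset ι) (w : ι → E) :
    ∃ ε : ι → ℂ, (∀ i, ‖ε i‖ = 1) ∧
      (∑ i ∈ s, ‖w i‖ ^ 2) ≤ ‖∑ i ∈ s, ε i • w i‖ ^ 2 := by
  induction s using Finset.cons_induction with
  | empty => exact ⟨fun _ => 1, fun _ => by simp, by simp⟩
  | cons a t ha ih =>
    obtain ⟨ε, hε1, hε2⟩ := ih
    set S := ∑ i ∈ t, ε i • w i with hS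
    set c : ℂ := inner ℂ S (w a) with hc
    set εa : ℂ := if c = 0 then 1 else (starRingEnd ℂ c) / ‖c‖ with hεa
    have hεa1 : ‖εa‖ = 1 := by
      rw [hεa]
      split_ifs with h
      · simp
      · rw [norm_div]
        simp only [RCLike.norm_conj, Complex.norm_real, Real.norm_eq_abs, abs_norm]
        exact div_self (norm_ne_zero_iff.mpr h)
    have hre : 0 ≤ (inner ℂ S (εa • w a) : ℂ).re := by
      rw [inner_smul_right, hεa]
      split_ifs with h
      · simp [← hc, h]
      · rw [← hc, div_mul_eq_mul_div, mul_comm, Complex.mul_conj]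
        rw [Complex.div_ofReal_re]
        simp only [Complex.ofReal_re]
        exact div_nonneg (Complex.normSq_nonneg c) (norm_nonneg _)
    refine ⟨Function.update ε a εa, ?_, ?_⟩
    · intro i
      rcases eq_or_ne i a with rfl | h
      · simp [hεa1]
      · simp [Function.update_of_ne h, hε1]
    · rw [Finset.sum_cons, Finset.sum_cons]
      have hsum : ∑ i ∈ t, Function.update ε a εa i • w i = S := by
        rw [hS]
        exact Finset.sum_congr rfl fun i hi => by
          rw [Function.update_of_ne (by rintro rfl; exact ha hi)]
      rw [Function.update_self, hsum]
      have expand := @norm_add_sq ℂ _ _ _ _ (εa • w a) S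
      have hnsm : ‖εa • w a‖ = ‖w a‖ := by rw [norm_smul, hεa1, one_mul]
      have hre' : (0:ℝ) ≤ RCLike.re (inner ℂ (εa • w a) S : ℂ) := by
        have h1 : (inner ℂ (εa • w a) S : ℂ) = starRingEnd ℂ (inner ℂ S (εa • w a)) :=
          (inner_conj_symm (εa • w a) S).symm
        rw [h1, RCLike.conj_re]
        exact hre
      rw [expand, hnsm]
      linarith

theorem unit_vector_small_inner_with_basis
    (d : ℕ) (hd : 0 < d)
    (v : Fin d → EuclideanSpace ℂ (Fin d))
    (hv : ∀ i, ‖v i‖ = 1) (hind : LinearIndependent ℂ v) :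
    ∃ q : EuclideanSpace ℂ (Fin d), ‖q‖ = 1 ∧
      ∀ i, ‖(inner ℂ (v i) q : ℂ)‖ ≤ 1 / Real.sqrt d := by
  classical
  haveI : Nonempty (Fin d) := ⟨⟨0, hd⟩⟩
  have hcard : Fintype.card (Fin d) = Module.finrank ℂ (EuclideanSpace ℂ (Fin d)) := by
    simp
  let B : Module.Basis (Fin d) ℂ (EuclideanSpace ℂ (Fin d)) :=
    basisOfLinearIndependentOfCardEqFinrank hind hcard
  have hB : ∀ i, B i = v i := fun i => by
    rw [show ⇑B = v from coe_basisOfLinearIndependentOfCardEqFinrank hind hcard]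
  let w : Fin d → EuclideanSpace ℂ (Fin d) := fun i =>
    (InnerProductSpace.toDual ℂ (EuclideanSpace ℂ (Fin d))).symm
      (LinearMap.toContinuousLinearMap (B.coord i))
  have hw : ∀ i x, (inner ℂ (w i) x : ℂ) = B.coord i x := by
    intro i x
    simp [w, InnerProductSpace.toDual_symm_apply]
  have hwv : ∀ i j, (inner ℂ (w i) (v j) : ℂ) = if i = j then 1 else 0 := by
    intro i j
    rw [hw, ← hB j]
    simp [Module.Basis.coord_apply, Module.Basis.repr_self, Finsupp.single_apply, eq_comm]
  have hwnorm : ∀ i, 1 ≤ ‖w i‖ := by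
    intro i
    have h1 : (inner ℂ (w i) (v i) : ℂ) = 1 := by simp [hwv]
    have h2 := norm_inner_le_norm (𝕜 := ℂ) (w i) (v i)
    rw [h1, hv i] at h2
    simpa using h2
  obtain ⟨ε, hε1, hε2⟩ := exists_signs (Finset.univ : Finset (Fin d)) w
  set S : EuclideanSpace ℂ (Fin d) := ∑ i, ε i • w i with hSdef
  have hdpos : (0:ℝ) < Real.sqrt d := Real.sqrt_pos.mpr (by exact_mod_cast hd)
  have hSnorm : Real.sqrt d ≤ ‖S‖ := by
    have h1 : (d : ℝ) ≤ ∑ i : Fin d, ‖w i‖ ^ 2 := by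
      calc (d : ℝ) = ∑ _i : Fin d, (1:ℝ) := by simp
        _ ≤ ∑ i : Fin d, ‖w i‖ ^ 2 :=
            Finset.sum_le_sum fun i _ => by nlinarith [hwnorm i]
    have h2 : (d : ℝ) ≤ ‖S‖ ^ 2 := le_trans h1 hε2
    have h3 := Real.sqrt_le_sqrt h2
    rwa [Real.sqrt_sq (norm_nonneg _)] at h3
  have hSne : S ≠ 0 := by
    intro h
    rw [h, norm_zero] at hSnorm
    linarith
  refine ⟨(‖S‖ : ℂ)⁻¹ • S, ?_, ?_⟩
  · rw [norm_smul, norm_inv, Complex.norm_real, Real.norm_eq_abs, abs_norm,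
      inv_mul_cancel₀ (norm_ne_zero_iff.mpr hSne)]
  · intro i
    rw [inner_smul_right]
    have hvS : (inner ℂ (v i) S : ℂ) = ε i := by
      rw [hSdef, inner_sum]
      have key : ∀ j ∈ Finset.univ, (inner ℂ (v i) (ε j • w j) : ℂ) =
          if j = i then ε j else 0 := by
        intro j _
        rw [inner_smul_right]
        have h1 : (inner ℂ (v i) (w j) : ℂ) = starRingEnd ℂ (inner ℂ (w j) (v i)) :=
          (inner_conj_symm (v i) (w j)).symm
        rw [h1, hwv]
        by_cases h : j = i
        · simp [h]
        · simp [h, Ne.symm h]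
      rw [Finset.sum_congr rfl key]
      simp
    rw [hvS, norm_mul, norm_inv, Complex.norm_real, Real.norm_eq_abs, abs_norm,
      hε1 i, mul_one, one_div]
    exact inv_anti₀ hdpos hSnorm
end

section
/- Let v₁, ..., v_d be a basis of ℂ^d consisting of unit vectors, and let w₁, ..., w_d be the dual basis, i.e., ⟨v_i, w_j⟩ = δ_{ij}. Then there exist complex numbers f₁, ..., f_d of modulus 1 such that |f₁w₁ + ... + f_d w_d| ≥ √d. -/
open Finset

theorem steinhaus_combination_of_dual_basis
    (d : ℕ) (v w : Fin d → EuclideanSpace ℂ (Fin d))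
    (hv : ∀ i, ‖v i‖ = 1) (hbasis : LinearIndependent ℂ v)
    (hdual : ∀ i j, (inner ℂ (v i) (w j) : ℂ) = if i = j then 1 else 0) :
    ∃ f : Fin d → ℂ, (∀ i, ‖f i‖ = 1) ∧
      Real.sqrt d ≤ ‖∑ i, f i • w i‖ := by
  classical
  set e : Finset (Fin d) → Fin d → ℝ := fun s i => if i ∈ s then 1 else -1 with he
  have he1 : ∀ s i, e s i = 1 ∨ e s i = -1 := by
    intro s i; by_cases h : i ∈ s <;> simp [he, h]
  have hnorm : ∀ s i, ‖((e s i : ℝ) : ℂ)‖ = 1 := by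
    intro s i; rcases he1 s i with h | h <;> simp [h]
  -- key orthogonality of sign patterns
  have key : ∀ i j : Fin d,
      ∑ s : Finset (Fin d), ((e s i : ℂ) * (e s j : ℂ))
        = if i = j then (2 ^ d : ℂ) else 0 := by
    intro i j
    by_cases hij : i = j
    · subst hij
      have h1 : ∀ s : Finset (Fin d), ((e s i : ℂ) * (e s i : ℂ)) = 1 := by
        intro s; rcases he1 s i with h | h <;> simp [h]
      simp [h1, Finset.card_univ, Fintype.card_finset]
    · simp only [hij, if_false]
      have hinv : Function.Involutive (fun s : Finset (Fin d) => symmDiff s {i}) := by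
        intro s; simp [symmDiff_symmDiff_cancel_right]
      have hneg : ∀ s : Finset (Fin d),
          ((e (symmDiff s {i}) i : ℂ) * (e (symmDiff s {i}) j : ℂ))
            = -((e s i : ℂ) * (e s j : ℂ)) := by
        intro s
        have hi : e (symmDiff s {i}) i = - e s i := by
          by_cases h : i ∈ s <;> simp [he, Finset.mem_symmDiff, h]
        have hj : e (symmDiff s {i}) j = e s j := by
          by_cases h : j ∈ s <;> simp [he, Finset.mem_symmDiff, h, Ne.symm hij, hij]
        rw [hi, hj]; push_cast; ring
      have hswap : ∑ s : Finset (Fin d), ((e s i : ℂ) * (e s j : ℂ))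
          = ∑ s : Finset (Fin d), ((e (symmDiff s {i}) i : ℂ) * (e (symmDiff s {i}) j : ℂ)) :=
        Fintype.sum_equiv (Function.Involutive.toPerm _ hinv) _ _ (fun s => rfl) |>.symm
      have : ∑ s : Finset (Fin d), ((e s i : ℂ) * (e s j : ℂ))
          = - ∑ s : Finset (Fin d), ((e s i : ℂ) * (e s j : ℂ)) := by
        conv_lhs => rw [hswap]
        rw [← Finset.sum_neg_distrib]
        exact Finset.sum_congr rfl (fun s _ => hneg s)
      linear_combination (1/2 : ℂ) * this
  have hinner : ∀ s : Finset (Fin d),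
      (inner ℂ (∑ i, ((e s i : ℂ)) • w i) (∑ i, ((e s i : ℂ)) • w i) : ℂ)
        = ∑ i, ∑ j, (e s i : ℂ) * (e s j : ℂ) * inner ℂ (w i) (w j) := by
    intro s
    rw [sum_inner]
    refine Finset.sum_congr rfl fun i _ => ?_
    rw [inner_sum]
    refine Finset.sum_congr rfl fun j _ => ?_
    rw [inner_smul_left, inner_smul_right, Complex.conj_ofReal]; ring
  have havg : ∑ s : Finset (Fin d),
      (inner ℂ (∑ i, ((e s i : ℂ)) • w i) (∑ i, ((e s i : ℂ)) • w i) : ℂ)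
        = (2^d : ℂ) * ∑ i, (inner ℂ (w i) (w i) : ℂ) := by
    simp_rw [hinner]
    rw [Finset.sum_comm, Finset.mul_sum]
    refine Finset.sum_congr rfl fun i _ => ?_
    rw [Finset.sum_comm]
    have h3 : ∀ j, ∑ s : Finset (Fin d), (e s i : ℂ) * (e s j : ℂ) * inner ℂ (w i) (w j)
        = (if i = j then (2^d : ℂ) else 0) * inner ℂ (w i) (w j) := by
      intro j; rw [← Finset.sum_mul, key]
    simp_rw [h3]
    simp [ite_mul]
  have hreal : ∑ s : Finset (Fin d), ‖∑ i, ((e s i : ℂ)) • w i‖^2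
      = (2^d : ℝ) * ∑ i, ‖w i‖^2 := by
    have h := havg
    simp_rw [inner_self_eq_norm_sq_to_K] at h
    exact Complex.ofReal_inj.mp (by push_cast; exact h)
  have hw : ∀ i, (1:ℝ) ≤ ‖w i‖ := by
    intro i
    have h := norm_inner_le_norm (𝕜 := ℂ) (v i) (w i)
    rw [hdual i i] at h
    simpa [hv i] using h
  have hd : ∑ s : Finset (Fin d), (d:ℝ) ≤ ∑ s : Finset (Fin d), ‖∑ i, ((e s i : ℂ)) • w i‖^2 := by
    rw [hreal]
    have h4 : (d:ℝ) ≤ ∑ i, ‖w i‖^2 := by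
      calc (d:ℝ) = ∑ _i : Fin d, (1:ℝ) := by simp
        _ ≤ ∑ i, ‖w i‖^2 := Finset.sum_le_sum fun i _ => by nlinarith [hw i]
    have h5 : ∑ s : Finset (Fin d), (d:ℝ) = (2^d : ℝ) * d := by
      simp [Finset.sum_const, Finset.card_univ, Fintype.card_finset, mul_comm]
    rw [h5]
    have : (0:ℝ) < 2^d := by positivity
    nlinarith
  obtain ⟨s, -, hs⟩ := Finset.exists_le_of_sum_le Finset.univ_nonempty hd
  refine ⟨fun i => (e s i : ℂ), fun i => hnorm s i, ?_⟩
  calc Real.sqrt d ≤ Real.sqrt (‖∑ i, ((e s i : ℂ)) • w i‖^2) := Real.sqrt_le_sqrt hs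
    _ = ‖∑ i, ((e s i : ℂ)) • w i‖ := Real.sqrt_sq (norm_nonneg _)
end

section
/- Let P be a nonzero complex polynomial in one variable of degree n and R > 0 with n ≤ R². Then the function F(z) = e^{−|z|²/2}|P(z)| on ℂ attains its global maximum at a point z with |z| ≤ R. -/
theorem gaussian_weighted_polynomial_max_in_ball
    (P : Polynomial ℂ) (hP : P ≠ 0) (R : ℝ) (hR : 0 < R)
    (hdeg : (P.natDegree : ℝ) ≤ R ^ 2) :
    ∃ z : ℂ, ‖z‖ ≤ R ∧
      ∀ w : ℂ, Real.exp (-‖w‖ ^ 2 / 2) * ‖P.eval w‖ ≤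
        Real.exp (-‖z‖ ^ 2 / 2) * ‖P.eval z‖ := by
  set n := P.natDegree with hn
  set F : ℂ → ℝ := fun w => Real.exp (-‖w‖ ^ 2 / 2) * ‖P.eval w‖ with hF
  have hFc : Continuous F := by
    apply Continuous.mul
    · exact (Real.continuous_exp.comp ((continuous_norm.pow 2).neg.div_const 2))
    · exact (P.continuous_aeval.norm)
  obtain ⟨z, hzmem, hmax⟩ := (isCompact_closedBall (0:ℂ) R).exists_isMaxOn
    ⟨0, Metric.mem_closedBall_self hR.le⟩ hFc.continuousOn
  rw [Metric.mem_closedBall, dist_zero_right] at hzmem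
  refine ⟨z, hzmem, ?_⟩
  set M := F z with hM
  have hMball : ∀ v : ℂ, ‖v‖ ≤ R → F v ≤ M := fun v hv =>
    hmax (by rwa [Metric.mem_closedBall, dist_zero_right])
  intro w
  by_cases hw : ‖w‖ ≤ R
  · exact hMball w hw
  push_neg at hw
  have hw0 : w ≠ 0 := by
    intro h; rw [h, norm_zero] at hw; exact absurd (hR.trans hw) (lt_irrefl 0)
  set C : ℝ := Real.exp (R ^ 2 / 2) * M / R ^ n with hC
  -- frontier bound for reversed polynomial
  have hfront : ∀ u ∈ frontier (Metric.ball (0:ℂ) (1/R)),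
      ‖P.reverse.eval u‖ ≤ C := by
    intro u hu
    rw [frontier_ball (0:ℂ) (by positivity : (1:ℝ)/R ≠ 0), Metric.mem_sphere,
      dist_zero_right] at hu
    have hu0 : u ≠ 0 := by
      intro h; rw [h, norm_zero] at hu; exact absurd hu.symm (by positivity)
    set v : ℂ := u⁻¹ with hv
    have hv0 : v ≠ 0 := inv_ne_zero hu0
    have hvnorm : ‖v‖ = R := by
      rw [hv, norm_inv, hu, one_div, inv_inv]
    have : Invertible v := invertibleOfNonzero hv0
    have key : P.reverse.eval (⅟ v) * v ^ n = P.eval v := by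
      exact Polynomial.eval₂_reverse_mul_pow (RingHom.id ℂ) v P
    have hinv : (⅟ v : ℂ) = u := by
      rw [invOf_eq_inv v, hv, inv_inv]
    rw [hinv] at key
    have hPv : ‖P.eval v‖ ≤ Real.exp (R ^ 2 / 2) * M := by
      have := hMball v hvnorm.le
      rw [hF] at this
      have h2 : Real.exp (-‖v‖ ^ 2 / 2) * ‖P.eval v‖ ≤ M := this
      rw [hvnorm] at h2
      calc ‖P.eval v‖ = Real.exp (R ^ 2 / 2) * (Real.exp (-R ^ 2 / 2) * ‖P.eval v‖) := by
            rw [← mul_assoc, ← Real.exp_add]; ring_nf; rw [Real.exp_zero, one_mul]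
        _ ≤ Real.exp (R ^ 2 / 2) * M := by
            exact mul_le_mul_of_nonneg_left h2 (Real.exp_pos _).le
    have hQu : ‖P.reverse.eval u‖ * R ^ n = ‖P.eval v‖ := by
      rw [← key, norm_mul, norm_pow, hvnorm]
    rw [hC, le_div_iff₀ (by positivity)]
    rw [hQu]; exact hPv
  have hclos : w⁻¹ ∈ closure (Metric.ball (0:ℂ) (1/R)) := by
    apply subset_closure
    rw [Metric.mem_ball, dist_zero_right, norm_inv, one_div]
    exact inv_strictAnti₀ hR hw
  have hQw : ‖P.reverse.eval w⁻¹‖ ≤ C :=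
    Complex.norm_le_of_forall_mem_frontier_norm_le Metric.isBounded_ball
      ((Polynomial.differentiable _).diffContOnCl) hfront hclos
  -- relate P.eval w
  have : Invertible w := invertibleOfNonzero hw0
  have key : P.reverse.eval (⅟ w) * w ^ n = P.eval w := by
    exact Polynomial.eval₂_reverse_mul_pow (RingHom.id ℂ) w P
  have hinvw : (⅟ w : ℂ) = w⁻¹ := invOf_eq_inv w
  rw [hinvw] at key
  have hPw : ‖P.eval w‖ ≤ C * ‖w‖ ^ n := by
    rw [← key, norm_mul, norm_pow]
    exact mul_le_mul_of_nonneg_right hQw (by positivity)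
  set s := ‖w‖ with hs
  have hs0 : 0 < s := hR.trans hw
  have hM0 : 0 ≤ M := by
    rw [hM, hF]; positivity
  -- analytic inequality : exp(-s²/2) * C * s^n ≤ M
  have hratio : (s / R) ^ n ≤ Real.exp ((s ^ 2 - R ^ 2) / 2) := by
    have ht1 : (1:ℝ) ≤ s / R := by
      rw [le_div_iff₀ hR]; linarith [hw]
    have ht0 : 0 < s / R := lt_of_lt_of_le one_pos ht1
    have hlog : Real.log (s / R) ≤ ((s / R) ^ 2 - 1) / 2 := by
      have h1 : Real.log (s / R) ≤ s / R - 1 := Real.log_le_sub_one_of_pos ht0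
      nlinarith [ht1]
    have hlog0 : 0 ≤ Real.log (s / R) := Real.log_nonneg ht1
    have hnlog : (n : ℝ) * Real.log (s / R) ≤ (s ^ 2 - R ^ 2) / 2 := by
      have h2 : (n : ℝ) * Real.log (s / R) ≤ R ^ 2 * Real.log (s / R) :=
        mul_le_mul_of_nonneg_right hdeg hlog0
      have h3 : R ^ 2 * Real.log (s / R) ≤ R ^ 2 * (((s / R) ^ 2 - 1) / 2) :=
        mul_le_mul_of_nonneg_left hlog (by positivity)
      have h4 : R ^ 2 * (((s / R) ^ 2 - 1) / 2) = (s ^ 2 - R ^ 2) / 2 := by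
        field_simp
      linarith
    calc (s / R) ^ n = Real.exp ((n : ℝ) * Real.log (s / R)) := by
          rw [Real.exp_nat_mul, Real.exp_log ht0]
      _ ≤ Real.exp ((s ^ 2 - R ^ 2) / 2) := Real.exp_le_exp.2 hnlog
  calc Real.exp (-‖w‖ ^ 2 / 2) * ‖P.eval w‖
      ≤ Real.exp (-s ^ 2 / 2) * (C * s ^ n) := by
        exact mul_le_mul_of_nonneg_left hPw (Real.exp_pos _).le
    _ = Real.exp (-s ^ 2 / 2) * Real.exp (R ^ 2 / 2) * (s / R) ^ n * M := by
        rw [hC]; field_simp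
        rw [mul_assoc M, ← mul_pow, mul_div_assoc', mul_comm R s, mul_div_assoc, div_self hR.ne', mul_one]
    _ ≤ Real.exp (-s ^ 2 / 2) * Real.exp (R ^ 2 / 2) * Real.exp ((s ^ 2 - R ^ 2) / 2) * M := by
        apply mul_le_mul_of_nonneg_right _ hM0
        exact mul_le_mul_of_nonneg_left hratio (by positivity)
    _ = M := by
        rw [← Real.exp_add, ← Real.exp_add]
        ring_nf
        rw [Real.exp_zero, one_mul]
    _ = Real.exp (-‖z‖ ^ 2 / 2) * ‖P.eval z‖ := rfl
end

section
/- Let P₁, ..., P_N be nonzero complex polynomials in d variables, δ₁, ..., δ_N > 0 with Σ_k δ_k²·deg(P_k) ≤ R², and let z_M be a maximizer of F(z) = e^{−|z|²/2}Π_k|P_k(z)|^{δ_k²} over the closed ball of radius R in ℂ^d. Then for any subset of indices i₁ < ... < i_m, the Euclidean distance from z_M to the common zero set {z : P_{i₁}(z) = ... = P_{i_m}(z) = 0} is at least √(δ_{i₁}² + ... + δ_{i_m}²). -/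
open Polynomial Finset

section Helpers

lemma le_of_pow_le_pow_mul' {x y K : ℝ} (hy : 0 < y) (hK : 0 < K)
    (h : ∀ L : ℕ, 1 ≤ L → x ^ L ≤ y ^ L * K) : x ≤ y := by
  by_contra hc
  push_neg at hc
  have hr : 1 < x / y := (one_lt_div hy).2 hc
  obtain ⟨n, hn⟩ := pow_unbounded_of_one_lt K hr
  have hn2 : K < (x / y) ^ (n + 1) :=
    lt_of_lt_of_le hn (pow_le_pow_right₀ (le_of_lt hr) (Nat.le_succ n))
  have hn' := h (n + 1) (Nat.le_add_left 1 n)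
  have hyn : (0:ℝ) < y ^ (n + 1) := pow_pos hy _
  rw [div_pow, lt_div_iff₀ hyn] at hn2
  nlinarith

lemma rpow_nat_ceil_le {x B c : ℝ} (hx : 0 ≤ x) (hB : 1 ≤ B) (hxB : x ≤ B) (hc : 0 < c)
    (L : ℕ) (hL : 1 ≤ L) :
    x ^ ((⌈(L : ℝ) * c⌉₊ : ℝ)) ≤ (x ^ c) ^ L * B := by
  set m : ℕ := ⌈(L : ℝ) * c⌉₊
  have hLc : 0 < (L : ℝ) * c := mul_pos (by exact_mod_cast hL) hc
  have hm1 : (L : ℝ) * c ≤ m := Nat.le_ceil _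
  have hm2 : (m : ℝ) ≤ (L : ℝ) * c + 1 := le_of_lt (Nat.ceil_lt_add_one (le_of_lt hLc))
  have he : (m : ℝ) = (L : ℝ) * c + ((m : ℝ) - (L : ℝ) * c) := by ring
  have hme : (0:ℝ) ≤ (m : ℝ) - (L : ℝ) * c := by linarith
  rw [he, Real.rpow_add' hx (by positivity)]
  have h1 : x ^ ((L:ℝ) * c) = (x ^ c) ^ L := by
    rw [mul_comm, Real.rpow_mul hx, Real.rpow_natCast]
  rw [h1]
  apply mul_le_mul_of_nonneg_left _ (by positivity)
  calc x ^ ((m:ℝ) - (L:ℝ)*c) ≤ B ^ ((m:ℝ) - (L:ℝ)*c) := Real.rpow_le_rpow hx hxB hme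
    _ ≤ B ^ (1:ℝ) := Real.rpow_le_rpow_of_exponent_le hB (by linarith)
    _ = B := Real.rpow_one B

lemma rpow_nat_ceil_ge {x c : ℝ} (hx : 0 < x) (hc : 0 < c) (L : ℕ) (hL : 1 ≤ L) :
    (x ^ c) ^ L * min 1 x ≤ x ^ ((⌈(L : ℝ) * c⌉₊ : ℝ)) := by
  set m : ℕ := ⌈(L : ℝ) * c⌉₊
  have hLc : 0 < (L : ℝ) * c := mul_pos (by exact_mod_cast hL) hc
  have hm1 : (L : ℝ) * c ≤ m := Nat.le_ceil _
  have hm2 : (m : ℝ) ≤ (L : ℝ) * c + 1 := le_of_lt (Nat.ceil_lt_add_one (le_of_lt hLc))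
  have he : (m : ℝ) = (L : ℝ) * c + ((m : ℝ) - (L : ℝ) * c) := by ring
  have hme : (0:ℝ) ≤ (m : ℝ) - (L : ℝ) * c := by linarith
  rw [he, Real.rpow_add' (le_of_lt hx) (by positivity)]
  have h1 : x ^ ((L:ℝ) * c) = (x ^ c) ^ L := by
    rw [mul_comm, Real.rpow_mul (le_of_lt hx), Real.rpow_natCast]
  rw [h1]
  apply mul_le_mul_of_nonneg_left _ (by positivity)
  rcases le_or_gt 1 x with hx1 | hx1
  · calc min 1 x ≤ 1 := min_le_left _ _
      _ = x ^ (0:ℝ) := (Real.rpow_zero x).symm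
      _ ≤ x ^ ((m:ℝ) - (L:ℝ)*c) := Real.rpow_le_rpow_of_exponent_le hx1 hme
  · calc min 1 x ≤ x := min_le_right _ _
      _ = x ^ (1:ℝ) := (Real.rpow_one x).symm
      _ ≤ x ^ ((m:ℝ) - (L:ℝ)*c) := Real.rpow_le_rpow_of_exponent_ge hx (le_of_lt hx1) (by linarith)

lemma maxmod (f g : ℂ → ℂ) (hg : Differentiable ℂ g) (M : ℕ)
    (hfg : ∀ t, f t = t ^ M * g t) (T : ℝ) (hT : 1 ≤ T) (C : ℝ)
    (hC : ∀ t : ℂ, ‖t‖ = T → ‖f t‖ ≤ C) : ‖f 1‖ * T ^ M ≤ C := by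
  have hT0 : (0:ℝ) < T := lt_of_lt_of_le one_pos hT
  have hTM : (0:ℝ) < T ^ M := pow_pos hT0 M
  have key : ‖g 1‖ ≤ C / T ^ M := by
    have hb : Bornology.IsBounded (Metric.ball (0:ℂ) T) := Metric.isBounded_ball
    have hd : DiffContOnCl ℂ g (Metric.ball 0 T) := hg.diffContOnCl
    have hfr : ∀ z ∈ frontier (Metric.ball (0:ℂ) T), ‖g z‖ ≤ C / T ^ M := by
      intro z hz
      rw [frontier_ball (0:ℂ) (ne_of_gt hT0)] at hz
      have hzn : ‖z‖ = T := by simpa [Complex.dist_eq] using hz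
      have h1 : ‖f z‖ = ‖z‖ ^ M * ‖g z‖ := by rw [hfg z]; simp [norm_mul, norm_pow]
      have := hC z hzn
      rw [h1, hzn] at this
      rw [le_div_iff₀ hTM]; linarith
    have h1m : (1:ℂ) ∈ closure (Metric.ball (0:ℂ) T) := by
      rw [closure_ball (0:ℂ) (ne_of_gt hT0)]
      simp [Complex.dist_eq, hT]
    exact Complex.norm_le_of_forall_mem_frontier_norm_le hb hd hfr h1m
  have hf1 : ‖f 1‖ = ‖g 1‖ := by rw [hfg 1]; simp
  rw [hf1, ← le_div_iff₀ hTM]; exact key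

noncomputable def lineP {d : ℕ} (a b : Fin d → ℂ) (q : MvPolynomial (Fin d) ℂ) : ℂ[X] :=
  MvPolynomial.aeval (fun i => Polynomial.C (a i) + Polynomial.C (b i) * Polynomial.X) q

lemma eval_lineP {d : ℕ} (a b : Fin d → ℂ) (q : MvPolynomial (Fin d) ℂ) (t : ℂ) :
    Polynomial.eval t (lineP a b q) = MvPolynomial.eval (fun i => a i + b i * t) q := by
  induction q using MvPolynomial.induction_on with
  | C c => simp [lineP]
  | add p q hp hq => simp only [lineP, map_add, Polynomial.eval_add] at *; rw [hp, hq]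
  | mul_X p i hp => simp only [lineP, map_mul, Polynomial.eval_mul] at *; simp [hp]

lemma natDegree_lineP {d : ℕ} (a b : Fin d → ℂ) (q : MvPolynomial (Fin d) ℂ) :
    (lineP a b q).natDegree ≤ q.totalDegree := by
  unfold lineP
  rw [MvPolynomial.aeval_def, MvPolynomial.eval₂_eq]
  apply le_trans (Polynomial.natDegree_sum_le _ _)
  rw [Finset.fold_max_le]
  refine ⟨Nat.zero_le _, fun m hm => ?_⟩
  apply le_trans (Polynomial.natDegree_mul_le)
  have h1 : ((algebraMap ℂ ℂ[X]) (MvPolynomial.coeff m q)).natDegree = 0 := by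
    simp [Polynomial.algebraMap_eq]
  rw [h1, zero_add]
  apply le_trans (Polynomial.natDegree_prod_le _ _)
  have h2 : ∀ i ∈ m.support, ((Polynomial.C (a i) + Polynomial.C (b i) * Polynomial.X) ^ m i).natDegree ≤ m i := by
    intro i _
    apply le_trans (Polynomial.natDegree_pow_le)
    have hb : (Polynomial.C (a i) + Polynomial.C (b i) * Polynomial.X).natDegree ≤ 1 := by
      apply le_trans (Polynomial.natDegree_add_le _ _)
      simp only [Polynomial.natDegree_C, max_le_iff]
      exact ⟨Nat.zero_le _, le_trans (Polynomial.natDegree_mul_le) (by simp)⟩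
    calc m i * (Polynomial.C (a i) + Polynomial.C (b i) * Polynomial.X).natDegree ≤ m i * 1 :=
          Nat.mul_le_mul_left _ hb
      _ = m i := Nat.mul_one _
  apply le_trans (Finset.sum_le_sum h2)
  exact MvPolynomial.le_totalDegree hm

lemma eval_reflect' (f : ℂ[X]) (N : ℕ) (hf : f.natDegree ≤ N) (s : ℂ) (hs : s ≠ 0) :
    Polynomial.eval s (Polynomial.reflect N f) = s ^ N * Polynomial.eval s⁻¹ f := by
  have : Invertible s⁻¹ := invertibleOfNonzero (inv_ne_zero hs)
  have h := Polynomial.eval₂_reflect_mul_pow (RingHom.id ℂ) s⁻¹ N f hf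
  rw [invOf_eq_inv, inv_inv, Polynomial.eval₂_eq_eval_map, Polynomial.eval₂_eq_eval_map,
    Polynomial.map_id] at h
  simp only [Polynomial.map_id] at h
  have hsN : s ^ N * s⁻¹ ^ N = 1 := by rw [← mul_pow, mul_inv_cancel₀ hs, one_pow]
  linear_combination s ^ N * h - Polynomial.eval s (Polynomial.reflect N f) * hsN

lemma exists_eval_ne_zero_in_ball {d : ℕ} (Q : MvPolynomial (Fin d) ℂ) (hQ : Q ≠ 0)
    (R : ℝ) (hR : 0 < R) :
    ∃ z : EuclideanSpace ℂ (Fin d), ‖z‖ ≤ R ∧ MvPolynomial.eval (fun i => z i) Q ≠ 0 := by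
  obtain ⟨v, hv⟩ : ∃ v : Fin d → ℂ, MvPolynomial.eval v Q ≠ 0 := by
    by_contra hc
    push_neg at hc
    exact hQ (MvPolynomial.funext (q := 0) (by simpa using hc))
  set vE : EuclideanSpace ℂ (Fin d) := (WithLp.equiv 2 (Fin d → ℂ)).symm v with hvE
  have hvEi : ∀ i, vE i = v i := fun i => rfl
  set q : ℂ[X] := lineP 0 v Q with hq
  have hq1 : Polynomial.eval 1 q = MvPolynomial.eval v Q := by
    rw [hq, eval_lineP]
    have hfun : (fun i => (0 : Fin d → ℂ) i + v i * 1) = v := by funext i; simp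
    rw [hfun]
  have hqne : q ≠ 0 := by
    intro h; rw [h] at hq1; simp at hq1; exact hv hq1.symm
  set ε : ℝ := R / (‖vE‖ + 1) with hε
  have hεpos : 0 < ε := div_pos hR (by positivity)
  have hinf : (Set.Ioc (0:ℝ) ε).Infinite := Set.infinite_coe_iff.mp (Set.Ioc.infinite hεpos)
  have hinf2 : ((fun r : ℝ => (r : ℂ)) '' Set.Ioc 0 ε).Infinite :=
    hinf.image (Set.injOn_of_injective Complex.ofReal_injective)
  obtain ⟨tc, htc, hroots⟩ := hinf2.exists_notMem_finset q.roots.toFinset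
  obtain ⟨rr, hrr, hrrtc⟩ := htc
  have heval : Polynomial.eval tc q ≠ 0 := by
    intro h
    exact hroots (Multiset.mem_toFinset.2 ((Polynomial.mem_roots hqne).2 h))
  refine ⟨tc • vE, ?_, ?_⟩
  · have h1 : ‖tc • vE‖ = ‖tc‖ * ‖vE‖ := norm_smul tc vE
    have h2 : ‖tc‖ = rr := by
      rw [← hrrtc]
      simp [abs_of_pos hrr.1]
    rw [h1, h2]
    calc rr * ‖vE‖ ≤ ε * (‖vE‖ + 1) := by
          apply mul_le_mul hrr.2 (by linarith [norm_nonneg vE]) (norm_nonneg vE) (le_of_lt hεpos)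
      _ = R := by rw [hε]; field_simp
  · have h3 : (fun i => (tc • vE) i) = (fun i => (0 : Fin d → ℂ) i + v i * tc) := by
      funext i
      simp [hvEi i, mul_comm]
    rw [h3, ← eval_lineP, ← hq]
    exact heval

end Helpers


lemma global_max (d N : ℕ) (P : Fin N → MvPolynomial (Fin d) ℂ)
    (δ : Fin N → ℝ) (hδ : ∀ k, 0 < δ k) (R : ℝ) (hR : 0 < R)
    (hsum : ∑ k, δ k ^ 2 * ((P k).totalDegree : ℝ) ≤ R ^ 2)
    (F : EuclideanSpace ℂ (Fin d) → ℝ)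
    (hF : ∀ z, F z = Real.exp (-‖z‖ ^ 2 / 2) *
        ∏ k, ‖MvPolynomial.eval (fun i => z i) (P k)‖ ^ (δ k ^ 2))
    (CM : ℝ) (hCM : 0 < CM)
    (hmax : ∀ y : EuclideanSpace ℂ (Fin d), ‖y‖ ≤ R → F y ≤ CM) :
    ∀ z, F z ≤ CM := by
  intro z
  rcases le_or_gt ‖z‖ R with hle | hgt
  · exact hmax z hle
  by_cases hzero : ∀ k, MvPolynomial.eval (fun i => z i) (P k) ≠ 0
  swap
  · push_neg at hzero
    obtain ⟨k0, hk0⟩ := hzero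
    have : F z = 0 := by
      rw [hF]
      have : ∏ k, ‖MvPolynomial.eval (fun i => z i) (P k)‖ ^ (δ k ^ 2) = 0 := by
        apply Finset.prod_eq_zero (Finset.mem_univ k0)
        rw [hk0]
        simp [Real.zero_rpow (ne_of_gt (pow_pos (hδ k0) 2))]
      rw [this, mul_zero]
    rw [this]; exact le_of_lt hCM
  set r : ℝ := ‖z‖ with hr
  have hr0 : 0 < r := lt_trans hR hgt
  set p : Fin N → Polynomial ℂ := fun k => lineP 0 (fun i => z i) (P k) with hp
  have hpeval : ∀ (k : Fin N) (t : ℂ),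
      Polynomial.eval t (p k) = MvPolynomial.eval (fun i => (t • z) i) (P k) := by
    intro k t
    rw [hp, eval_lineP]
    have hfun : (fun i => (0 : Fin d → ℂ) i + z i * t) = (fun i => (t • z) i) := by
      funext i
      simp [mul_comm]
    rw [hfun]
  have hp1 : ∀ k, Polynomial.eval 1 (p k) = MvPolynomial.eval (fun i => z i) (P k) := by
    intro k
    rw [hpeval k 1, one_smul]
  set dk : Fin N → ℕ := fun k => (P k).totalDegree with hdk
  have hdeg : ∀ k, (p k).natDegree ≤ dk k := fun k => natDegree_lineP _ _ _
  set a : ℝ := R / r with ha'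
  set T : ℝ := r / R with hT'
  have ha : 0 < a := div_pos hR hr0
  have hT1 : 1 < T := (one_lt_div hR).2 hgt
  have hT0 : 0 < T := lt_trans one_pos hT1
  have haT : a = T⁻¹ := by rw [ha', hT']; field_simp
  have hBk : ∀ k : Fin N, ∃ B : ℝ, 1 ≤ B ∧ ∀ t : ℂ, ‖t‖ = a → ‖Polynomial.eval t (p k)‖ ≤ B := by
    intro k
    obtain ⟨C, hC⟩ := (isCompact_sphere (0:ℂ) a).exists_bound_of_continuousOn
      ((p k).continuous_aeval).continuousOn
    refine ⟨max 1 C, le_max_left _ _, fun t ht => ?_⟩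
    exact le_trans (hC t (by simp [Metric.mem_sphere, Complex.dist_eq, ht]))
      (le_max_right _ _)
  choose B hB1 hBb using hBk
  set κ : Fin N → ℝ := fun k => min 1 ‖Polynomial.eval 1 (p k)‖ with hκ
  have hbn : ∀ k, 0 < ‖Polynomial.eval 1 (p k)‖ := by
    intro k
    rw [hp1 k, norm_pos_iff]
    exact hzero k
  have hκpos : ∀ k, 0 < κ k := fun k => lt_min one_pos (hbn k)
  set x : ℝ := ∏ k, ‖Polynomial.eval 1 (p k)‖ ^ (δ k ^ 2) with hx'
  set D : ℝ := ∑ k, δ k ^ 2 * (dk k : ℝ) with hD'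
  have hDnn : 0 ≤ D := Finset.sum_nonneg fun k _ => by positivity
  set y : ℝ := T ^ D * (CM * Real.exp (R ^ 2 / 2)) with hy'
  set K : ℝ := (T ^ ((∑ k, dk k : ℕ) : ℝ) * ∏ k, B k) / ∏ k, κ k with hK'
  have hxpos : 0 < x := Finset.prod_pos fun k _ => Real.rpow_pos_of_pos (hbn k) _
  have hypos : 0 < y := by
    apply mul_pos (Real.rpow_pos_of_pos hT0 D)
    exact mul_pos hCM (Real.exp_pos _)
  have hκppos : 0 < ∏ k, κ k := Finset.prod_pos fun k _ => hκpos k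
  have hBppos : 0 < ∏ k, B k := Finset.prod_pos fun k _ => lt_of_lt_of_le one_pos (hB1 k)
  have hKpos : 0 < K := div_pos (mul_pos (Real.rpow_pos_of_pos hT0 _) hBppos) hκppos
  have key : ∀ L : ℕ, 1 ≤ L → x ^ L ≤ y ^ L * K := by
    intro L hL
    set m : Fin N → ℕ := fun k => ⌈(L : ℝ) * δ k ^ 2⌉₊ with hm
    set f : ℂ → ℂ := fun s => ∏ k, (Polynomial.eval s (Polynomial.reflect (dk k) (p k))) ^ (m k)
      with hf'
    have hdiff : Differentiable ℂ f := by
      apply Differentiable.fun_finset_prod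
      intro k _
      exact (Polynomial.differentiable _).fun_pow _
    set C : ℝ := T ^ (∑ k, m k * dk k) * ((CM * Real.exp (R ^ 2 / 2)) ^ L * ∏ k, B k) with hC'
    have hCb : ∀ s : ℂ, ‖s‖ = T → ‖f s‖ ≤ C := by
      intro s hs
      have hs0 : s ≠ 0 := by
        intro h
        rw [h, norm_zero] at hs
        linarith
      have hts : ‖s⁻¹‖ = a := by rw [norm_inv, hs, haT]
      have hszR : ‖s⁻¹ • z‖ = R := by
        rw [norm_smul, hts, ha']
        field_simp; exact hr.symm
      have hfs : ‖f s‖ = T ^ (∑ k, m k * dk k) * ∏ k, ‖Polynomial.eval s⁻¹ (p k)‖ ^ (m k) := by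
        rw [hf']
        simp only [norm_prod, norm_pow]
        have : ∀ k : Fin N, ‖Polynomial.eval s (Polynomial.reflect (dk k) (p k))‖
            = T ^ (dk k) * ‖Polynomial.eval s⁻¹ (p k)‖ := by
          intro k
          rw [eval_reflect' (p k) (dk k) (hdeg k) s hs0, norm_mul, norm_pow, hs]
        calc ∏ k, ‖Polynomial.eval s (Polynomial.reflect (dk k) (p k))‖ ^ m k
            = ∏ k, (T ^ (dk k) * ‖Polynomial.eval s⁻¹ (p k)‖) ^ m k := by
              apply Finset.prod_congr rfl
              intro k _
              rw [this k]
          _ = (∏ k, (T ^ (dk k)) ^ m k) * ∏ k, ‖Polynomial.eval s⁻¹ (p k)‖ ^ m k := by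
              rw [← Finset.prod_mul_distrib]
              apply Finset.prod_congr rfl
              intro k _
              rw [mul_pow]
          _ = T ^ (∑ k, m k * dk k) * ∏ k, ‖Polynomial.eval s⁻¹ (p k)‖ ^ m k := by
              congr 1
              rw [← Finset.prod_pow_eq_pow_sum]
              apply Finset.prod_congr rfl
              intro k _
              rw [← pow_mul, mul_comm (m k) (dk k)]
      rw [hfs, hC']
      apply mul_le_mul_of_nonneg_left _ (by positivity)
      have hstep : ∏ k, ‖Polynomial.eval s⁻¹ (p k)‖ ^ (m k)
          ≤ (∏ k, ‖Polynomial.eval s⁻¹ (p k)‖ ^ (δ k ^ 2)) ^ L * ∏ k, B k := by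
        rw [← Finset.prod_pow, ← Finset.prod_mul_distrib]
        apply Finset.prod_le_prod (fun k _ => by positivity)
        intro k _
        rw [← Real.rpow_natCast (‖Polynomial.eval s⁻¹ (p k)‖) (m k), hm]
        exact rpow_nat_ceil_le (norm_nonneg _) (hB1 k) (hBb k s⁻¹ hts) (pow_pos (hδ k) 2) L hL
      apply le_trans hstep
      apply mul_le_mul_of_nonneg_right _ (le_of_lt hBppos)
      apply pow_le_pow_left₀ (Finset.prod_nonneg fun k _ => Real.rpow_nonneg (norm_nonneg _) _)
      have hFs := hF (s⁻¹ • z)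
      have hprod : ∏ k, ‖Polynomial.eval s⁻¹ (p k)‖ ^ (δ k ^ 2)
          = F (s⁻¹ • z) * Real.exp (R ^ 2 / 2) := by
        rw [hFs, hszR]
        rw [mul_comm (Real.exp (-R ^ 2 / 2)) _, mul_assoc, ← Real.exp_add]
        have : -R ^ 2 / 2 + R ^ 2 / 2 = 0 := by ring
        rw [this, Real.exp_zero, mul_one]
        apply Finset.prod_congr rfl
        intro k _
        rw [hpeval k s⁻¹]
      rw [hprod]
      apply mul_le_mul_of_nonneg_right _ (le_of_lt (Real.exp_pos _))
      exact hmax _ (le_of_eq hszR)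
    have h1 := maxmod f f hdiff 0 (by intro t; rw [pow_zero, one_mul]) T (le_of_lt hT1) C hCb
    rw [pow_zero, mul_one] at h1
    have hflow : x ^ L * ∏ k, κ k ≤ ‖f 1‖ := by
      have hf1 : ‖f 1‖ = ∏ k, ‖Polynomial.eval 1 (p k)‖ ^ (m k) := by
        rw [hf']
        simp only [norm_prod, norm_pow]
        apply Finset.prod_congr rfl
        intro k _
        rw [eval_reflect' (p k) (dk k) (hdeg k) 1 one_ne_zero, inv_one, one_pow, one_mul]
      rw [hf1, hx', ← Finset.prod_pow, ← Finset.prod_mul_distrib]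
      apply Finset.prod_le_prod
      · intro k _
        positivity
      · intro k _
        rw [← Real.rpow_natCast (‖Polynomial.eval 1 (p k)‖) (m k), hm, hκ]
        exact rpow_nat_ceil_ge (hbn k) (pow_pos (hδ k) 2) L hL
    have hTm : (T : ℝ) ^ (∑ k, m k * dk k) ≤ (T ^ D) ^ L * T ^ ((∑ k, dk k : ℕ) : ℝ) := by
      have hc1 : ((∑ k, m k * dk k : ℕ) : ℝ) ≤ (L : ℝ) * D + ((∑ k, dk k : ℕ) : ℝ) := by
        push_cast
        rw [hD', Finset.mul_sum, ← Finset.sum_add_distrib]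
        apply Finset.sum_le_sum
        intro k _
        have : ((⌈(L : ℝ) * δ k ^ 2⌉₊ : ℕ) : ℝ) ≤ (L : ℝ) * δ k ^ 2 + 1 :=
          le_of_lt (Nat.ceil_lt_add_one (by positivity))
        have hd0 : (0:ℝ) ≤ ((dk k : ℕ) : ℝ) := Nat.cast_nonneg _
        nlinarith [this, hd0]
      calc (T : ℝ) ^ (∑ k, m k * dk k) = T ^ (((∑ k, m k * dk k : ℕ)) : ℝ) := by
            rw [Real.rpow_natCast]
        _ ≤ T ^ ((L : ℝ) * D + ((∑ k, dk k : ℕ) : ℝ)) :=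
            Real.rpow_le_rpow_of_exponent_le (le_of_lt hT1) hc1
        _ = (T ^ D) ^ L * T ^ ((∑ k, dk k : ℕ) : ℝ) := by
            rw [Real.rpow_add hT0]
            congr 1
            rw [mul_comm, Real.rpow_mul (le_of_lt hT0), Real.rpow_natCast]
    have hchain : x ^ L * ∏ k, κ k ≤ (T ^ D) ^ L * T ^ ((∑ k, dk k : ℕ) : ℝ)
        * ((CM * Real.exp (R ^ 2 / 2)) ^ L * ∏ k, B k) := by
      calc x ^ L * ∏ k, κ k ≤ ‖f 1‖ := hflow
        _ ≤ C := h1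
        _ ≤ (T ^ D) ^ L * T ^ ((∑ k, dk k : ℕ) : ℝ) * ((CM * Real.exp (R ^ 2 / 2)) ^ L * ∏ k, B k) := by
            rw [hC']
            apply mul_le_mul_of_nonneg_right hTm (by positivity)
    apply le_of_mul_le_mul_right _ hκppos
    calc x ^ L * ∏ k, κ k
        ≤ (T ^ D) ^ L * T ^ ((∑ k, dk k : ℕ) : ℝ) * ((CM * Real.exp (R ^ 2 / 2)) ^ L * ∏ k, B k) :=
          hchain
      _ = y ^ L * K * ∏ k, κ k := by
          rw [hy', hK', mul_pow]
          field_simp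
          ring
  have hxy : x ≤ y := le_of_pow_le_pow_mul' hypos hKpos key
  have hFz : F z = Real.exp (-r ^ 2 / 2) * x := by
    rw [hF z, hx']
    congr 1
    apply Finset.prod_congr rfl
    intro k _
    rw [hp1 k]
  rw [hFz]
  have hfinal : Real.exp (-r ^ 2 / 2) * y ≤ CM := by
    rw [hy']
    have hD2 : D ≤ R ^ 2 := by
      rw [hD']
      exact hsum
    have hlogT : 0 ≤ Real.log T := Real.log_nonneg (le_of_lt hT1)
    have hDlog : D * Real.log T ≤ (r ^ 2 - R ^ 2) / 2 := by
      have h1 : D * Real.log T ≤ R ^ 2 * Real.log T :=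
        mul_le_mul_of_nonneg_right hD2 hlogT
      have h2 : Real.log (T ^ 2) ≤ T ^ 2 - 1 := Real.log_le_sub_one_of_pos (by positivity)
      have h3 : Real.log (T ^ 2) = 2 * Real.log T := by
        rw [Real.log_pow]
        push_cast
        ring
      have hRT : R ^ 2 * T ^ 2 = r ^ 2 := by
        rw [hT']
        field_simp
      have h5 : R ^ 2 * Real.log (T ^ 2) ≤ R ^ 2 * (T ^ 2 - 1) :=
        mul_le_mul_of_nonneg_left h2 (sq_nonneg R)
      rw [h3] at h5
      have h6 : R ^ 2 * (T ^ 2 - 1) = r ^ 2 - R ^ 2 := by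
        rw [mul_sub, hRT]
        ring
      rw [h6] at h5
      linarith
    have hTD : T ^ D = Real.exp (D * Real.log T) := by
      rw [Real.rpow_def_of_pos hT0, mul_comm]
    rw [hTD]
    have hcomb : Real.exp (-r ^ 2 / 2) * (Real.exp (D * Real.log T) * (CM * Real.exp (R ^ 2 / 2)))
        = CM * Real.exp (-r ^ 2 / 2 + D * Real.log T + R ^ 2 / 2) := by
      rw [Real.exp_add, Real.exp_add]
      ring
    rw [hcomb]
    have hle1 : Real.exp (-r ^ 2 / 2 + D * Real.log T + R ^ 2 / 2) ≤ 1 := by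
      rw [Real.exp_le_one_iff]
      linarith
    calc CM * Real.exp (-r ^ 2 / 2 + D * Real.log T + R ^ 2 / 2) ≤ CM * 1 :=
          mul_le_mul_of_nonneg_left hle1 (le_of_lt hCM)
      _ = CM := mul_one CM
  calc Real.exp (-r ^ 2 / 2) * x ≤ Real.exp (-r ^ 2 / 2) * y :=
        mul_le_mul_of_nonneg_left hxy (le_of_lt (Real.exp_pos _))
    _ ≤ CM := hfinal


set_option maxHeartbeats 3200000 in
theorem complex_polynomial_plank_max_avoids_common_zeros
    (d N : ℕ) (P : Fin N → MvPolynomial (Fin d) ℂ)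
    (hP : ∀ k, P k ≠ 0)
    (δ : Fin N → ℝ) (hδ : ∀ k, 0 < δ k) (R : ℝ)
    (hsum : ∑ k, δ k ^ 2 * ((P k).totalDegree : ℝ) ≤ R ^ 2)
    (F : EuclideanSpace ℂ (Fin d) → ℝ)
    (hF : ∀ z, F z = Real.exp (-‖z‖ ^ 2 / 2) *
        ∏ k, ‖MvPolynomial.eval (fun i => z i) (P k)‖ ^ (δ k ^ 2))
    (z_M : EuclideanSpace ℂ (Fin d))
    (hz_M : z_M ∈ Metric.closedBall (0 : EuclideanSpace ℂ (Fin d)) R)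
    (hmax : ∀ w ∈ Metric.closedBall (0 : EuclideanSpace ℂ (Fin d)) R, F w ≤ F z_M) :
    ∀ S : Finset (Fin N), ∀ w : EuclideanSpace ℂ (Fin d),
      (∀ k ∈ S, MvPolynomial.eval (fun i => w i) (P k) = 0) →
        Real.sqrt (∑ k ∈ S, δ k ^ 2) ≤ dist z_M w := by
  intro S w hw
  rcases S.eq_empty_or_nonempty with hS | hS
  · rw [hS]
    simp [Real.sqrt_zero, dist_nonneg]
  rcases lt_trichotomy R 0 with hR | hR | hR
  · exfalso
    rw [Metric.closedBall_eq_empty.2 hR] at hz_M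
    exact hz_M
  · -- R = 0 : all polynomials are nonzero constants, contradiction with common zero
    exfalso
    obtain ⟨k0, hk0⟩ := hS
    have hterm : ∀ k ∈ Finset.univ, (0:ℝ) ≤ δ k ^ 2 * ((P k).totalDegree : ℝ) :=
      fun k _ => by positivity
    have hsum0 : ∑ k, δ k ^ 2 * ((P k).totalDegree : ℝ) ≤ 0 := by
      rw [hR] at hsum
      simpa using hsum
    have hterm0 : δ k0 ^ 2 * ((P k0).totalDegree : ℝ) = 0 := by
      have h1 := Finset.single_le_sum hterm (Finset.mem_univ k0)
      have h2 := hterm k0 (Finset.mem_univ k0)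
      have h3 := Finset.sum_nonneg hterm
      linarith
    have hdeg0 : (P k0).totalDegree = 0 := by
      have hδ2 : (0:ℝ) < δ k0 ^ 2 := pow_pos (hδ k0) 2
      have : ((P k0).totalDegree : ℝ) = 0 := by
        by_contra hc
        have hpos : (0:ℝ) < ((P k0).totalDegree : ℝ) :=
          lt_of_le_of_ne (Nat.cast_nonneg _) (Ne.symm hc)
        nlinarith
      exact_mod_cast this
    have hsuppne : (P k0).support.Nonempty := by
      rw [Finset.nonempty_iff_ne_empty, Ne, MvPolynomial.support_eq_empty]
      exact hP k0
    have hsupp : (P k0).support = {0} := by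
      rw [← Finset.Nonempty.subset_singleton_iff hsuppne]
      intro m hm
      rw [Finset.mem_singleton]
      ext x
      exact (MvPolynomial.totalDegree_eq_zero_iff _ (P k0)).1 hdeg0 m hm x
    have heval : MvPolynomial.eval (fun i => w i) (P k0) = MvPolynomial.coeff 0 (P k0) := by
      rw [MvPolynomial.eval_eq, hsupp]
      simp
    have hc0 : MvPolynomial.coeff 0 (P k0) ≠ 0 := by
      rw [← MvPolynomial.mem_support_iff, hsupp]
      exact Finset.mem_singleton_self 0
    exact hc0 (heval ▸ hw k0 hk0)
  · -- main case R > 0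
    have hQ : (∏ k, P k) ≠ 0 := Finset.prod_ne_zero_iff.2 fun k _ => hP k
    obtain ⟨z₀, hz₀R, hz₀⟩ := exists_eval_ne_zero_in_ball (∏ k, P k) hQ R hR
    have hz₀k : ∀ k, MvPolynomial.eval (fun i => z₀ i) (P k) ≠ 0 := by
      intro k hk
      apply hz₀
      rw [map_prod]
      exact Finset.prod_eq_zero (Finset.mem_univ k) hk
    have hFz₀ : 0 < F z₀ := by
      rw [hF]
      apply mul_pos (Real.exp_pos _)
      exact Finset.prod_pos fun k _ =>
        Real.rpow_pos_of_pos (norm_pos_iff.2 (hz₀k k)) _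
    have hCM : 0 < F z_M :=
      lt_of_lt_of_le hFz₀ (hmax z₀ (mem_closedBall_zero_iff.2 hz₀R))
    have haM : ∀ k, MvPolynomial.eval (fun i => z_M i) (P k) ≠ 0 := by
      intro k hk
      have hzero : F z_M = 0 := by
        rw [hF]
        have : ∏ j, ‖MvPolynomial.eval (fun i => z_M i) (P j)‖ ^ (δ j ^ 2) = 0 := by
          apply Finset.prod_eq_zero (Finset.mem_univ k)
          rw [hk]
          simp [Real.zero_rpow (ne_of_gt (pow_pos (hδ k) 2))]
        rw [this, mul_zero]
      linarith
    have hmax' : ∀ y : EuclideanSpace ℂ (Fin d), ‖y‖ ≤ R → F y ≤ F z_M :=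
      fun y hy => hmax y (mem_closedBall_zero_iff.2 hy)
    have hglobal : ∀ z, F z ≤ F z_M :=
      global_max d N P δ hδ R hR hsum F hF (F z_M) hCM hmax'
    -- line setup
    set ξ : EuclideanSpace ℂ (Fin d) := z_M - w with hξ
    have hwξ : w + ξ = z_M := by rw [hξ]; abel
    have hξne : ξ ≠ 0 := by
      intro h
      have hzw : z_M = w := by
        have := hwξ
        rw [h, add_zero] at this
        exact this.symm
      obtain ⟨k0, hk0⟩ := hS
      exact haM k0 (by rw [hzw]; exact hw k0 hk0)
    set ρ : ℝ := ‖ξ‖ with hρ'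
    have hρ : 0 < ρ := norm_pos_iff.2 hξne
    set σ : ℝ := ∑ k ∈ S, δ k ^ 2 with hσ'
    have hσpos : 0 < σ := Finset.sum_pos (fun k _ => pow_pos (hδ k) 2) hS
    set c : ℂ := inner ℂ w ξ with hc'
    set q : Fin N → Polynomial ℂ := fun k => lineP (fun i => w i) (fun i => ξ i) (P k) with hq'
    have hqeval : ∀ (k : Fin N) (t : ℂ),
        Polynomial.eval t (q k) = MvPolynomial.eval (fun i => (w + t • ξ) i) (P k) := by
      intro k t
      rw [hq', eval_lineP]
      have hfun : (fun i => w i + ξ i * t) = (fun i => (w + t • ξ) i) := by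
        funext i
        simp [mul_comm]
      rw [hfun]
    have hq1 : ∀ k, Polynomial.eval 1 (q k) = MvPolynomial.eval (fun i => z_M i) (P k) := by
      intro k
      rw [hqeval k 1, one_smul, hwξ]
    have hq0 : ∀ k ∈ S, Polynomial.eval 0 (q k) = 0 := by
      intro k hk
      rw [hqeval k 0, zero_smul, add_zero]
      exact hw k hk
    have hbn : ∀ k, 0 < ‖Polynomial.eval 1 (q k)‖ := by
      intro k
      rw [hq1 k, norm_pos_iff]
      exact haM k
    -- F along the line
    have hFline : ∀ t : ℂ,
        Real.exp (-(t * c).re) * ∏ k, ‖Polynomial.eval t (q k)‖ ^ (δ k ^ 2)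
          = F (w + t • ξ) * Real.exp ((‖w‖ ^ 2 + ‖t‖ ^ 2 * ρ ^ 2) / 2) := by
      intro t
      have hnorm : ‖w + t • ξ‖ ^ 2 = ‖w‖ ^ 2 + 2 * (t * c).re + ‖t‖ ^ 2 * ρ ^ 2 := by
        rw [norm_add_sq (𝕜 := ℂ), inner_smul_right, norm_smul]
        simp only [RCLike.re_to_complex, ← hc', ← hρ']
        ring
      rw [hF (w + t • ξ), hnorm]
      have hprodeq : ∏ k, ‖MvPolynomial.eval (fun i => (w + t • ξ) i) (P k)‖ ^ (δ k ^ 2)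
          = ∏ k, ‖Polynomial.eval t (q k)‖ ^ (δ k ^ 2) := by
        apply Finset.prod_congr rfl
        intro k _
        rw [hqeval k t]
      rw [hprodeq]
      have hee : Real.exp (-(‖w‖ ^ 2 + 2 * (t * c).re + ‖t‖ ^ 2 * ρ ^ 2) / 2) *
          Real.exp ((‖w‖ ^ 2 + ‖t‖ ^ 2 * ρ ^ 2) / 2) = Real.exp (-(t * c).re) := by
        rw [← Real.exp_add]
        congr 1
        ring
      rw [← hee]
      ring
    -- the key inequality for every T > 1
    have hTineq : ∀ T : ℝ, 1 < T → σ * Real.log T ≤ (T ^ 2 - 1) * ρ ^ 2 / 2 := by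
      intro T hT1
      have hT0 : (0:ℝ) < T := lt_trans one_pos hT1
      have hBk : ∀ k : Fin N, ∃ B : ℝ, 1 ≤ B ∧
          ∀ t : ℂ, ‖t‖ = T → ‖Polynomial.eval t (q k)‖ ≤ B := by
        intro k
        obtain ⟨C, hC⟩ := (isCompact_sphere (0:ℂ) T).exists_bound_of_continuousOn
          ((q k).continuous_aeval).continuousOn
        refine ⟨max 1 C, le_max_left _ _, fun t ht => ?_⟩
        exact le_trans (hC t (by simp [Metric.mem_sphere, Complex.dist_eq,
          ht])) (le_max_right _ _)
      choose B hB1 hBb using hBk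
      set κ : Fin N → ℝ := fun k => min 1 ‖Polynomial.eval 1 (q k)‖ with hκ
      have hκpos : ∀ k, 0 < κ k := fun k => lt_min one_pos (hbn k)
      have hκppos : 0 < ∏ k, κ k := Finset.prod_pos fun k _ => hκpos k
      have hBppos : 0 < ∏ k, B k := Finset.prod_pos fun k _ =>
        lt_of_lt_of_le one_pos (hB1 k)
      have hXdvd : ∀ k ∈ S, q k = Polynomial.X * (q k).divX := by
        intro k hk
        have h0 : (q k).coeff 0 = 0 := by
          rw [Polynomial.coeff_zero_eq_eval_zero]
          exact hq0 k hk
        conv_lhs => rw [← Polynomial.X_mul_divX_add (q k)]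
        rw [h0, map_zero, add_zero]
      set A : ℝ := F z_M * Real.exp ((‖w‖ ^ 2 + ρ ^ 2) / 2) with hA'
      have hApos : 0 < A := mul_pos hCM (Real.exp_pos _)
      set x : ℝ := A * T ^ σ with hx'
      set y : ℝ := F z_M * Real.exp ((‖w‖ ^ 2 + T ^ 2 * ρ ^ 2) / 2) with hy'
      have hypos : 0 < y := mul_pos hCM (Real.exp_pos _)
      set K : ℝ := (∏ k, B k) / ∏ k, κ k with hK'
      have hKpos : 0 < K := div_pos hBppos hκppos
      have key : ∀ L : ℕ, 1 ≤ L → x ^ L ≤ y ^ L * K := by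
        intro L hL
        set m : Fin N → ℕ := fun k => ⌈(L : ℝ) * δ k ^ 2⌉₊ with hm
        set M : ℕ := ∑ k ∈ S, m k with hM
        set f : ℂ → ℂ := fun t =>
          Complex.exp (-((L : ℂ) * c * t)) * ∏ k, (Polynomial.eval t (q k)) ^ (m k) with hf'
        set g : ℂ → ℂ := fun t =>
          Complex.exp (-((L : ℂ) * c * t)) *
            ((∏ k ∈ S, (Polynomial.eval t ((q k).divX)) ^ (m k)) *
              ∏ k ∈ Sᶜ, (Polynomial.eval t (q k)) ^ (m k)) with hg'
        have hexp : ∀ t : ℂ,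
            ‖Complex.exp (-((L : ℂ) * c * t))‖ = (Real.exp (-(t * c).re)) ^ L := by
          intro t
          rw [Complex.norm_exp, ← Real.exp_nat_mul]
          congr 1
          have : (-((L : ℂ) * c * t)).re = (L : ℝ) * (-(t * c).re) := by
            simp only [Complex.neg_re, Complex.mul_re, Complex.mul_im, Complex.natCast_re,
              Complex.natCast_im]
            ring
          rw [this]
        have hfg : ∀ t : ℂ, f t = t ^ M * g t := by
          intro t
          have hSprod : ∏ k ∈ S, (Polynomial.eval t (q k)) ^ (m k)
              = t ^ M * ∏ k ∈ S, (Polynomial.eval t ((q k).divX)) ^ (m k) := by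
            rw [hM, ← Finset.prod_pow_eq_pow_sum, ← Finset.prod_mul_distrib]
            apply Finset.prod_congr rfl
            intro k hk
            conv_lhs => rw [hXdvd k hk]
            rw [Polynomial.eval_mul, Polynomial.eval_X, mul_pow]
          calc f t = Complex.exp (-((L : ℂ) * c * t)) *
              ((∏ k ∈ S, (Polynomial.eval t (q k)) ^ (m k)) *
               ∏ k ∈ Sᶜ, (Polynomial.eval t (q k)) ^ (m k)) := by
                rw [hf', Finset.prod_mul_prod_compl S (fun k => (Polynomial.eval t (q k)) ^ (m k))]
            _ = t ^ M * g t := by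
                rw [hSprod, hg']
                ring
        have hdiffg : Differentiable ℂ g := by
          apply Differentiable.mul
          · apply Differentiable.cexp
            apply Differentiable.neg
            exact (differentiable_id.const_mul ((L : ℂ) * c))
          · apply Differentiable.mul
            · exact Differentiable.fun_finset_prod fun k _ => (Polynomial.differentiable _).fun_pow _
            · exact Differentiable.fun_finset_prod fun k _ => (Polynomial.differentiable _).fun_pow _
        set Cv : ℝ := y ^ L * ∏ k, B k with hCv'
        have hCb : ∀ t : ℂ, ‖t‖ = T → ‖f t‖ ≤ Cv := by
          intro t ht
          rw [hf']
          simp only [norm_mul, norm_prod, norm_pow]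
          rw [hexp t]
          have hstep : ∏ k, ‖Polynomial.eval t (q k)‖ ^ (m k)
              ≤ (∏ k, ‖Polynomial.eval t (q k)‖ ^ (δ k ^ 2)) ^ L * ∏ k, B k := by
            rw [← Finset.prod_pow, ← Finset.prod_mul_distrib]
            apply Finset.prod_le_prod (fun k _ => by positivity)
            intro k _
            rw [← Real.rpow_natCast (‖Polynomial.eval t (q k)‖) (m k), hm]
            exact rpow_nat_ceil_le (norm_nonneg _) (hB1 k) (hBb k t ht)
              (pow_pos (hδ k) 2) L hL
          calc (Real.exp (-(t * c).re)) ^ L * ∏ k, ‖Polynomial.eval t (q k)‖ ^ (m k)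
              ≤ (Real.exp (-(t * c).re)) ^ L *
                ((∏ k, ‖Polynomial.eval t (q k)‖ ^ (δ k ^ 2)) ^ L * ∏ k, B k) :=
                mul_le_mul_of_nonneg_left hstep (by positivity)
            _ = (Real.exp (-(t * c).re) * ∏ k, ‖Polynomial.eval t (q k)‖ ^ (δ k ^ 2)) ^ L
                * ∏ k, B k := by
                rw [mul_pow, mul_assoc]
            _ ≤ y ^ L * ∏ k, B k := by
                apply mul_le_mul_of_nonneg_right _ (le_of_lt hBppos)
                apply pow_le_pow_left₀ (by positivity)
                rw [hFline t, ht]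
                rw [hy']
                apply mul_le_mul_of_nonneg_right (hglobal _) (le_of_lt (Real.exp_pos _))
        have h1 := maxmod f g hdiffg M hfg T (le_of_lt hT1) Cv hCb
        have hflow : A ^ L * ∏ k, κ k ≤ ‖f 1‖ := by
          rw [hf']
          simp only [norm_mul, norm_prod, norm_pow]
          rw [hexp 1]
          have hA2 : A = Real.exp (-((1:ℂ) * c).re) *
              ∏ k, ‖Polynomial.eval 1 (q k)‖ ^ (δ k ^ 2) := by
            have h2 := hFline 1
            rw [one_smul, hwξ, norm_one, one_pow] at h2
            have h3 : (‖w‖ ^ 2 + 1 * ρ ^ 2) / 2 = (‖w‖ ^ 2 + ρ ^ 2) / 2 := by ring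
            rw [h3] at h2
            rw [hA', ← h2]
          rw [hA2, mul_pow, mul_assoc]
          apply mul_le_mul_of_nonneg_left _ (by positivity)
          have hstep2 : (∏ k, ‖Polynomial.eval 1 (q k)‖ ^ (δ k ^ 2)) ^ L * ∏ k, κ k
              ≤ ∏ k, ‖Polynomial.eval 1 (q k)‖ ^ (m k) := by
            rw [← Finset.prod_pow, ← Finset.prod_mul_distrib]
            apply Finset.prod_le_prod
            · intro k _
              positivity
            · intro k _
              rw [← Real.rpow_natCast (‖Polynomial.eval 1 (q k)‖) (m k), hm, hκ]
              exact rpow_nat_ceil_ge (hbn k) (pow_pos (hδ k) 2) L hL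
          exact hstep2
        have hTM : ((T ^ σ) ^ L : ℝ) ≤ T ^ M := by
          have hMσ : (L : ℝ) * σ ≤ (M : ℕ) := by
            rw [hM, hσ']
            push_cast
            rw [Finset.mul_sum]
            apply Finset.sum_le_sum
            intro k hk
            exact Nat.le_ceil _
          calc ((T ^ σ) ^ L : ℝ) = T ^ (σ * (L:ℝ)) := by
                rw [← Real.rpow_natCast (T ^ σ) L, ← Real.rpow_mul (le_of_lt hT0)]
            _ ≤ T ^ ((M : ℕ) : ℝ) := by
                apply Real.rpow_le_rpow_of_exponent_le (le_of_lt hT1)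
                rw [mul_comm]
                exact hMσ
            _ = T ^ (M : ℕ) := Real.rpow_natCast T M
        have hchain : x ^ L * ∏ k, κ k ≤ y ^ L * ∏ k, B k := by
          calc x ^ L * ∏ k, κ k = (A ^ L * ∏ k, κ k) * (T ^ σ) ^ L := by
                rw [hx', mul_pow]
                ring
            _ ≤ ‖f 1‖ * T ^ M := by
                apply mul_le_mul hflow hTM (by positivity)
                exact norm_nonneg _
            _ ≤ Cv := h1
            _ = y ^ L * ∏ k, B k := hCv'
        apply le_of_mul_le_mul_right _ hκppos
        calc x ^ L * ∏ k, κ k ≤ y ^ L * ∏ k, B k := hchain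
          _ = y ^ L * K * ∏ k, κ k := by
              rw [hK']
              field_simp
      have hxy : x ≤ y := le_of_pow_le_pow_mul' hypos hKpos key
      have hTσ : T ^ σ ≤ Real.exp ((T ^ 2 * ρ ^ 2 - ρ ^ 2) / 2) := by
        have hyA : y = A * Real.exp ((T ^ 2 * ρ ^ 2 - ρ ^ 2) / 2) := by
          rw [hy', hA', mul_assoc, ← Real.exp_add]
          congr 2
          ring
        rw [hx', hyA] at hxy
        exact le_of_mul_le_mul_left hxy hApos
      have hlog : Real.log (T ^ σ) ≤ Real.log (Real.exp ((T ^ 2 * ρ ^ 2 - ρ ^ 2) / 2)) :=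
        Real.log_le_log (Real.rpow_pos_of_pos hT0 σ) hTσ
      rw [Real.log_rpow hT0, Real.log_exp] at hlog
      have heq2 : (T ^ 2 - 1) * ρ ^ 2 / 2 = (T ^ 2 * ρ ^ 2 - ρ ^ 2) / 2 := by ring
      rw [heq2]
      exact hlog
    -- pass to the limit T → 1⁺
    have hσρ : σ ≤ ρ ^ 2 := by
      by_contra hcon
      push_neg at hcon
      set ε : ℝ := min 1 ((σ - ρ ^ 2) / (2 * ρ ^ 2 + 1)) with hε'
      have hρ2 : (0:ℝ) ≤ ρ ^ 2 := sq_nonneg ρ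
      have hεpos : 0 < ε := lt_min one_pos (div_pos (by linarith) (by positivity))
      have hε1 : ε ≤ 1 := min_le_left _ _
      have hε2 : ε ≤ (σ - ρ ^ 2) / (2 * ρ ^ 2 + 1) := min_le_right _ _
      have hT1 : 1 < 1 + ε := by linarith
      have hlogl : ε / (1 + ε) ≤ Real.log (1 + ε) := by
        have hyp : Real.exp (ε / (1 + ε)) ≤ 1 + ε := by
          have h1 := Real.add_one_le_exp (-(ε / (1 + ε)))
          have h2 : 1 - ε / (1 + ε) = 1 / (1 + ε) := by
            field_simp; ring
          have h3 : (1:ℝ) / (1 + ε) ≤ Real.exp (-(ε / (1 + ε))) := by linarith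
          rw [Real.exp_neg] at h3
          have h4 : 0 < Real.exp (ε / (1 + ε)) := Real.exp_pos _
          have h6 : Real.exp (ε / (1 + ε)) * (1 / (1 + ε))
              ≤ Real.exp (ε / (1 + ε)) * (Real.exp (ε / (1 + ε)))⁻¹ :=
            mul_le_mul_of_nonneg_left h3 (le_of_lt h4)
          rw [mul_inv_cancel₀ (ne_of_gt h4)] at h6
          have h7 := mul_le_mul_of_nonneg_right h6 (show (0:ℝ) ≤ 1 + ε by linarith)
          have h8 : Real.exp (ε / (1 + ε)) * (1 / (1 + ε)) * (1 + ε)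
              = Real.exp (ε / (1 + ε)) := by
            field_simp
          rw [h8, one_mul] at h7
          exact h7
        exact (Real.le_log_iff_exp_le (by linarith)).2 hyp
      have hineq := hTineq (1 + ε) hT1
      have hσε : σ * (ε / (1 + ε)) ≤ ((1 + ε) ^ 2 - 1) * ρ ^ 2 / 2 := by
        apply le_trans _ hineq
        apply mul_le_mul_of_nonneg_left hlogl (le_of_lt hσpos)
      have hmain : σ * ε ≤ ρ ^ 2 * ε * (1 + ε / 2) * (1 + ε) := by
        have h5 : ((1 + ε) ^ 2 - 1) * ρ ^ 2 / 2 = ρ ^ 2 * ε * (1 + ε / 2) := by ring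
        rw [h5] at hσε
        have h6 : 0 < 1 + ε := by linarith
        rw [div_eq_mul_inv, ← mul_assoc] at hσε
        calc σ * ε = σ * ε * (1 + ε)⁻¹ * (1 + ε) := by
              field_simp
          _ ≤ ρ ^ 2 * ε * (1 + ε / 2) * (1 + ε) := by
              apply mul_le_mul_of_nonneg_right hσε (by linarith)
      have hfin : σ ≤ ρ ^ 2 * (1 + 2 * ε) := by
        have h7 : ρ ^ 2 * ε * (1 + ε / 2) * (1 + ε) ≤ ρ ^ 2 * (1 + 2 * ε) * ε := by
          have hkey : (0:ℝ) ≤ ρ ^ 2 * (ε * ε) * (1 - ε) :=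
            mul_nonneg (mul_nonneg hρ2 (mul_self_nonneg ε)) (by linarith)
          nlinarith [hkey]
        have h8 : σ * ε ≤ ρ ^ 2 * (1 + 2 * ε) * ε := le_trans hmain h7
        exact le_of_mul_le_mul_right h8 hεpos
      have h9 : 2 * ε * ρ ^ 2 < σ - ρ ^ 2 := by
        have h10 : ε * (2 * ρ ^ 2 + 1) ≤ σ - ρ ^ 2 := by
          rw [← le_div_iff₀ (by positivity : (0:ℝ) < 2 * ρ ^ 2 + 1)]
          exact hε2
        nlinarith [hεpos]
      nlinarith [hfin, h9]
    calc Real.sqrt (∑ k ∈ S, δ k ^ 2) = Real.sqrt σ := by rw [hσ']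
      _ ≤ Real.sqrt (ρ ^ 2) := Real.sqrt_le_sqrt hσρ
      _ = ρ := Real.sqrt_sq (le_of_lt hρ)
      _ = dist z_M w := by rw [hρ', hξ, dist_eq_norm]
end

section
/- Let δ > 0 and R > 0 with δ ≤ R. For the linear polynomial P(z) = ⟨z − y, u⟩ on ℂ^d (u a unit vector, y ∈ ℂ^d) and a point z_M maximizing e^{−|z|²/2}|P(z)|^{δ²} over the ball of radius R (assuming δ²·1 ≤ R²), z_M lies outside the cylinder {z : |⟨z − y, u⟩| < δ}; i.e., |⟨z_M − y, u⟩| ≥ δ. -/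
lemma key_ineq (δ r c' : ℝ) (hδ : 0 < δ) (hr : 0 ≤ r) (hrδ : r < δ) (hc' : 0 ≤ c') :
    Real.exp (-(c' - r) ^ 2 / 2) * r ^ (δ ^ 2) <
      Real.exp (-(c' - δ) ^ 2 / 2) * δ ^ (δ ^ 2) := by
  rcases hr.eq_or_lt with h0 | hr'
  · rw [← h0, Real.zero_rpow (by positivity)]
    simp only [mul_zero]
    positivity
  · have hxδ : (0:ℝ) < r / δ := by positivity
    have hlog : Real.log (r / δ) < ((r / δ) ^ 2 - 1) / 2 := by
      have h1 := Real.log_le_sub_one_of_pos hxδ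
      have h2 : r / δ < 1 := (div_lt_one hδ).mpr hrδ
      nlinarith [sq_nonneg (r / δ - 1)]
    rw [Real.log_div (ne_of_gt hr') (ne_of_gt hδ), div_pow] at hlog
    have h2 : δ ^ 2 * (Real.log r - Real.log δ) < (r ^ 2 - δ ^ 2) / 2 := by
      have := mul_lt_mul_of_pos_left hlog (by positivity : (0:ℝ) < δ ^ 2)
      have hδ2 : δ ^ 2 ≠ 0 := by positivity
      have heq : δ ^ 2 * ((r ^ 2 / δ ^ 2 - 1) / 2) = (r ^ 2 - δ ^ 2) / 2 := by
        field_simp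
      linarith [heq ▸ this]
    rw [Real.rpow_def_of_pos hr', Real.rpow_def_of_pos hδ, ← Real.exp_add, ← Real.exp_add,
      Real.exp_lt_exp]
    nlinarith [mul_nonneg hc' (by linarith : (0:ℝ) ≤ δ - r)]

theorem linear_plank_max_avoids_cylinder
    (d : ℕ) (u y : EuclideanSpace ℂ (Fin d)) (hu : ‖u‖ = 1)
    (δ R : ℝ) (hδ : 0 < δ) (hδR : δ ≤ R)
    (F : EuclideanSpace ℂ (Fin d) → ℝ)
    (hF : ∀ z, F z = Real.exp (-‖z‖ ^ 2 / 2) *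
        ‖(inner ℂ (z - y) u : ℂ)‖ ^ (δ ^ 2))
    (z_M : EuclideanSpace ℂ (Fin d))
    (hz_M : z_M ∈ Metric.closedBall (0 : EuclideanSpace ℂ (Fin d)) R)
    (hmax : ∀ w ∈ Metric.closedBall (0 : EuclideanSpace ℂ (Fin d)) R, F w ≤ F z_M) :
    δ ≤ ‖(inner ℂ (z_M - y) u : ℂ)‖ := by
  by_contra hcon
  push_neg at hcon
  set r : ℝ := ‖(inner ℂ (z_M - y) u : ℂ)‖ with hrdef
  set c : ℂ := (inner ℂ y u : ℂ) with hcdef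
  set c' : ℝ := ‖c‖ with hc'def
  set s : ℂ := (inner ℂ z_M u : ℂ) with hsdef
  have hr0 : 0 ≤ r := norm_nonneg _
  have hc'0 : 0 ≤ c' := norm_nonneg _
  have hsc : (inner ℂ (z_M - y) u : ℂ) = s - c := inner_sub_left _ _ _
  have hzMnorm : ‖z_M‖ ≤ R := by
    simpa using mem_closedBall_zero_iff.mp hz_M
  have hs_le : ‖s‖ ≤ ‖z_M‖ := by
    have := norm_inner_le_norm (𝕜 := ℂ) z_M u
    simpa [hu] using this
  -- c' - r ≤ ‖s‖ and r - c' ≤ ‖s‖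
  have h1 : c' - r ≤ ‖s‖ := by
    have : c' ≤ ‖c - s‖ + ‖s‖ := by
      calc c' = ‖c - s + s‖ := by ring_nf; exact hc'def
      _ ≤ ‖c - s‖ + ‖s‖ := norm_add_le _ _
    have hrc : ‖c - s‖ = r := by rw [hrdef, hsc, norm_sub_rev]
    linarith
  have h2 : r - c' ≤ ‖s‖ := by
    have : r ≤ ‖s‖ + c' := by
      rw [hrdef, hsc]
      calc ‖s - c‖ ≤ ‖s‖ + ‖c‖ := norm_sub_le _ _
      _ = ‖s‖ + c' := rfl
    linarith
  have hsq : (c' - r) ^ 2 ≤ ‖z_M‖ ^ 2 := by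
    have h3 : ‖s‖ ≤ ‖z_M‖ := hs_le
    nlinarith [norm_nonneg s]
  -- construct ν
  obtain ⟨ν, hν1, hν2⟩ : ∃ ν : ℂ, ‖ν‖ = |c' - δ| ∧ ‖ν - c‖ = δ := by
    by_cases hc : c = 0
    · refine ⟨(δ : ℂ), ?_, ?_⟩
      · simp [hc'def, hc, abs_of_nonpos (by linarith : (0:ℝ) - δ ≤ 0), hδ.le, abs_of_nonneg hδ.le]
      · simp [hc, Complex.norm_real, abs_of_nonneg hδ.le]
    · refine ⟨(((c' - δ) / c' : ℝ) : ℂ) * c, ?_, ?_⟩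
      · have hc'pos : 0 < c' := norm_pos_iff.mpr hc
        rw [norm_mul, Complex.norm_real, ← hc'def, Real.norm_eq_abs,
          abs_div, abs_of_pos hc'pos]
        field_simp
      · have hc'pos : 0 < c' := norm_pos_iff.mpr hc
        have hc'ne : ((c' : ℂ)) ≠ 0 := by
          exact_mod_cast ne_of_gt hc'pos
        have heq : (((c' - δ) / c' : ℝ) : ℂ) * c - c = (((-δ) / c' : ℝ) : ℂ) * c := by
          push_cast
          field_simp
          ring
        rw [heq, norm_mul, Complex.norm_real, ← hc'def, Real.norm_eq_abs,
          abs_div, abs_of_pos hc'pos, abs_of_nonpos (by linarith : -δ ≤ 0)]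
        field_simp
  set w : EuclideanSpace ℂ (Fin d) := (starRingEnd ℂ ν) • u with hwdef
  have hwnorm : ‖w‖ = |c' - δ| := by
    rw [hwdef, norm_smul, hu, mul_one, RCLike.norm_conj, hν1]
  have hwmem : w ∈ Metric.closedBall (0 : EuclideanSpace ℂ (Fin d)) R := by
    rw [mem_closedBall_zero_iff, hwnorm]
    rw [abs_le]
    constructor
    · linarith
    · rcases le_total c' δ with h | h
      · linarith
      · have : c' - r ≤ R := by linarith [hs_le.trans hzMnorm]
        linarith
  have hwin : (inner ℂ (w - y) u : ℂ) = ν - c := by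
    rw [inner_sub_left, hwdef, inner_smul_left]
    have : (inner ℂ u u : ℂ) = 1 := by
      rw [inner_self_eq_norm_sq_to_K, hu]
      norm_num
    rw [this, RingHomCompTriple.comp_apply, RingHom.id_apply, mul_one, ← hcdef]
  have hFw : F w = Real.exp (-(c' - δ) ^ 2 / 2) * δ ^ (δ ^ 2) := by
    rw [hF, hwin, hν2, hwnorm, sq_abs]
  have hFzM : F z_M ≤ Real.exp (-(c' - r) ^ 2 / 2) * r ^ (δ ^ 2) := by
    rw [hF]
    rw [← hrdef]
    have hexp : Real.exp (-‖z_M‖ ^ 2 / 2) ≤ Real.exp (-(c' - r) ^ 2 / 2) :=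
      Real.exp_le_exp.mpr (by linarith [hsq])
    have hrp : (0:ℝ) ≤ r ^ (δ ^ 2) := Real.rpow_nonneg hr0 _
    exact mul_le_mul_of_nonneg_right hexp hrp
  have hkey := key_ineq δ r c' hδ hr0 hcon hc'0
  have := hmax w hwmem
  linarith [hFw ▸ this]
end
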